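/- arXiv:1006.3459 — 8 statements merged into one kernel-verified Lean document; each statement's English description precedes it below -/
import Mathlib

section
/- Let T > 0 and let B₁, B₂, d₁, d₂ : ℝ × [0,∞) → ℝ be nonnegative functions, T-periodic in the time variable t. Fix μ₁, μ₂ ∈ ℝ and suppose φ¹ is a positive T-periodic subeigenfunction for (B₁, d₁, μ₁) and φ² is a positive T-periodic subeigenfunction for (B₂, d₂, μ₂). Then for every θ ∈ [0,1], the function φ^θ(t,x) = φ¹(t,x)^θ · φ²(t,x)^{1−θ} is a positive T-periodic subeigenfunction for (B^θ, d^θ, θμ₁ + (1−θ)μ₂), where B^θ(t,x) = B₁(t,x)^θ · B₂(t,x)^{1−θ} and d^θ(t,x) = θ d₁(t,x) + (1−θ) d₂(t,x). -/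
open MeasureTheory Real

noncomputable section

/-- A positive `T`-periodic subeigenfunction for birth rate `B`, death rate `d`
and value `μ` : an everywhere positive function `φ` on `ℝ × [0,∞)`,
differentiable in both variables, `T`-periodic in `t`, satisfying
`-∂ₜφ - ∂ₓφ + (d + μ) φ ≥ B(t,x) φ(t,0)` for all `t ∈ ℝ`, `x ≥ 0`. -/
def IsSubeig (T : ℝ) (B d : ℝ → ℝ → ℝ) (μ : ℝ) (φ : ℝ → ℝ → ℝ) : Prop :=
  (∀ t x, 0 ≤ x → 0 < φ t x) ∧
  (∀ t x, 0 ≤ x → DifferentiableAt ℝ (fun p : ℝ × ℝ => φ p.1 p.2) (t, x)) ∧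
  (∀ t x, 0 ≤ x → φ (t + T) x = φ t x) ∧
  (∀ t x, 0 ≤ x →
    B t x * φ t 0 ≤
      -(deriv (fun s => φ s x) t) - deriv (fun y => φ t y) x + (d t x + μ) * φ t x)

/-- Given subeigenfunctions `φ¹` for `(B₁, d₁, μ₁)` and `φ²` for `(B₂, d₂, μ₂)`,
the geometric interpolation `φ^θ = (φ¹)^θ (φ²)^{1-θ}` is a subeigenfunction for
the coefficients `B^θ = B₁^θ B₂^{1-θ}`, `d^θ = θ d₁ + (1-θ) d₂` and the value
`θ μ₁ + (1-θ) μ₂`. -/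
theorem subeig_geometric_convex_combination
    (T : ℝ) (hT : 0 < T) (B₁ B₂ d₁ d₂ : ℝ → ℝ → ℝ)
    (hB₁ : ∀ t x, 0 ≤ x → 0 ≤ B₁ t x) (hB₂ : ∀ t x, 0 ≤ x → 0 ≤ B₂ t x)
    (hd₁ : ∀ t x, 0 ≤ x → 0 ≤ d₁ t x) (hd₂ : ∀ t x, 0 ≤ x → 0 ≤ d₂ t x)
    (hB₁p : ∀ t x, 0 ≤ x → B₁ (t + T) x = B₁ t x)
    (hB₂p : ∀ t x, 0 ≤ x → B₂ (t + T) x = B₂ t x)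
    (hd₁p : ∀ t x, 0 ≤ x → d₁ (t + T) x = d₁ t x)
    (hd₂p : ∀ t x, 0 ≤ x → d₂ (t + T) x = d₂ t x)
    (μ₁ μ₂ : ℝ) (φ₁ φ₂ : ℝ → ℝ → ℝ)
    (h₁ : IsSubeig T B₁ d₁ μ₁ φ₁) (h₂ : IsSubeig T B₂ d₂ μ₂ φ₂)
    (θ : ℝ) (hθ : θ ∈ Set.Icc (0 : ℝ) 1) :
    IsSubeig T
      (fun t x => B₁ t x ^ θ * B₂ t x ^ (1 - θ))
      (fun t x => θ * d₁ t x + (1 - θ) * d₂ t x)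
      (θ * μ₁ + (1 - θ) * μ₂)
      (fun t x => φ₁ t x ^ θ * φ₂ t x ^ (1 - θ)) := by
  obtain ⟨hp₁, hdiff₁, hper₁, hineq₁⟩ := h₁
  obtain ⟨hp₂, hdiff₂, hper₂, hineq₂⟩ := h₂
  obtain ⟨hθ0, hθ1⟩ := hθ
  have hθ1' : (0:ℝ) ≤ 1 - θ := by linarith
  refine ⟨?_, ?_, ?_, ?_⟩
  · intro t x hx
    exact mul_pos (Real.rpow_pos_of_pos (hp₁ t x hx) θ)
      (Real.rpow_pos_of_pos (hp₂ t x hx) _)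
  · intro t x hx
    exact ((hdiff₁ t x hx).rpow_const (Or.inl (hp₁ t x hx).ne')).mul
      ((hdiff₂ t x hx).rpow_const (Or.inl (hp₂ t x hx).ne'))
  · intro t x hx
    simp only [hper₁ t x hx, hper₂ t x hx]
  · intro t x hx
    have hPpos := hp₁ t x hx
    have hQpos := hp₂ t x hx
    have hu0 := hp₁ t 0 le_rfl
    have hv0 := hp₂ t 0 le_rfl
    set P := φ₁ t x with hPdef
    set Q := φ₂ t x with hQdef
    -- partial differentiability in t
    have hd1t : DifferentiableAt ℝ (fun s => φ₁ s x) t :=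
      by have := (hdiff₁ t x hx).comp t (differentiableAt_id.prodMk (differentiableAt_const x) : DifferentiableAt ℝ (fun s : ℝ => (s, x)) t); exact this
    have hd2t : DifferentiableAt ℝ (fun s => φ₂ s x) t :=
      by have := (hdiff₂ t x hx).comp t (differentiableAt_id.prodMk (differentiableAt_const x) : DifferentiableAt ℝ (fun s : ℝ => (s, x)) t); exact this
    have hd1x : DifferentiableAt ℝ (fun y => φ₁ t y) x :=
      (hdiff₁ t x hx).comp x ((differentiableAt_const t).prodMk differentiableAt_id : DifferentiableAt ℝ (fun y : ℝ => (t, y)) x)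
    have hd2x : DifferentiableAt ℝ (fun y => φ₂ t y) x :=
      (hdiff₂ t x hx).comp x ((differentiableAt_const t).prodMk differentiableAt_id : DifferentiableAt ℝ (fun y : ℝ => (t, y)) x)
    set a₁ := deriv (fun s => φ₁ s x) t with ha₁
    set a₂ := deriv (fun s => φ₂ s x) t with ha₂
    set b₁ := deriv (fun y => φ₁ t y) x with hb₁
    set b₂ := deriv (fun y => φ₂ t y) x with hb₂
    -- derivative of the product in t
    have hDt : HasDerivAt (fun s => φ₁ s x ^ θ * φ₂ s x ^ (1 - θ))
        ((a₁ * θ * P ^ (θ - 1)) * Q ^ (1 - θ)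
          + P ^ θ * (a₂ * (1 - θ) * Q ^ (1 - θ - 1))) t :=
      (hd1t.hasDerivAt.rpow_const (Or.inl hPpos.ne')).mul
        (hd2t.hasDerivAt.rpow_const (Or.inl hQpos.ne'))
    have hDx : HasDerivAt (fun y => φ₁ t y ^ θ * φ₂ t y ^ (1 - θ))
        ((b₁ * θ * P ^ (θ - 1)) * Q ^ (1 - θ)
          + P ^ θ * (b₂ * (1 - θ) * Q ^ (1 - θ - 1))) x :=
      (hd1x.hasDerivAt.rpow_const (Or.inl hPpos.ne')).mul
        (hd2x.hasDerivAt.rpow_const (Or.inl hQpos.ne'))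
    have hDt' : deriv (fun s => φ₁ s x ^ θ * φ₂ s x ^ (1 - θ)) t
        = (a₁ * θ * P ^ (θ - 1)) * Q ^ (1 - θ)
          + P ^ θ * (a₂ * (1 - θ) * Q ^ (1 - θ - 1)) := hDt.deriv
    have hDx' : deriv (fun y => φ₁ t y ^ θ * φ₂ t y ^ (1 - θ)) x
        = (b₁ * θ * P ^ (θ - 1)) * Q ^ (1 - θ)
          + P ^ θ * (b₂ * (1 - θ) * Q ^ (1 - θ - 1)) := hDx.deriv
    simp only []
    rw [hDt', hDx']
    -- abbreviations
    set p₁ := B₁ t x * φ₁ t 0 / P with hp1def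
    set p₂ := B₂ t x * φ₂ t 0 / Q with hp2def
    set R₁ := (-a₁ - b₁ + (d₁ t x + μ₁) * P) / P with hR1def
    set R₂ := (-a₂ - b₂ + (d₂ t x + μ₂) * Q) / Q with hR2def
    have hp1nn : 0 ≤ p₁ := by
      apply div_nonneg _ hPpos.le
      exact mul_nonneg (hB₁ t x hx) hu0.le
    have hp2nn : 0 ≤ p₂ := by
      apply div_nonneg _ hQpos.le
      exact mul_nonneg (hB₂ t x hx) hv0.le
    have hpR1 : p₁ ≤ R₁ :=
      div_le_div_of_nonneg_right (hineq₁ t x hx) hPpos.le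
    have hpR2 : p₂ ≤ R₂ :=
      div_le_div_of_nonneg_right (hineq₂ t x hx) hQpos.le
    have hgeom : p₁ ^ θ * p₂ ^ (1 - θ) ≤ θ * R₁ + (1 - θ) * R₂ := by
      calc p₁ ^ θ * p₂ ^ (1 - θ) ≤ θ * p₁ + (1 - θ) * p₂ :=
            Real.geom_mean_le_arith_mean2_weighted hθ0 hθ1' hp1nn hp2nn (by ring)
        _ ≤ θ * R₁ + (1 - θ) * R₂ :=
            add_le_add (mul_le_mul_of_nonneg_left hpR1 hθ0)
              (mul_le_mul_of_nonneg_left hpR2 hθ1')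
    -- rewrite LHS
    have hLHS : B₁ t x ^ θ * B₂ t x ^ (1 - θ) * (φ₁ t 0 ^ θ * φ₂ t 0 ^ (1 - θ))
        = (P ^ θ * Q ^ (1 - θ)) * (p₁ ^ θ * p₂ ^ (1 - θ)) := by
      rw [hp1def, hp2def, Real.div_rpow (mul_nonneg (hB₁ t x hx) hu0.le) hPpos.le,
        Real.div_rpow (mul_nonneg (hB₂ t x hx) hv0.le) hQpos.le,
        Real.mul_rpow (hB₁ t x hx) hu0.le, Real.mul_rpow (hB₂ t x hx) hv0.le]
      field_simp
    -- rewrite RHS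
    have hPs : P ^ (θ - 1) = P ^ θ / P := by
      rw [Real.rpow_sub hPpos, Real.rpow_one]
    have hQs : Q ^ (1 - θ - 1) = Q ^ (1 - θ) / Q := by
      rw [Real.rpow_sub hQpos, Real.rpow_one]
    have hRHS :
        -((a₁ * θ * P ^ (θ - 1)) * Q ^ (1 - θ)
            + P ^ θ * (a₂ * (1 - θ) * Q ^ (1 - θ - 1)))
          - ((b₁ * θ * P ^ (θ - 1)) * Q ^ (1 - θ)
            + P ^ θ * (b₂ * (1 - θ) * Q ^ (1 - θ - 1)))
          + (θ * d₁ t x + (1 - θ) * d₂ t x + (θ * μ₁ + (1 - θ) * μ₂)) * (P ^ θ * Q ^ (1 - θ))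
        = (P ^ θ * Q ^ (1 - θ)) * (θ * R₁ + (1 - θ) * R₂) := by
      rw [hPs, hQs, hR1def, hR2def]
      field_simp
      ring
    rw [hLHS, hRHS]
    exact mul_le_mul_of_nonneg_left hgeom
      (mul_nonneg (Real.rpow_nonneg hPpos.le θ) (Real.rpow_nonneg hQpos.le _))
end
end

section
/- Let T > 0 and let B₁, B₂, d₁, d₂ : ℝ × [0,∞) → ℝ be nonnegative functions, T-periodic in t. For nonnegative T-periodic coefficients (B,d), let S(B,d) ⊆ ℝ denote the set of μ ∈ ℝ admitting a positive T-periodic subeigenfunction for (B, d, μ), and define the relaxed Floquet eigenvalue λ_F(B,d) = inf S(B,d). Fix θ ∈ [0,1] and set B^θ(t,x) = B₁(t,x)^θ · B₂(t,x)^{1−θ} and d^θ(t,x) = θ d₁(t,x) + (1−θ) d₂(t,x). Assume S(B₁,d₁) and S(B₂,d₂) are nonempty and that S(B₁,d₁), S(B₂,d₂) and S(B^θ,d^θ) are bounded below. Then λ_F(B^θ, d^θ) ≤ θ λ_F(B₁, d₁) + (1−θ) λ_F(B₂, d₂). -/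
open MeasureTheory Real

noncomputable section

/-- The set of `μ` admitting a positive `T`-periodic subeigenfunction. -/
def subeigSet (T : ℝ) (B d : ℝ → ℝ → ℝ) : Set ℝ :=
  {μ : ℝ | ∃ φ : ℝ → ℝ → ℝ, IsSubeig T B d μ φ}

/-- The relaxed Floquet eigenvalue `λ_F(B,d) = inf S(B,d)`. -/
def lambdaF (T : ℝ) (B d : ℝ → ℝ → ℝ) : ℝ :=
  sInf (subeigSet T B d)

/-- Pointwise algebraic key inequality, obtained from weighted AM–GM. -/
private lemma key_pointwise (θ : ℝ) (hθ0 : 0 ≤ θ) (hθ1 : θ ≤ 1)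
    (a₁ a₂ p₁ p₂ b₁ b₂ e₁ e₂ μ₁ μ₂ Dt₁ Dx₁ Dt₂ Dx₂ : ℝ)
    (ha₁ : 0 < a₁) (ha₂ : 0 < a₂) (hp₁ : 0 < p₁) (hp₂ : 0 < p₂)
    (hb₁ : 0 ≤ b₁) (hb₂ : 0 ≤ b₂)
    (h₁ : b₁ * p₁ ≤ -Dt₁ - Dx₁ + (e₁ + μ₁) * a₁)
    (h₂ : b₂ * p₂ ≤ -Dt₂ - Dx₂ + (e₂ + μ₂) * a₂) :
    b₁ ^ θ * b₂ ^ (1 - θ) * (p₁ ^ θ * p₂ ^ (1 - θ)) ≤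
      -(Dt₁ * θ * a₁ ^ (θ - 1) * a₂ ^ (1 - θ) + a₁ ^ θ * (Dt₂ * (1 - θ) * a₂ ^ (1 - θ - 1)))
      - (Dx₁ * θ * a₁ ^ (θ - 1) * a₂ ^ (1 - θ) + a₁ ^ θ * (Dx₂ * (1 - θ) * a₂ ^ (1 - θ - 1)))
      + (θ * e₁ + (1 - θ) * e₂ + (θ * μ₁ + (1 - θ) * μ₂)) * (a₁ ^ θ * a₂ ^ (1 - θ)) := by
  have h1θ : 0 ≤ 1 - θ := by linarith
  have hA₁ : (0:ℝ) < a₁ ^ θ := rpow_pos_of_pos ha₁ θ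
  have hA₂ : (0:ℝ) < a₂ ^ (1 - θ) := rpow_pos_of_pos ha₂ _
  have eA₁ : a₁ ^ (θ - 1) = a₁ ^ θ / a₁ := by
    rw [Real.rpow_sub ha₁, Real.rpow_one]
  have eA₂ : a₂ ^ (1 - θ - 1) = a₂ ^ (1 - θ) / a₂ := by
    rw [Real.rpow_sub ha₂, Real.rpow_one]
  set q₁ := b₁ * p₁ / a₁ with hq₁
  set q₂ := b₂ * p₂ / a₂ with hq₂
  have hq₁0 : 0 ≤ q₁ := div_nonneg (mul_nonneg hb₁ hp₁.le) ha₁.le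
  have hq₂0 : 0 ≤ q₂ := div_nonneg (mul_nonneg hb₂ hp₂.le) ha₂.le
  set c₁ := (-Dt₁ - Dx₁ + (e₁ + μ₁) * a₁) / a₁ with hc₁
  set c₂ := (-Dt₂ - Dx₂ + (e₂ + μ₂) * a₂) / a₂ with hc₂
  have hqc₁ : q₁ ≤ c₁ := by rw [hq₁, hc₁]; gcongr
  have hqc₂ : q₂ ≤ c₂ := by rw [hq₂, hc₂]; gcongr
  have hamgm : q₁ ^ θ * q₂ ^ (1 - θ) ≤ θ * q₁ + (1 - θ) * q₂ :=
    Real.geom_mean_le_arith_mean2_weighted hθ0 h1θ hq₁0 hq₂0 (by ring)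
  -- LHS equals (a₁^θ * a₂^(1-θ)) * (q₁^θ * q₂^(1-θ))
  have hLHS : b₁ ^ θ * b₂ ^ (1 - θ) * (p₁ ^ θ * p₂ ^ (1 - θ))
      = (a₁ ^ θ * a₂ ^ (1 - θ)) * (q₁ ^ θ * q₂ ^ (1 - θ)) := by
    rw [hq₁, hq₂, Real.div_rpow (mul_nonneg hb₁ hp₁.le) ha₁.le,
      Real.div_rpow (mul_nonneg hb₂ hp₂.le) ha₂.le,
      Real.mul_rpow hb₁ hp₁.le, Real.mul_rpow hb₂ hp₂.le]
    field_simp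
  -- RHS equals (a₁^θ * a₂^(1-θ)) * (θ*c₁ + (1-θ)*c₂)
  have hRHS :
      -(Dt₁ * θ * a₁ ^ (θ - 1) * a₂ ^ (1 - θ) + a₁ ^ θ * (Dt₂ * (1 - θ) * a₂ ^ (1 - θ - 1)))
      - (Dx₁ * θ * a₁ ^ (θ - 1) * a₂ ^ (1 - θ) + a₁ ^ θ * (Dx₂ * (1 - θ) * a₂ ^ (1 - θ - 1)))
      + (θ * e₁ + (1 - θ) * e₂ + (θ * μ₁ + (1 - θ) * μ₂)) * (a₁ ^ θ * a₂ ^ (1 - θ))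
      = (a₁ ^ θ * a₂ ^ (1 - θ)) * (θ * c₁ + (1 - θ) * c₂) := by
    rw [eA₁, eA₂, hc₁, hc₂]
    field_simp
    ring
  rw [hLHS, hRHS]
  have : q₁ ^ θ * q₂ ^ (1 - θ) ≤ θ * c₁ + (1 - θ) * c₂ := by
    refine hamgm.trans ?_
    have := mul_le_mul_of_nonneg_left hqc₁ hθ0
    have := mul_le_mul_of_nonneg_left hqc₂ h1θ
    linarith
  exact mul_le_mul_of_nonneg_left this (mul_pos hA₁ hA₂).le

/-- The geometric/arithmetic combination of subeigenfunctions is a subeigenfunction. -/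
private lemma isSubeig_combination (T θ : ℝ) (hθ0 : 0 ≤ θ) (hθ1 : θ ≤ 1)
    (B₁ B₂ d₁ d₂ : ℝ → ℝ → ℝ)
    (hB₁ : ∀ t x, 0 ≤ x → 0 ≤ B₁ t x) (hB₂ : ∀ t x, 0 ≤ x → 0 ≤ B₂ t x)
    (μ₁ μ₂ : ℝ) (φ₁ φ₂ : ℝ → ℝ → ℝ)
    (h₁ : IsSubeig T B₁ d₁ μ₁ φ₁) (h₂ : IsSubeig T B₂ d₂ μ₂ φ₂) :
    IsSubeig T (fun t x => B₁ t x ^ θ * B₂ t x ^ (1 - θ))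
      (fun t x => θ * d₁ t x + (1 - θ) * d₂ t x) (θ * μ₁ + (1 - θ) * μ₂)
      (fun t x => φ₁ t x ^ θ * φ₂ t x ^ (1 - θ)) := by
  obtain ⟨hpos₁, hdiff₁, hper₁, hineq₁⟩ := h₁
  obtain ⟨hpos₂, hdiff₂, hper₂, hineq₂⟩ := h₂
  refine ⟨?_, ?_, ?_, ?_⟩
  · intro t x hx
    exact mul_pos (rpow_pos_of_pos (hpos₁ t x hx) θ) (rpow_pos_of_pos (hpos₂ t x hx) _)
  · intro t x hx
    exact ((hdiff₁ t x hx).rpow_const (Or.inl (hpos₁ t x hx).ne')).mul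
      ((hdiff₂ t x hx).rpow_const (Or.inl (hpos₂ t x hx).ne'))
  · intro t x hx
    simp only
    rw [hper₁ t x hx, hper₂ t x hx]
  · intro t x hx
    -- partial derivatives of the factors
    have sect_t : ∀ (ψ : ℝ → ℝ → ℝ),
        DifferentiableAt ℝ (fun p : ℝ × ℝ => ψ p.1 p.2) (t, x) →
        DifferentiableAt ℝ (fun s => ψ s x) t := fun ψ h =>
      by
        have hg : DifferentiableAt ℝ (fun s : ℝ => (s, x)) t :=
          differentiableAt_id.prodMk (differentiableAt_const x)
        have := h.comp t hg; exact this
    have sect_x : ∀ (ψ : ℝ → ℝ → ℝ),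
        DifferentiableAt ℝ (fun p : ℝ × ℝ => ψ p.1 p.2) (t, x) →
        DifferentiableAt ℝ (fun y => ψ t y) x := fun ψ h =>
      by
        have hg : DifferentiableAt ℝ (fun y : ℝ => (t, y)) x :=
          (differentiableAt_const t).prodMk differentiableAt_id
        have := h.comp x hg; exact this
    have hf₁t : HasDerivAt (fun s => φ₁ s x) (deriv (fun s => φ₁ s x) t) t :=
      (sect_t φ₁ (hdiff₁ t x hx)).hasDerivAt
    have hf₂t : HasDerivAt (fun s => φ₂ s x) (deriv (fun s => φ₂ s x) t) t :=
      (sect_t φ₂ (hdiff₂ t x hx)).hasDerivAt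
    have hf₁x : HasDerivAt (fun y => φ₁ t y) (deriv (fun y => φ₁ t y) x) x :=
      (sect_x φ₁ (hdiff₁ t x hx)).hasDerivAt
    have hf₂x : HasDerivAt (fun y => φ₂ t y) (deriv (fun y => φ₂ t y) x) x :=
      (sect_x φ₂ (hdiff₂ t x hx)).hasDerivAt
    have ha₁ := hpos₁ t x hx
    have ha₂ := hpos₂ t x hx
    have hDt : deriv (fun s => φ₁ s x ^ θ * φ₂ s x ^ (1 - θ)) t =
        deriv (fun s => φ₁ s x) t * θ * φ₁ t x ^ (θ - 1) * φ₂ t x ^ (1 - θ)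
        + φ₁ t x ^ θ * (deriv (fun s => φ₂ s x) t * (1 - θ) * φ₂ t x ^ (1 - θ - 1)) :=
      (((hf₁t.rpow_const (Or.inl ha₁.ne')).mul
        (hf₂t.rpow_const (Or.inl ha₂.ne')))).deriv
    have hDx : deriv (fun y => φ₁ t y ^ θ * φ₂ t y ^ (1 - θ)) x =
        deriv (fun y => φ₁ t y) x * θ * φ₁ t x ^ (θ - 1) * φ₂ t x ^ (1 - θ)
        + φ₁ t x ^ θ * (deriv (fun y => φ₂ t y) x * (1 - θ) * φ₂ t x ^ (1 - θ - 1)) :=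
      (((hf₁x.rpow_const (Or.inl ha₁.ne')).mul
        (hf₂x.rpow_const (Or.inl ha₂.ne')))).deriv
    simp only [hDt, hDx]
    exact key_pointwise θ hθ0 hθ1 (φ₁ t x) (φ₂ t x) (φ₁ t 0) (φ₂ t 0)
      (B₁ t x) (B₂ t x) (d₁ t x) (d₂ t x) μ₁ μ₂
      (deriv (fun s => φ₁ s x) t) (deriv (fun y => φ₁ t y) x)
      (deriv (fun s => φ₂ s x) t) (deriv (fun y => φ₂ t y) x)
      ha₁ ha₂ (hpos₁ t 0 le_rfl) (hpos₂ t 0 le_rfl)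
      (hB₁ t x hx) (hB₂ t x hx) (hineq₁ t x hx) (hineq₂ t x hx)

private lemma aux_inf {c : ℝ} {s : Set ℝ} (hs : s.Nonempty) {θ : ℝ} (hθ : 0 ≤ θ) (v : ℝ)
    (h : ∀ μ ∈ s, c ≤ θ * μ + v) : c ≤ θ * sInf s + v := by
  rcases eq_or_lt_of_le hθ with h0 | h0
  · obtain ⟨μ, hμ⟩ := hs
    have := h μ hμ
    rw [← h0] at this ⊢
    linarith
  · have hle : (c - v) / θ ≤ sInf s :=
      le_csInf hs fun μ hμ => (div_le_iff₀ h0).mpr (by linarith [h μ hμ, mul_comm θ μ])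
    have := (div_le_iff₀ h0).mp hle
    nlinarith

/-- Convexity of the relaxed Floquet eigenvalue: it is convex in the death rate
and geometrically convex in the birth rate. -/
theorem lambdaF_convex
    (T : ℝ) (hT : 0 < T) (B₁ B₂ d₁ d₂ : ℝ → ℝ → ℝ)
    (hB₁ : ∀ t x, 0 ≤ x → 0 ≤ B₁ t x) (hB₂ : ∀ t x, 0 ≤ x → 0 ≤ B₂ t x)
    (hd₁ : ∀ t x, 0 ≤ x → 0 ≤ d₁ t x) (hd₂ : ∀ t x, 0 ≤ x → 0 ≤ d₂ t x)
    (hB₁p : ∀ t x, 0 ≤ x → B₁ (t + T) x = B₁ t x)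
    (hB₂p : ∀ t x, 0 ≤ x → B₂ (t + T) x = B₂ t x)
    (hd₁p : ∀ t x, 0 ≤ x → d₁ (t + T) x = d₁ t x)
    (hd₂p : ∀ t x, 0 ≤ x → d₂ (t + T) x = d₂ t x)
    (θ : ℝ) (hθ : θ ∈ Set.Icc (0 : ℝ) 1)
    (Bθ dθ : ℝ → ℝ → ℝ)
    (hBθ : Bθ = fun t x => B₁ t x ^ θ * B₂ t x ^ (1 - θ))
    (hdθ : dθ = fun t x => θ * d₁ t x + (1 - θ) * d₂ t x)
    (hne₁ : (subeigSet T B₁ d₁).Nonempty)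
    (hne₂ : (subeigSet T B₂ d₂).Nonempty)
    (hbd₁ : BddBelow (subeigSet T B₁ d₁))
    (hbd₂ : BddBelow (subeigSet T B₂ d₂))
    (hbdθ : BddBelow (subeigSet T Bθ dθ)) :
    lambdaF T Bθ dθ ≤ θ * lambdaF T B₁ d₁ + (1 - θ) * lambdaF T B₂ d₂ := by
  obtain ⟨hθ0, hθ1⟩ := hθ
  have h1θ : (0:ℝ) ≤ 1 - θ := by linarith
  have key : ∀ μ₁ ∈ subeigSet T B₁ d₁, ∀ μ₂ ∈ subeigSet T B₂ d₂,
      lambdaF T Bθ dθ ≤ θ * μ₁ + (1 - θ) * μ₂ := by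
    intro μ₁ ⟨φ₁, hφ₁⟩ μ₂ ⟨φ₂, hφ₂⟩
    refine csInf_le hbdθ ?_
    refine ⟨fun t x => φ₁ t x ^ θ * φ₂ t x ^ (1 - θ), ?_⟩
    rw [hBθ, hdθ]
    exact isSubeig_combination T θ hθ0 hθ1 B₁ B₂ d₁ d₂ hB₁ hB₂ μ₁ μ₂ φ₁ φ₂ hφ₁ hφ₂
  have step1 : ∀ μ₁ ∈ subeigSet T B₁ d₁,
      lambdaF T Bθ dθ ≤ (1 - θ) * lambdaF T B₂ d₂ + θ * μ₁ := by
    intro μ₁ hμ₁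
    exact aux_inf hne₂ h1θ (θ * μ₁) fun μ₂ hμ₂ => by linarith [key μ₁ hμ₁ μ₂ hμ₂]
  have step2 : lambdaF T Bθ dθ ≤ θ * lambdaF T B₁ d₁ + (1 - θ) * lambdaF T B₂ d₂ :=
    aux_inf hne₁ hθ0 ((1 - θ) * lambdaF T B₂ d₂) fun μ₁ hμ₁ => by linarith [step1 μ₁ hμ₁]
  exact step2
end
end

section
/- Let T > 0, I ≥ 1, and for k = 1, 2 let B^k = (B^k_{j→i})_{1≤i,j≤I} and d^k = (d^k_i)_{1≤i≤I} be families of nonnegative functions on ℝ × [0,∞), T-periodic in t. Fix μ₁, μ₂ ∈ ℝ and suppose φ^1 = (φ^1_j)_{1≤j≤I} is a system subeigenfunction for (B^1, d^1, μ₁) and φ^2 = (φ^2_j)_{1≤j≤I} is a system subeigenfunction for (B^2, d^2, μ₂). Then for every θ ∈ [0,1], the family φ^θ_j(t,x) = φ^1_j(t,x)^θ · φ^2_j(t,x)^{1−θ} is a system subeigenfunction for (B^θ, d^θ, θμ₁ + (1−θ)μ₂), where B^θ_{j→i}(t,x) = B^1_{j→i}(t,x)^θ · B^2_{j→i}(t,x)^{1−θ}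 and d^θ_i(t,x) = θ d^1_i(t,x) + (1−θ) d^2_i(t,x). -/
open MeasureTheory Real Finset

noncomputable section

/-- A system subeigenfunction for the `I`-phase renewal system with birth rates
`B j i` (from phase `j` to phase `i`), death rates `d j`, and value `μ` :
a family `φ j` of everywhere positive functions on `ℝ × [0,∞)`, differentiable
in both variables, `T`-periodic in `t`, satisfying for every phase `j` and all
`t ∈ ℝ`, `x ≥ 0` :
`-∂ₜφ_j - ∂ₓφ_j + (d_j + μ) φ_j ≥ Σᵢ B_{j→i}(t,x) φ_i(t,0)`. -/
def IsSysSubeig (T : ℝ) (I : ℕ) (B : Fin I → Fin I → ℝ → ℝ → ℝ)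
    (d : Fin I → ℝ → ℝ → ℝ) (μ : ℝ) (φ : Fin I → ℝ → ℝ → ℝ) : Prop :=
  (∀ j t x, 0 ≤ x → 0 < φ j t x) ∧
  (∀ j t x, 0 ≤ x → DifferentiableAt ℝ (fun p : ℝ × ℝ => φ j p.1 p.2) (t, x)) ∧
  (∀ j t x, 0 ≤ x → φ j (t + T) x = φ j t x) ∧
  (∀ j t x, 0 ≤ x →
    (∑ i : Fin I, B j i t x * φ i t 0) ≤
      -(deriv (fun s => φ j s x) t) - deriv (fun y => φ j t y) x
        + (d j t x + μ) * φ j t x)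

/-- Geometric interpolation of system subeigenfunctions: if `φ¹` is a system
subeigenfunction for `(B¹, d¹, μ₁)` and `φ²` one for `(B², d², μ₂)`, then
`φ^θ_j = (φ¹_j)^θ (φ²_j)^{1-θ}` is a system subeigenfunction for the
coefficients `B^θ_{j→i} = (B¹_{j→i})^θ (B²_{j→i})^{1-θ}`,
`d^θ_i = θ d¹_i + (1-θ) d²_i`, and the value `θ μ₁ + (1-θ) μ₂`. -/
theorem sysSubeig_geometric_convex_combination
    (T : ℝ) (hT : 0 < T) (I : ℕ) (hI : 1 ≤ I)
    (B₁ B₂ : Fin I → Fin I → ℝ → ℝ → ℝ) (d₁ d₂ : Fin I → ℝ → ℝ → ℝ)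
    (hB₁ : ∀ j i t x, 0 ≤ x → 0 ≤ B₁ j i t x)
    (hB₂ : ∀ j i t x, 0 ≤ x → 0 ≤ B₂ j i t x)
    (hd₁ : ∀ i t x, 0 ≤ x → 0 ≤ d₁ i t x)
    (hd₂ : ∀ i t x, 0 ≤ x → 0 ≤ d₂ i t x)
    (hB₁p : ∀ j i t x, 0 ≤ x → B₁ j i (t + T) x = B₁ j i t x)
    (hB₂p : ∀ j i t x, 0 ≤ x → B₂ j i (t + T) x = B₂ j i t x)
    (hd₁p : ∀ i t x, 0 ≤ x → d₁ i (t + T) x = d₁ i t x)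
    (hd₂p : ∀ i t x, 0 ≤ x → d₂ i (t + T) x = d₂ i t x)
    (μ₁ μ₂ : ℝ) (φ₁ φ₂ : Fin I → ℝ → ℝ → ℝ)
    (h₁ : IsSysSubeig T I B₁ d₁ μ₁ φ₁) (h₂ : IsSysSubeig T I B₂ d₂ μ₂ φ₂)
    (θ : ℝ) (hθ : θ ∈ Set.Icc (0 : ℝ) 1) :
    IsSysSubeig T I
      (fun j i t x => B₁ j i t x ^ θ * B₂ j i t x ^ (1 - θ))
      (fun i t x => θ * d₁ i t x + (1 - θ) * d₂ i t x)
      (θ * μ₁ + (1 - θ) * μ₂)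
      (fun j t x => φ₁ j t x ^ θ * φ₂ j t x ^ (1 - θ)) := by
  obtain ⟨hθ0, hθ1⟩ := hθ
  have hθ0' : (0:ℝ) ≤ 1 - θ := by linarith
  obtain ⟨hpos₁, hdiff₁, hper₁, hineq₁⟩ := h₁
  obtain ⟨hpos₂, hdiff₂, hper₂, hineq₂⟩ := h₂
  refine ⟨?_, ?_, ?_, ?_⟩
  · intro j t x hx
    exact mul_pos (Real.rpow_pos_of_pos (hpos₁ j t x hx) θ)
      (Real.rpow_pos_of_pos (hpos₂ j t x hx) (1 - θ))
  · intro j t x hx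
    exact ((hdiff₁ j t x hx).rpow_const (Or.inl (hpos₁ j t x hx).ne')).mul
      ((hdiff₂ j t x hx).rpow_const (Or.inl (hpos₂ j t x hx).ne'))
  · intro j t x hx
    simp only [hper₁ j t x hx, hper₂ j t x hx]
  · intro j t x hx
    set a := φ₁ j t x with ha_def
    set b := φ₂ j t x with hb_def
    have ha : 0 < a := hpos₁ j t x hx
    have hb : 0 < b := hpos₂ j t x hx
    -- partial differentiability
    have hda : DifferentiableAt ℝ (fun p : ℝ × ℝ => φ₁ j p.1 p.2) (t, x) := hdiff₁ j t x hx
    have hdb : DifferentiableAt ℝ (fun p : ℝ × ℝ => φ₂ j p.1 p.2) (t, x) := hdiff₂ j t x hx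
    have hat : DifferentiableAt ℝ (fun s => φ₁ j s x) t :=
      by have := hda.comp (f := fun s : ℝ => (s, x)) t (DifferentiableAt.prodMk differentiableAt_id (differentiableAt_const x)); exact this
    have hax : DifferentiableAt ℝ (fun y => φ₁ j t y) x :=
      by have := hda.comp x ((differentiableAt_const t).prodMk (differentiableAt_id)); exact this
    have hbt : DifferentiableAt ℝ (fun s => φ₂ j s x) t :=
      by have := hdb.comp (f := fun s : ℝ => (s, x)) t (DifferentiableAt.prodMk differentiableAt_id (differentiableAt_const x)); exact this
    have hbx : DifferentiableAt ℝ (fun y => φ₂ j t y) x :=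
      by have := hdb.comp x ((differentiableAt_const t).prodMk (differentiableAt_id)); exact this
    set at' := deriv (fun s => φ₁ j s x) t with hat'
    set ax' := deriv (fun y => φ₁ j t y) x with hax'
    set bt' := deriv (fun s => φ₂ j s x) t with hbt'
    set bx' := deriv (fun y => φ₂ j t y) x with hbx'
    -- derivatives of the product
    have hderivt : deriv (fun s => φ₁ j s x ^ θ * φ₂ j s x ^ (1 - θ)) t =
        (at' * θ * a ^ (θ - 1)) * b ^ (1 - θ) + a ^ θ * (bt' * (1 - θ) * b ^ (1 - θ - 1)) := by
      exact (((hat.hasDerivAt.rpow_const (Or.inl ha.ne')).mul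
        (hbt.hasDerivAt.rpow_const (Or.inl hb.ne'))).deriv)
    have hderivx : deriv (fun y => φ₁ j t y ^ θ * φ₂ j t y ^ (1 - θ)) x =
        (ax' * θ * a ^ (θ - 1)) * b ^ (1 - θ) + a ^ θ * (bx' * (1 - θ) * b ^ (1 - θ - 1)) := by
      exact (((hax.hasDerivAt.rpow_const (Or.inl ha.ne')).mul
        (hbx.hasDerivAt.rpow_const (Or.inl hb.ne'))).deriv)
    simp only [hderivt, hderivx]
    have hS₁ := hineq₁ j t x hx
    have hS₂ := hineq₂ j t x hx
    rw [← hat', ← hax', ← ha_def] at hS₁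
    rw [← hbt', ← hbx', ← hb_def] at hS₂
    set K := a ^ θ * b ^ (1 - θ) with hK
    have hKpos : 0 < K := mul_pos (Real.rpow_pos_of_pos ha θ) (Real.rpow_pos_of_pos hb (1 - θ))
    -- step 1 : sum termwise AM-GM
    have step1 : (∑ i : Fin I, (B₁ j i t x ^ θ * B₂ j i t x ^ (1 - θ)) *
          (φ₁ i t 0 ^ θ * φ₂ i t 0 ^ (1 - θ))) ≤
        ∑ i : Fin I, (θ * (K / a) * (B₁ j i t x * φ₁ i t 0)
          + (1 - θ) * (K / b) * (B₂ j i t x * φ₂ i t 0)) := by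
      refine Finset.sum_le_sum fun i _ => ?_
      have hu : (0:ℝ) ≤ B₁ j i t x * φ₁ i t 0 / a :=
        div_nonneg (mul_nonneg (hB₁ j i t x hx) (hpos₁ i t 0 le_rfl).le) ha.le
      have hv : (0:ℝ) ≤ B₂ j i t x * φ₂ i t 0 / b :=
        div_nonneg (mul_nonneg (hB₂ j i t x hx) (hpos₂ i t 0 le_rfl).le) hb.le
      have hgm := Real.geom_mean_le_arith_mean2_weighted hθ0 hθ0' hu hv (by ring)
      have hgm2 := mul_le_mul_of_nonneg_left hgm hKpos.le
      calc (B₁ j i t x ^ θ * B₂ j i t x ^ (1 - θ)) * (φ₁ i t 0 ^ θ * φ₂ i t 0 ^ (1 - θ))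
          = K * ((B₁ j i t x * φ₁ i t 0 / a) ^ θ * (B₂ j i t x * φ₂ i t 0 / b) ^ (1 - θ)) := by
            rw [Real.div_rpow (mul_nonneg (hB₁ j i t x hx) (hpos₁ i t 0 le_rfl).le) ha.le,
              Real.div_rpow (mul_nonneg (hB₂ j i t x hx) (hpos₂ i t 0 le_rfl).le) hb.le,
              Real.mul_rpow (hB₁ j i t x hx) (hpos₁ i t 0 le_rfl).le,
              Real.mul_rpow (hB₂ j i t x hx) (hpos₂ i t 0 le_rfl).le, hK]
            field_simp
        _ ≤ K * (θ * (B₁ j i t x * φ₁ i t 0 / a) + (1 - θ) * (B₂ j i t x * φ₂ i t 0 / b)) := hgm2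
        _ = θ * (K / a) * (B₁ j i t x * φ₁ i t 0) + (1 - θ) * (K / b) * (B₂ j i t x * φ₂ i t 0) := by
            field_simp
    rw [Finset.sum_add_distrib, ← Finset.mul_sum, ← Finset.mul_sum] at step1
    -- step 2 : bound the two sums by the subeigen inequalities
    have step2 : θ * (K / a) * (∑ i : Fin I, B₁ j i t x * φ₁ i t 0)
          + (1 - θ) * (K / b) * (∑ i : Fin I, B₂ j i t x * φ₂ i t 0) ≤
        θ * (K / a) * (-at' - ax' + (d₁ j t x + μ₁) * a)
          + (1 - θ) * (K / b) * (-bt' - bx' + (d₂ j t x + μ₂) * b) := by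
      gcongr <;> positivity
    refine le_trans step1 (le_trans step2 (le_of_eq ?_))
    -- step 3 : algebraic identity
    have hA1 : a ^ (θ - 1) = a ^ θ / a := by
      rw [Real.rpow_sub ha, Real.rpow_one]
    have hB1 : b ^ (1 - θ - 1) = b ^ (1 - θ) / b := by
      rw [Real.rpow_sub hb, Real.rpow_one]
    rw [hA1, hB1, hK]
    field_simp
    ring
end
end

section
/- Let T > 0, I ≥ 1, and for k = 1, 2 let (B^k, d^k) be families of nonnegative coefficients for the I-phase renewal system, T-periodic in t. For such a family (B,d), let S(B,d) ⊆ ℝ be the set of μ ∈ ℝ admitting a system subeigenfunction for (B,d,μ), and define λ_F(B,d) = inf S(B,d). Fix θ ∈ [0,1] and set B^θ_{j→i}(t,x) = B^1_{j→i}(t,x)^θ · B^2_{j→i}(t,x)^{1−θ} and d^θ_i(t,x) = θ d^1_i(t,x) + (1−θ) d^2_i(t,x). Assume S(B^1,d^1) and S(B^2,d^2) are nonempty and that all three sets S(B^1,d^1), S(B^2,d^2), S(B^θ,d^θ) are bounded below. Then λ_F(B^θ, d^θ) ≤ θ λ_F(B^1, d^1) + (1−θ) λ_F(B^2, d^2);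 that is, the dominant Floquet eigenvalue is convex with respect to the death rates and geometrically convex with respect to the birth rates. -/
open MeasureTheory Real Finset

noncomputable section

/-- The set of `μ` admitting a system subeigenfunction. -/
def sysSubeigSet (T : ℝ) (I : ℕ) (B : Fin I → Fin I → ℝ → ℝ → ℝ)
    (d : Fin I → ℝ → ℝ → ℝ) : Set ℝ :=
  {μ : ℝ | ∃ φ : Fin I → ℝ → ℝ → ℝ, IsSysSubeig T I B d μ φ}

/-- The relaxed dominant Floquet eigenvalue of the `I`-phase renewal system. -/
def sysLambdaF (T : ℝ) (I : ℕ) (B : Fin I → Fin I → ℝ → ℝ → ℝ)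
    (d : Fin I → ℝ → ℝ → ℝ) : ℝ :=
  sInf (sysSubeigSet T I B d)

private lemma holder2 {n : ℕ} (a b : Fin n → ℝ) (ha : ∀ i, 0 ≤ a i) (hb : ∀ i, 0 ≤ b i)
    {θ : ℝ} (h0 : 0 ≤ θ) (h1 : θ ≤ 1) :
    ∑ i, a i ^ θ * b i ^ (1 - θ) ≤ (∑ i, a i) ^ θ * (∑ i, b i) ^ (1 - θ) := by
  rcases eq_or_lt_of_le h0 with h0' | h0'
  · subst h0'
    simp
  rcases eq_or_lt_of_le h1 with h1' | h1'
  · subst h1'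
    simp
  have hSa : 0 ≤ ∑ i, a i := Finset.sum_nonneg fun i _ => ha i
  have hSb : 0 ≤ ∑ i, b i := Finset.sum_nonneg fun i _ => hb i
  rcases eq_or_lt_of_le hSa with hSa0 | hSa0
  · have hz : ∀ i ∈ Finset.univ, a i = 0 :=
      (Finset.sum_eq_zero_iff_of_nonneg (fun i _ => ha i)).1 hSa0.symm
    have : ∀ i ∈ (Finset.univ : Finset (Fin n)), a i ^ θ * b i ^ (1 - θ) = 0 := by
      intro i hi
      rw [hz i hi, Real.zero_rpow h0'.ne', zero_mul]
    rw [Finset.sum_eq_zero this, ← hSa0, Real.zero_rpow h0'.ne', zero_mul]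
  rcases eq_or_lt_of_le hSb with hSb0 | hSb0
  · have hz : ∀ i ∈ Finset.univ, b i = 0 :=
      (Finset.sum_eq_zero_iff_of_nonneg (fun i _ => hb i)).1 hSb0.symm
    have : ∀ i ∈ (Finset.univ : Finset (Fin n)), a i ^ θ * b i ^ (1 - θ) = 0 := by
      intro i hi
      rw [hz i hi, Real.zero_rpow (by linarith : 1 - θ ≠ 0), mul_zero]
    rw [Finset.sum_eq_zero this, ← hSb0, Real.zero_rpow (by linarith : 1 - θ ≠ 0), mul_zero]
  set Sa := ∑ i, a i with hSadef
  set Sb := ∑ i, b i with hSbdef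
  have hPa : (0:ℝ) < Sa ^ θ := Real.rpow_pos_of_pos hSa0 θ
  have hPb : (0:ℝ) < Sb ^ (1 - θ) := Real.rpow_pos_of_pos hSb0 (1 - θ)
  have key : ∀ i : Fin n, a i ^ θ * b i ^ (1 - θ) ≤
      Sa ^ θ * Sb ^ (1 - θ) * (θ * (a i / Sa) + (1 - θ) * (b i / Sb)) := by
    intro i
    have hg := Real.geom_mean_le_arith_mean2_weighted h0 (by linarith : (0:ℝ) ≤ 1 - θ)
      (div_nonneg (ha i) hSa0.le) (div_nonneg (hb i) hSb0.le) (by ring)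
    calc a i ^ θ * b i ^ (1 - θ)
        = Sa ^ θ * Sb ^ (1 - θ) * ((a i / Sa) ^ θ * (b i / Sb) ^ (1 - θ)) := by
          rw [Real.div_rpow (ha i) hSa0.le, Real.div_rpow (hb i) hSb0.le]
          field_simp
      _ ≤ _ := mul_le_mul_of_nonneg_left hg (by positivity)
  calc ∑ i, a i ^ θ * b i ^ (1 - θ)
      ≤ ∑ i, Sa ^ θ * Sb ^ (1 - θ) * (θ * (a i / Sa) + (1 - θ) * (b i / Sb)) :=
        Finset.sum_le_sum fun i _ => key i
    _ = Sa ^ θ * Sb ^ (1 - θ) := by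
        rw [← Finset.mul_sum]
        have : ∑ i, (θ * (a i / Sa) + (1 - θ) * (b i / Sb))
            = θ * (Sa / Sa) + (1 - θ) * (Sb / Sb) := by
          rw [Finset.sum_add_distrib, ← Finset.mul_sum, ← Finset.mul_sum,
            ← Finset.sum_div, ← Finset.sum_div]
        rw [this, div_self hSa0.ne', div_self hSb0.ne']
        ring

private lemma theta_mem (T : ℝ) (I : ℕ)
    (B₁ B₂ : Fin I → Fin I → ℝ → ℝ → ℝ) (d₁ d₂ : Fin I → ℝ → ℝ → ℝ)
    (hB₁ : ∀ j i t x, 0 ≤ x → 0 ≤ B₁ j i t x)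
    (hB₂ : ∀ j i t x, 0 ≤ x → 0 ≤ B₂ j i t x)
    (θ : ℝ) (h0 : 0 ≤ θ) (h1 : θ ≤ 1)
    {μ₁ μ₂ : ℝ}
    (hμ₁ : μ₁ ∈ sysSubeigSet T I B₁ d₁) (hμ₂ : μ₂ ∈ sysSubeigSet T I B₂ d₂) :
    θ * μ₁ + (1 - θ) * μ₂ ∈ sysSubeigSet T I
      (fun j i t x => B₁ j i t x ^ θ * B₂ j i t x ^ (1 - θ))
      (fun i t x => θ * d₁ i t x + (1 - θ) * d₂ i t x) := by
  obtain ⟨φ₁, hpos1, hdiff1, hper1, hineq1⟩ := hμ₁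
  obtain ⟨φ₂, hpos2, hdiff2, hper2, hineq2⟩ := hμ₂
  refine ⟨fun j t x => φ₁ j t x ^ θ * φ₂ j t x ^ (1 - θ), ?_, ?_, ?_, ?_⟩
  · intro j t x hx
    exact mul_pos (Real.rpow_pos_of_pos (hpos1 j t x hx) θ)
      (Real.rpow_pos_of_pos (hpos2 j t x hx) (1 - θ))
  · intro j t x hx
    exact ((hdiff1 j t x hx).rpow_const (Or.inl (hpos1 j t x hx).ne')).mul
      ((hdiff2 j t x hx).rpow_const (Or.inl (hpos2 j t x hx).ne'))
  · intro j t x hx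
    dsimp only
    rw [hper1 j t x hx, hper2 j t x hx]
  · intro j t x hx
    dsimp only
    have hu := hpos1 j t x hx
    have hv := hpos2 j t x hx
    -- partial differentiability
    have D1t : DifferentiableAt ℝ (fun s => φ₁ j s x) t :=
      by have := DifferentiableAt.comp (f := fun s : ℝ => (s, x)) t (hdiff1 j t x hx) (by fun_prop); exact this
    have D2t : DifferentiableAt ℝ (fun s => φ₂ j s x) t :=
      by have := DifferentiableAt.comp (f := fun s : ℝ => (s, x)) t (hdiff2 j t x hx) (by fun_prop); exact this
    have D1x : DifferentiableAt ℝ (fun y => φ₁ j t y) x :=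
      by have := DifferentiableAt.comp (f := fun y : ℝ => (t, y)) x (hdiff1 j t x hx) (by fun_prop); exact this
    have D2x : DifferentiableAt ℝ (fun y => φ₂ j t y) x :=
      by have := DifferentiableAt.comp (f := fun y : ℝ => (t, y)) x (hdiff2 j t x hx) (by fun_prop); exact this
    have Et : deriv (fun s => φ₁ j s x ^ θ * φ₂ j s x ^ (1 - θ)) t
        = (deriv (fun s => φ₁ j s x) t * θ * φ₁ j t x ^ (θ - 1)) * φ₂ j t x ^ (1 - θ)
          + φ₁ j t x ^ θ * (deriv (fun s => φ₂ j s x) t * (1 - θ) * φ₂ j t x ^ (1 - θ - 1)) := by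
      rw [deriv_fun_mul (D1t.rpow_const (Or.inl hu.ne')) (D2t.rpow_const (Or.inl hv.ne')),
        _root_.deriv_rpow_const D1t (Or.inl hu.ne'), _root_.deriv_rpow_const D2t (Or.inl hv.ne')]
    have Ex : deriv (fun y => φ₁ j t y ^ θ * φ₂ j t y ^ (1 - θ)) x
        = (deriv (fun y => φ₁ j t y) x * θ * φ₁ j t x ^ (θ - 1)) * φ₂ j t x ^ (1 - θ)
          + φ₁ j t x ^ θ * (deriv (fun y => φ₂ j t y) x * (1 - θ) * φ₂ j t x ^ (1 - θ - 1)) := by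
      rw [deriv_fun_mul (D1x.rpow_const (Or.inl hu.ne')) (D2x.rpow_const (Or.inl hv.ne')),
        _root_.deriv_rpow_const D1x (Or.inl hu.ne'), _root_.deriv_rpow_const D2x (Or.inl hv.ne')]
    set S1 := ∑ i : Fin I, B₁ j i t x * φ₁ i t 0 with hS1def
    set S2 := ∑ i : Fin I, B₂ j i t x * φ₂ i t 0 with hS2def
    have hS1 : 0 ≤ S1 := Finset.sum_nonneg fun i _ =>
      mul_nonneg (hB₁ j i t x hx) (hpos1 i t 0 le_rfl).le
    have hS2 : 0 ≤ S2 := Finset.sum_nonneg fun i _ =>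
      mul_nonneg (hB₂ j i t x hx) (hpos2 i t 0 le_rfl).le
    have hL : ∑ i : Fin I, B₁ j i t x ^ θ * B₂ j i t x ^ (1 - θ)
          * (φ₁ i t 0 ^ θ * φ₂ i t 0 ^ (1 - θ)) ≤ S1 ^ θ * S2 ^ (1 - θ) := by
      have h := holder2 (fun i => B₁ j i t x * φ₁ i t 0) (fun i => B₂ j i t x * φ₂ i t 0)
        (fun i => mul_nonneg (hB₁ j i t x hx) (hpos1 i t 0 le_rfl).le)
        (fun i => mul_nonneg (hB₂ j i t x hx) (hpos2 i t 0 le_rfl).le) h0 h1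
      refine le_trans (le_of_eq (Finset.sum_congr rfl fun i _ => ?_)) h
      rw [Real.mul_rpow (hB₁ j i t x hx) (hpos1 i t 0 le_rfl).le,
        Real.mul_rpow (hB₂ j i t x hx) (hpos2 i t 0 le_rfl).le]
      ring
    have H1 := hineq1 j t x hx
    have H2 := hineq2 j t x hx
    rw [← hS1def] at H1
    rw [← hS2def] at H2
    set at1 := deriv (fun s => φ₁ j s x) t
    set ax1 := deriv (fun y => φ₁ j t y) x
    set at2 := deriv (fun s => φ₂ j s x) t
    set ax2 := deriv (fun y => φ₂ j t y) x
    set u := φ₁ j t x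
    set v := φ₂ j t x
    set P1 := -at1 - ax1 + (d₁ j t x + μ₁) * u with hP1def
    set P2 := -at2 - ax2 + (d₂ j t x + μ₂) * v with hP2def
    have hP1 : 0 ≤ P1 := le_trans hS1 H1
    have hP2 : 0 ≤ P2 := le_trans hS2 H2
    have key : S1 ^ θ * S2 ^ (1 - θ) ≤
        (u ^ θ * v ^ (1 - θ)) * (θ * (P1 / u) + (1 - θ) * (P2 / v)) := by
      have geo : (S1 / u) ^ θ * (S2 / v) ^ (1 - θ) ≤ θ * (S1 / u) + (1 - θ) * (S2 / v) :=
        Real.geom_mean_le_arith_mean2_weighted h0 (by linarith : (0:ℝ) ≤ 1 - θ)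
          (div_nonneg hS1 hu.le) (div_nonneg hS2 hv.le) (by ring)
      have hpu : (0:ℝ) < u ^ θ := Real.rpow_pos_of_pos hu θ
      have hpv : (0:ℝ) < v ^ (1 - θ) := Real.rpow_pos_of_pos hv (1 - θ)
      calc S1 ^ θ * S2 ^ (1 - θ)
          = (u ^ θ * v ^ (1 - θ)) * ((S1 / u) ^ θ * (S2 / v) ^ (1 - θ)) := by
            rw [Real.div_rpow hS1 hu.le, Real.div_rpow hS2 hv.le]
            field_simp
        _ ≤ (u ^ θ * v ^ (1 - θ)) * (θ * (S1 / u) + (1 - θ) * (S2 / v)) :=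
            mul_le_mul_of_nonneg_left geo (by positivity)
        _ ≤ (u ^ θ * v ^ (1 - θ)) * (θ * (P1 / u) + (1 - θ) * (P2 / v)) := by
            gcongr
    refine le_trans hL (le_trans key (le_of_eq ?_))
    rw [Et, Ex]
    have hu1 : u ^ (θ - 1) = u ^ θ / u := Real.rpow_sub_one hu.ne' θ
    have hv1 : v ^ (1 - θ - 1) = v ^ (1 - θ) / v := Real.rpow_sub_one hv.ne' (1 - θ)
    rw [hu1, hv1, hP1def, hP2def]
    field_simp
    ring

/-- The dominant Floquet eigenvalue of the `I`-phase renewal system is convex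
with respect to the death rates and geometrically convex with respect to the
birth rates. -/
theorem sysLambdaF_convex
    (T : ℝ) (hT : 0 < T) (I : ℕ) (hI : 1 ≤ I)
    (B₁ B₂ : Fin I → Fin I → ℝ → ℝ → ℝ) (d₁ d₂ : Fin I → ℝ → ℝ → ℝ)
    (hB₁ : ∀ j i t x, 0 ≤ x → 0 ≤ B₁ j i t x)
    (hB₂ : ∀ j i t x, 0 ≤ x → 0 ≤ B₂ j i t x)
    (hd₁ : ∀ i t x, 0 ≤ x → 0 ≤ d₁ i t x)
    (hd₂ : ∀ i t x, 0 ≤ x → 0 ≤ d₂ i t x)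
    (hB₁p : ∀ j i t x, 0 ≤ x → B₁ j i (t + T) x = B₁ j i t x)
    (hB₂p : ∀ j i t x, 0 ≤ x → B₂ j i (t + T) x = B₂ j i t x)
    (hd₁p : ∀ i t x, 0 ≤ x → d₁ i (t + T) x = d₁ i t x)
    (hd₂p : ∀ i t x, 0 ≤ x → d₂ i (t + T) x = d₂ i t x)
    (θ : ℝ) (hθ : θ ∈ Set.Icc (0 : ℝ) 1)
    (Bθ : Fin I → Fin I → ℝ → ℝ → ℝ) (dθ : Fin I → ℝ → ℝ → ℝ)
    (hBθ : Bθ = fun j i t x => B₁ j i t x ^ θ * B₂ j i t x ^ (1 - θ))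
    (hdθ : dθ = fun i t x => θ * d₁ i t x + (1 - θ) * d₂ i t x)
    (hne₁ : (sysSubeigSet T I B₁ d₁).Nonempty)
    (hne₂ : (sysSubeigSet T I B₂ d₂).Nonempty)
    (hbd₁ : BddBelow (sysSubeigSet T I B₁ d₁))
    (hbd₂ : BddBelow (sysSubeigSet T I B₂ d₂))
    (hbdθ : BddBelow (sysSubeigSet T I Bθ dθ)) :
    sysLambdaF T I Bθ dθ ≤
      θ * sysLambdaF T I B₁ d₁ + (1 - θ) * sysLambdaF T I B₂ d₂ := by
  obtain ⟨h0, h1⟩ := hθ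
  rw [sysLambdaF, sysLambdaF, sysLambdaF]
  apply le_of_forall_pos_le_add
  intro ε hε
  obtain ⟨μ₁, hμ₁, hμ₁'⟩ := Real.lt_sInf_add_pos hne₁ hε
  obtain ⟨μ₂, hμ₂, hμ₂'⟩ := Real.lt_sInf_add_pos hne₂ hε
  have hmem : θ * μ₁ + (1 - θ) * μ₂ ∈ sysSubeigSet T I Bθ dθ := by
    rw [hBθ, hdθ]
    exact theta_mem T I B₁ B₂ d₁ d₂ hB₁ hB₂ θ h0 h1 hμ₁ hμ₂
  have hle := csInf_le hbdθ hmem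
  have e1 : θ * μ₁ ≤ θ * (sInf (sysSubeigSet T I B₁ d₁) + ε) :=
    mul_le_mul_of_nonneg_left hμ₁'.le h0
  have e2 : (1 - θ) * μ₂ ≤ (1 - θ) * (sInf (sysSubeigSet T I B₂ d₂) + ε) :=
    mul_le_mul_of_nonneg_left hμ₂'.le (by linarith)
  nlinarith [hle, e1, e2]
end
end

section
/- Let T > 0, let B, d : ℝ × [0,∞) → ℝ be nonnegative and T-periodic in t, let μ ∈ ℝ and let φ be a positive T-periodic subeigenfunction for (B, d, μ). Let n : ℝ × [0,∞) → ℝ be nonnegative, differentiable in both variables, satisfying ∂_t n(t,x) + ∂_x n(t,x) + d(t,x) n(t,x) = 0 for all t, x ≥ 0 and the boundary condition n(t,0) = ∫₀^∞ B(t,x) n(t,x) dx. Assume for each t that x ↦ n(t,x)φ(t,x), x ↦ ∂_x(nφ)(t,x), x ↦ B(t,x)n(t,x) and x ↦ d(t,x)n(t,x)φ(t,x) are integrable on (0,∞), that n(t,x)φ(t,x) → 0 as x → ∞, and that the function F(t) = ∫₀^∞ n(t,x) φ(t,x) dx is differentiable with F′(t) = ∫₀^∞ ∂_t (n φ)(t,x)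 dx. Then for every t, the function t ↦ e^{−μ t} F(t) has nonpositive derivative: (d/dt)[ e^{−μ t} ∫₀^∞ n(t,x) φ(t,x) dx ] ≤ 0. -/
open MeasureTheory Real Filter

set_option maxHeartbeats 2000000

noncomputable section

lemma indicator_shift (f : ℝ → ℝ) (a : ℝ) :
    (Set.Ioi (0:ℝ)).indicator (fun x => f (x + a)) =
      fun x => (Set.Ioi a).indicator f (x + a) := by
  funext x
  by_cases hx : (0:ℝ) < x
  · rw [Set.indicator_of_mem (Set.mem_Ioi.mpr hx),
      Set.indicator_of_mem (Set.mem_Ioi.mpr (by linarith))]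
  · rw [Set.indicator_of_notMem (by simpa using hx),
      Set.indicator_of_notMem (by simp only [Set.mem_Ioi, not_lt] at hx ⊢; linarith)]

lemma integrableOn_shift {f : ℝ → ℝ} {a : ℝ} (hf : IntegrableOn f (Set.Ioi a)) :
    IntegrableOn (fun x => f (x + a)) (Set.Ioi (0:ℝ)) := by
  have h1 : Integrable ((Set.Ioi a).indicator f) :=
    (integrable_indicator_iff measurableSet_Ioi).mpr hf
  have h2 := h1.comp_add_right a
  refine (integrable_indicator_iff measurableSet_Ioi).mp ?_
  rw [indicator_shift]
  exact h2

lemma setIntegral_shift (f : ℝ → ℝ) (a : ℝ) :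
    ∫ x in Set.Ioi (0:ℝ), f (x + a) = ∫ x in Set.Ioi a, f x := by
  rw [← integral_indicator measurableSet_Ioi, indicator_shift,
    integral_add_right_eq_self ((Set.Ioi a).indicator f) a,
    integral_indicator measurableSet_Ioi]

/-- If `φ` is a positive `T`-periodic subeigenfunction for `(B, d, μ)` and `n`
is a nonnegative solution of the renewal equation
`∂ₜn + ∂ₓn + d n = 0`, `n(t,0) = ∫₀^∞ B(t,x) n(t,x) dx`, then (under the natural
integrability assumptions) `t ↦ e^{-μt} ∫₀^∞ n(t,x) φ(t,x) dx` has nonpositive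
derivative. -/
theorem deriv_weighted_mass_nonpos
    (T : ℝ) (hT : 0 < T) (B d : ℝ → ℝ → ℝ)
    (hB : ∀ t x, 0 ≤ x → 0 ≤ B t x) (hd : ∀ t x, 0 ≤ x → 0 ≤ d t x)
    (hBp : ∀ t x, 0 ≤ x → B (t + T) x = B t x)
    (hdp : ∀ t x, 0 ≤ x → d (t + T) x = d t x)
    (μ : ℝ) (φ : ℝ → ℝ → ℝ) (hφ : IsSubeig T B d μ φ)
    (n : ℝ → ℝ → ℝ)
    (hn0 : ∀ t x, 0 ≤ x → 0 ≤ n t x)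
    (hndiff : ∀ t x, 0 ≤ x → DifferentiableAt ℝ (fun p : ℝ × ℝ => n p.1 p.2) (t, x))
    (hpde : ∀ t x, 0 ≤ x →
      deriv (fun s => n s x) t + deriv (fun y => n t y) x + d t x * n t x = 0)
    (hbc : ∀ t, n t 0 = ∫ x in Set.Ioi (0 : ℝ), B t x * n t x)
    (hint₁ : ∀ t, IntegrableOn (fun x => n t x * φ t x) (Set.Ioi (0 : ℝ)))
    (hint₂ : ∀ t, IntegrableOn
      (fun x => deriv (fun y => n t y * φ t y) x) (Set.Ioi (0 : ℝ)))
    (hint₃ : ∀ t, IntegrableOn (fun x => B t x * n t x) (Set.Ioi (0 : ℝ)))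
    (hint₄ : ∀ t, IntegrableOn (fun x => d t x * n t x * φ t x) (Set.Ioi (0 : ℝ)))
    (hlim : ∀ t, Filter.Tendsto (fun x => n t x * φ t x) Filter.atTop (nhds 0))
    (hF : ∀ t, HasDerivAt (fun s => ∫ x in Set.Ioi (0 : ℝ), n s x * φ s x)
      (∫ x in Set.Ioi (0 : ℝ), deriv (fun s => n s x * φ s x) t) t) :
    ∀ t, deriv
      (fun s => Real.exp (-μ * s) * ∫ x in Set.Ioi (0 : ℝ), n s x * φ s x) t ≤ 0 := by
  obtain ⟨hφpos, hφdiff, -, hφineq⟩ := hφ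
  intro t
  ---------------------------------------------------------------------------
  -- the core pointwise computation along diagonals
  ---------------------------------------------------------------------------
  have core : ∀ s c : ℝ, 0 ≤ c + s →
      HasDerivAt (fun b => Real.exp (-μ * b) * (n b (c + b) * φ b (c + b)))
        (deriv (fun b => Real.exp (-μ * b) * (n b (c + b) * φ b (c + b))) s) s ∧
      deriv (fun b => Real.exp (-μ * b) * (n b (c + b) * φ b (c + b))) s ≤
        -(Real.exp (-μ * s) * (B s (c + s) * n s (c + s) * φ s 0)) ∧
      deriv (fun b => Real.exp (-μ * b) * (n b (c + b) * φ b (c + b))) s =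
        Real.exp (-μ * s) * (-(μ * (n s (c + s) * φ s (c + s))) +
          (deriv (fun a => n a (c + s) * φ a (c + s)) s
            + deriv (fun z => n s z * φ s z) (c + s))) := by
    intro s c hys
    have hn2 := hndiff s (c + s) hys
    have hp2 := hφdiff s (c + s) hys
    have hLn := hn2.hasFDerivAt
    have hLp := hp2.hasFDerivAt
    set Ln := fderiv ℝ (fun p : ℝ × ℝ => n p.1 p.2) (s, c + s) with hLndef
    set Lp := fderiv ℝ (fun p : ℝ × ℝ => φ p.1 p.2) (s, c + s) with hLpdef
    have c1 : HasDerivAt (fun b : ℝ => ((b, c + s) : ℝ × ℝ)) ((1:ℝ), (0:ℝ)) s :=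
      (hasDerivAt_id s).prodMk (hasDerivAt_const s (c + s))
    have c2 : HasDerivAt (fun z : ℝ => ((s, z) : ℝ × ℝ)) ((0:ℝ), (1:ℝ)) (c + s) :=
      (hasDerivAt_const (c + s) s).prodMk (hasDerivAt_id (c + s))
    have c3 : HasDerivAt (fun b : ℝ => ((b, c + b) : ℝ × ℝ)) ((1:ℝ), (1:ℝ)) s :=
      (hasDerivAt_id s).prodMk ((hasDerivAt_id s).const_add c)
    have Hnt : HasDerivAt (fun b => n b (c + s)) (Ln (1, 0)) s :=
      hLn.comp_hasDerivAt_of_eq s c1 rfl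
    have Hnx : HasDerivAt (fun z => n s z) (Ln (0, 1)) (c + s) :=
      hLn.comp_hasDerivAt (c + s) c2
    have Hpt : HasDerivAt (fun b => φ b (c + s)) (Lp (1, 0)) s :=
      hLp.comp_hasDerivAt_of_eq s c1 rfl
    have Hpx : HasDerivAt (fun z => φ s z) (Lp (0, 1)) (c + s) :=
      hLp.comp_hasDerivAt (c + s) c2
    have Hdn : HasDerivAt (fun b => n b (c + b)) (Ln (1, 1)) s :=
      hLn.comp_hasDerivAt_of_eq s c3 rfl
    have Hdp : HasDerivAt (fun b => φ b (c + b)) (Lp (1, 1)) s :=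
      hLp.comp_hasDerivAt_of_eq s c3 rfl
    have HN : HasDerivAt (fun b => n b (c + b) * φ b (c + b))
        (Ln (1, 1) * φ s (c + s) + n s (c + s) * Lp (1, 1)) s := Hdn.mul Hdp
    have hE : HasDerivAt (fun b : ℝ => Real.exp (-μ * b)) (Real.exp (-μ * s) * (-μ)) s := by
      have h1 : HasDerivAt (fun b : ℝ => -μ * b) (-μ) s := by
        simpa using (hasDerivAt_id s).const_mul (-μ)
      simpa using h1.exp
    have HW : HasDerivAt (fun b => Real.exp (-μ * b) * (n b (c + b) * φ b (c + b)))
        (Real.exp (-μ * s) * (-μ) * (n s (c + s) * φ s (c + s))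
          + Real.exp (-μ * s) * (Ln (1, 1) * φ s (c + s) + n s (c + s) * Lp (1, 1))) s :=
      hE.mul HN
    have l1 : Ln ((1:ℝ), (1:ℝ)) = Ln (1, 0) + Ln (0, 1) := by
      rw [show ((1:ℝ), (1:ℝ)) = ((1:ℝ), (0:ℝ)) + ((0:ℝ), (1:ℝ)) by
        rw [Prod.mk_add_mk]; norm_num, map_add]
    have l2 : Lp ((1:ℝ), (1:ℝ)) = Lp (1, 0) + Lp (0, 1) := by
      rw [show ((1:ℝ), (1:ℝ)) = ((1:ℝ), (0:ℝ)) + ((0:ℝ), (1:ℝ)) by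
        rw [Prod.mk_add_mk]; norm_num, map_add]
    have hp1 := hpde s (c + s) hys
    rw [Hnt.deriv, Hnx.deriv] at hp1
    have hp2' := hφineq s (c + s) hys
    rw [Hpt.deriv, Hpx.deriv] at hp2'
    have hn' := hn0 s (c + s) hys
    have hmul := mul_le_mul_of_nonneg_left hp2' hn'
    have hsum : Ln (1, 0) + Ln (0, 1) = -(d s (c + s) * n s (c + s)) := by linarith
    have hprod : (Ln (1, 0) + Ln (0, 1)) * φ s (c + s)
        = -(d s (c + s) * n s (c + s) * φ s (c + s)) := by rw [hsum]; ring
    have hE' := (Real.exp_pos (-μ * s)).le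
    have HA : HasDerivAt (fun a => n a (c + s) * φ a (c + s))
        (Ln (1, 0) * φ s (c + s) + n s (c + s) * Lp (1, 0)) s := Hnt.mul Hpt
    have HB' : HasDerivAt (fun z => n s z * φ s z)
        (Ln (0, 1) * φ s (c + s) + n s (c + s) * Lp (0, 1)) (c + s) := Hnx.mul Hpx
    refine ⟨by rw [HW.deriv]; exact HW, ?_, ?_⟩
    · rw [HW.deriv, l1, l2]
      have key : (-μ) * (n s (c + s) * φ s (c + s))
          + ((Ln (1, 0) + Ln (0, 1)) * φ s (c + s)
            + n s (c + s) * (Lp (1, 0) + Lp (0, 1)))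
          ≤ -(B s (c + s) * n s (c + s) * φ s 0) := by nlinarith [hmul, hprod]
      calc Real.exp (-μ * s) * (-μ) * (n s (c + s) * φ s (c + s))
            + Real.exp (-μ * s) * ((Ln (1, 0) + Ln (0, 1)) * φ s (c + s)
              + n s (c + s) * (Lp (1, 0) + Lp (0, 1)))
          = Real.exp (-μ * s) * ((-μ) * (n s (c + s) * φ s (c + s))
              + ((Ln (1, 0) + Ln (0, 1)) * φ s (c + s)
                + n s (c + s) * (Lp (1, 0) + Lp (0, 1)))) := by ring
        _ ≤ Real.exp (-μ * s) * (-(B s (c + s) * n s (c + s) * φ s 0)) :=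
            mul_le_mul_of_nonneg_left key hE'
        _ = -(Real.exp (-μ * s) * (B s (c + s) * n s (c + s) * φ s 0)) := by ring
    · rw [HW.deriv, HA.deriv, HB'.deriv, l1, l2]
      ring
  ---------------------------------------------------------------------------
  -- sequence of time steps
  ---------------------------------------------------------------------------
  have hpos : ∀ k : ℕ, 0 < (1 : ℝ) / ((k : ℝ) + 1) := fun k => by positivity
  have ht0 : Tendsto (fun k : ℕ => (1 : ℝ) / ((k : ℝ) + 1)) atTop (nhds 0) :=
    tendsto_one_div_add_atTop_nhds_zero_nat
  set h : ℕ → ℝ := fun k : ℕ => (1 : ℝ) / ((k : ℝ) + 1) with hh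
  have hseq : Tendsto (fun k => t + h k) atTop (nhdsWithin t {t}ᶜ) := by
    refine tendsto_nhdsWithin_of_tendsto_nhds_of_eventually_within _ ?_ ?_
    · simpa using tendsto_const_nhds.add ht0
    · refine Eventually.of_forall fun k => ?_
      simp only [Set.mem_compl_iff, Set.mem_singleton_iff]
      nlinarith [hpos k]
  have slope_comp : ∀ (f : ℝ → ℝ) (L : ℝ), HasDerivAt f L t →
      Tendsto (fun k => (f t - f (t + h k)) / h k) atTop (nhds (-L)) := by
    intro f L hf
    have h1 : Tendsto (fun k => slope f t (t + h k)) atTop (nhds L) :=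
      (hasDerivAt_iff_tendsto_slope.mp hf).comp hseq
    refine h1.neg.congr fun k => ?_
    rw [slope_def_field, show t + h k - t = h k by ring]
    ring
  ---------------------------------------------------------------------------
  -- the diagonal derivative v and its properties
  ---------------------------------------------------------------------------
  set v : ℝ → ℝ := fun x =>
    deriv (fun b => Real.exp (-μ * b) * (n b ((x - t) + b) * φ b ((x - t) + b))) t with hvdef
  have hxarg : ∀ x : ℝ, x - t + t = x := fun x => by ring
  have corey : ∀ x : ℝ, 0 ≤ x →
      HasDerivAt (fun b => Real.exp (-μ * b) * (n b ((x - t) + b) * φ b ((x - t) + b)))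
        (v x) t ∧
      v x ≤ -(Real.exp (-μ * t) * (B t x * n t x * φ t 0)) ∧
      Real.exp (-μ * t) * deriv (fun s => n s x * φ s x) t
        = v x + Real.exp (-μ * t) * (μ * (n t x * φ t x))
          - Real.exp (-μ * t) * deriv (fun z => n t z * φ t z) x := by
    intro x hx
    have H := core t (x - t) (by rw [hxarg]; exact hx)
    rw [hxarg] at H
    obtain ⟨H1, H2, H3⟩ := H
    have hfold : deriv (fun b => Real.exp (-μ * b)
        * (n b ((x - t) + b) * φ b ((x - t) + b))) t = v x := by rw [hvdef]
    rw [hfold] at H1 H2 H3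
    exact ⟨H1, H2, by linear_combination -H3⟩
  ---------------------------------------------------------------------------
  -- nonnegative difference quotients
  ---------------------------------------------------------------------------
  set q : ℕ → ℝ → ℝ := fun k x =>
    (Real.exp (-μ * t) * (n t x * φ t x)
      - Real.exp (-μ * (t + h k)) * (n (t + h k) (x + h k) * φ (t + h k) (x + h k))) / h k
    with hqdef
  have hq_nonneg : ∀ k : ℕ, ∀ x ∈ Set.Ioi (0:ℝ), 0 ≤ q k x := by
    intro k x hx
    have hx' : (0:ℝ) < x := hx
    have hanti : AntitoneOn
        (fun b => Real.exp (-μ * b) * (n b ((x - t) + b) * φ b ((x - t) + b)))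
        (Set.Icc t (t + h k)) := by
      apply antitoneOn_of_deriv_nonpos (convex_Icc _ _)
      · intro b hb
        have hcb : 0 ≤ (x - t) + b := by have := hb.1; linarith
        exact ((core b (x - t) hcb).1).continuousAt.continuousWithinAt
      · intro b hb
        rw [interior_Icc] at hb
        have hcb : 0 ≤ (x - t) + b := by have := hb.1; linarith
        exact ((core b (x - t) hcb).1).differentiableAt.differentiableWithinAt
      · intro b hb
        rw [interior_Icc] at hb
        have hcb : 0 ≤ (x - t) + b := by have := hb.1; linarith
        have H2 := (core b (x - t) hcb).2.1
        have hnn : 0 ≤ Real.exp (-μ * b) * (B b ((x - t) + b) * n b ((x - t) + b) * φ b 0) := by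
          have g1 := hB b _ hcb
          have g2 := hn0 b _ hcb
          have g3 := (hφpos b 0 le_rfl).le
          positivity
        linarith
    have hmem1 : t ∈ Set.Icc t (t + h k) := ⟨le_rfl, by linarith [hpos k]⟩
    have hmem2 : t + h k ∈ Set.Icc t (t + h k) := ⟨by linarith [hpos k], le_rfl⟩
    have hWle := hanti hmem1 hmem2 (by linarith [hpos k])
    simp only at hWle
    rw [hxarg x, show (x - t) + (t + h k) = x + h k by ring] at hWle
    have : 0 < h k := hpos k
    apply div_nonneg _ this.le
    linarith
  ---------------------------------------------------------------------------
  -- integrability of the quotients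
  ---------------------------------------------------------------------------
  have hSk_int : ∀ k : ℕ, IntegrableOn
      (fun x => Real.exp (-μ * (t + h k)) * (n (t + h k) (x + h k) * φ (t + h k) (x + h k)))
      (Set.Ioi (0:ℝ)) := by
    intro k
    have h1 : IntegrableOn (fun x => n (t + h k) x * φ (t + h k) x) (Set.Ioi (h k)) :=
      (hint₁ (t + h k)).mono_set (Set.Ioi_subset_Ioi (hpos k).le)
    have h2 : IntegrableOn (fun x => n (t + h k) (x + h k) * φ (t + h k) (x + h k))
        (Set.Ioi (0:ℝ)) := integrableOn_shift h1
    exact h2.const_mul _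
  have hq_int : ∀ k : ℕ, IntegrableOn (q k) (Set.Ioi (0:ℝ)) := by
    intro k
    apply Integrable.div_const
    exact ((hint₁ t).const_mul _).sub (hSk_int k)
  ---------------------------------------------------------------------------
  -- pointwise convergence of the quotients to -v
  ---------------------------------------------------------------------------
  have hq_tendsto : ∀ x ∈ Set.Ioi (0:ℝ), Tendsto (fun k => q k x) atTop (nhds (-(v x))) := by
    intro x hx
    have H1 := (corey x (le_of_lt hx)).1
    have H2 := slope_comp _ _ H1
    refine H2.congr fun k => ?_
    simp only [hqdef]
    rw [hxarg x, show (x - t) + (t + h k) = x + h k by ring]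
  ---------------------------------------------------------------------------
  -- uniform bound on the integrals of the quotients
  ---------------------------------------------------------------------------
  set Gf : ℝ → ℝ := fun s => Real.exp (-μ * s) * ∫ x in Set.Ioi (0:ℝ), n s x * φ s x
    with hGfdef
  have hNcont : ContinuousAt (fun p : ℝ × ℝ => n p.1 p.2 * φ p.1 p.2) (t, 0) :=
    ((hndiff t 0 le_rfl).mul (hφdiff t 0 le_rfl)).continuousAt
  obtain ⟨δ, hδpos, hδ⟩ := Metric.continuousAt_iff.mp hNcont 1 one_pos
  set C : ℝ := |n t 0 * φ t 0| + 1 with hCdef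
  have hC0 : 0 ≤ C := by positivity
  have hCb : ∀ k : ℕ, h k < δ → ∀ y ∈ Set.Ioc (0:ℝ) (h k),
      ‖n (t + h k) y * φ (t + h k) y‖ ≤ C := by
    intro k hk y hy
    have hd1 : dist ((t + h k, y) : ℝ × ℝ) ((t, 0) : ℝ × ℝ) < δ := by
      rw [Prod.dist_eq, max_lt_iff]
      constructor
      · rw [Real.dist_eq, show t + h k - t = h k by ring, abs_of_pos (hpos k)]
        exact hk
      · rw [Real.dist_eq, sub_zero, abs_of_pos hy.1]
        exact lt_of_le_of_lt hy.2 hk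
    have h5 := hδ hd1
    simp only [Real.dist_eq] at h5
    have h6 := abs_sub_abs_le_abs_sub (n (t + h k) y * φ (t + h k) y) (n t 0 * φ t 0)
    rw [Real.norm_eq_abs, hCdef]
    linarith
  have hJ : ∀ k : ℕ, h k < δ →
      |∫ x in Set.Ioc (0:ℝ) (h k), n (t + h k) x * φ (t + h k) x| ≤ C * h k := by
    intro k hk
    have hint' : IntegrableOn (fun x => n (t + h k) x * φ (t + h k) x)
        (Set.Ioc (0:ℝ) (h k)) := (hint₁ (t + h k)).mono_set Set.Ioc_subset_Ioi_self
    have hm : volume (Set.Ioc (0:ℝ) (h k)) = ENNReal.ofReal (h k) := by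
      rw [Real.volume_Ioc, sub_zero]
    have hb := norm_setIntegral_le_of_norm_le_const
      (by rw [hm]; exact ENNReal.ofReal_lt_top) (hCb k hk)
    rw [measureReal_def, hm, ENNReal.toReal_ofReal (hpos k).le, Real.norm_eq_abs] at hb
    exact hb
  -- identity / bound for the integral of q k
  have hbk : ∀ k : ℕ, h k < δ → (∫ x in Set.Ioi (0:ℝ), q k x) ≤
      (Gf t - Gf (t + h k)) / h k + Real.exp (-μ * (t + h k)) * C := by
    intro k hk
    have hRint : IntegrableOn (fun x => Real.exp (-μ * t) * (n t x * φ t x))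
        (Set.Ioi (0:ℝ)) := (hint₁ t).const_mul _
    have e1 : (∫ x in Set.Ioi (0:ℝ), q k x) =
        ((∫ x in Set.Ioi (0:ℝ), Real.exp (-μ * t) * (n t x * φ t x))
          - ∫ x in Set.Ioi (0:ℝ), Real.exp (-μ * (t + h k))
              * (n (t + h k) (x + h k) * φ (t + h k) (x + h k))) / h k := by
      simp only [hqdef]
      rw [integral_div, integral_sub hRint (hSk_int k)]
    have e2 : (∫ x in Set.Ioi (0:ℝ), Real.exp (-μ * t) * (n t x * φ t x))
        = Real.exp (-μ * t) * ∫ x in Set.Ioi (0:ℝ), n t x * φ t x :=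
      integral_const_mul _ _
    have e3 : (∫ x in Set.Ioi (0:ℝ), Real.exp (-μ * (t + h k))
          * (n (t + h k) (x + h k) * φ (t + h k) (x + h k)))
        = Real.exp (-μ * (t + h k))
          * ∫ x in Set.Ioi (h k), n (t + h k) x * φ (t + h k) x := by
      rw [integral_const_mul]
      congr 1
      exact setIntegral_shift (fun y => n (t + h k) y * φ (t + h k) y) (h k)
    have hdisj : Disjoint (Set.Ioc (0:ℝ) (h k)) (Set.Ioi (h k)) := by
      rw [Set.disjoint_left]
      rintro a ⟨-, h2⟩ h3
      exact absurd (Set.mem_Ioi.mp h3) (not_lt.mpr h2)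
    have hsplit : (∫ x in Set.Ioi (0:ℝ), n (t + h k) x * φ (t + h k) x)
        = (∫ x in Set.Ioc (0:ℝ) (h k), n (t + h k) x * φ (t + h k) x)
          + ∫ x in Set.Ioi (h k), n (t + h k) x * φ (t + h k) x := by
      rw [← Set.Ioc_union_Ioi_eq_Ioi (hpos k).le]
      exact setIntegral_union hdisj measurableSet_Ioi
        ((hint₁ (t + h k)).mono_set Set.Ioc_subset_Ioi_self)
        ((hint₁ (t + h k)).mono_set (Set.Ioi_subset_Ioi (hpos k).le))
    set J := ∫ x in Set.Ioc (0:ℝ) (h k), n (t + h k) x * φ (t + h k) x with hJdef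
    have e4 : (∫ x in Set.Ioi (h k), n (t + h k) x * φ (t + h k) x)
        = (∫ x in Set.Ioi (0:ℝ), n (t + h k) x * φ (t + h k) x) - J := by
      rw [hsplit]; ring
    have hJb : Real.exp (-μ * (t + h k)) * J ≤ Real.exp (-μ * (t + h k)) * (C * h k) :=
      mul_le_mul_of_nonneg_left (le_trans (le_abs_self _) (hJ k hk))
        (Real.exp_pos _).le
    have e5 : (∫ x in Set.Ioi (0:ℝ), q k x)
        = (Gf t - Gf (t + h k)) / h k + (Real.exp (-μ * (t + h k)) * J) / h k := by
      rw [e1, e2, e3, e4, hGfdef]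
      simp only
      rw [← add_div]
      congr 1
      ring
    rw [e5]
    have h6 : (Real.exp (-μ * (t + h k)) * J) / h k ≤ Real.exp (-μ * (t + h k)) * C := by
      rw [div_le_iff₀ (hpos k)]
      calc Real.exp (-μ * (t + h k)) * J
          ≤ Real.exp (-μ * (t + h k)) * (C * h k) := hJb
        _ = Real.exp (-μ * (t + h k)) * C * h k := by ring
    linarith
  ---------------------------------------------------------------------------
  -- the derivative of Gf at t
  ---------------------------------------------------------------------------
  have hE : HasDerivAt (fun s : ℝ => Real.exp (-μ * s)) (Real.exp (-μ * t) * (-μ)) t := by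
    have h1 : HasDerivAt (fun s : ℝ => -μ * s) (-μ) t := by
      simpa using (hasDerivAt_id t).const_mul (-μ)
    simpa using h1.exp
  have HG : HasDerivAt Gf
      (Real.exp (-μ * t) * (-μ) * (∫ x in Set.Ioi (0:ℝ), n t x * φ t x)
        + Real.exp (-μ * t)
          * ∫ x in Set.Ioi (0:ℝ), deriv (fun s => n s x * φ s x) t) t := by
    rw [hGfdef]
    exact hE.mul (hF t)
  set g0 : ℝ := Real.exp (-μ * t) * (-μ) * (∫ x in Set.Ioi (0:ℝ), n t x * φ t x)
      + Real.exp (-μ * t) * ∫ x in Set.Ioi (0:ℝ), deriv (fun s => n s x * φ s x) t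
    with hg0def
  have ha_t : Tendsto (fun k => (Gf t - Gf (t + h k)) / h k
      + Real.exp (-μ * (t + h k)) * C) atTop (nhds (-g0 + Real.exp (-μ * t) * C)) := by
    have h1 := slope_comp Gf g0 HG
    have h3 : Tendsto (fun k => t + h k) atTop (nhds t) := by
      simpa using tendsto_const_nhds.add ht0
    have h4 : Continuous (fun s : ℝ => Real.exp (-μ * s) * C) := by fun_prop
    have h2 : Tendsto (fun k => Real.exp (-μ * (t + h k)) * C) atTop
        (nhds (Real.exp (-μ * t) * C)) := (h4.continuousAt.tendsto).comp h3
    exact h1.add h2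
  set M : ℝ := (-g0 + Real.exp (-μ * t) * C) + 1 with hMdef
  have hev : ∀ᶠ k in atTop, (∫ x in Set.Ioi (0:ℝ), q k x) ≤ M := by
    have e1 : ∀ᶠ k in atTop, ((Gf t - Gf (t + h k)) / h k
        + Real.exp (-μ * (t + h k)) * C) < M :=
      ha_t.eventually_lt_const (by rw [hMdef]; linarith)
    have e2 : ∀ᶠ k in atTop, h k < δ := ht0.eventually_lt_const hδpos
    filter_upwards [e1, e2] with k h1 h2
    exact le_of_lt (lt_of_le_of_lt (hbk k h2) h1)
  ---------------------------------------------------------------------------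
  -- Fatou's lemma: -v is integrable on (0,∞)
  ---------------------------------------------------------------------------
  have fatou : (∫⁻ x in Set.Ioi (0:ℝ), ENNReal.ofReal (-(v x))) ≤ ENNReal.ofReal M := by
    have hstep1 : (∫⁻ x in Set.Ioi (0:ℝ), ENNReal.ofReal (-(v x)))
        = ∫⁻ x in Set.Ioi (0:ℝ), Filter.liminf (fun k => ENNReal.ofReal (q k x)) atTop := by
      refine lintegral_congr_ae ((ae_restrict_iff' measurableSet_Ioi).mpr
        (Eventually.of_forall fun x hx => ?_))
      exact ((ENNReal.tendsto_ofReal (hq_tendsto x hx)).liminf_eq).symm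
    rw [hstep1]
    calc (∫⁻ x in Set.Ioi (0:ℝ), Filter.liminf (fun k => ENNReal.ofReal (q k x)) atTop)
        ≤ Filter.liminf (fun k => ∫⁻ x in Set.Ioi (0:ℝ), ENNReal.ofReal (q k x)) atTop :=
          lintegral_liminf_le'
            (fun k => ((hq_int k).aestronglyMeasurable.aemeasurable).ennreal_ofReal)
      _ ≤ ENNReal.ofReal M := by
          have hev2 : ∀ᶠ k in atTop,
              (∫⁻ x in Set.Ioi (0:ℝ), ENNReal.ofReal (q k x)) ≤ ENNReal.ofReal M := by
            filter_upwards [hev] with k hk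
            rw [← ofReal_integral_eq_lintegral_ofReal (hq_int k)
              ((ae_restrict_iff' measurableSet_Ioi).mpr
                (Eventually.of_forall (hq_nonneg k)))]
            exact ENNReal.ofReal_le_ofReal hk
          calc Filter.liminf (fun k => ∫⁻ x in Set.Ioi (0:ℝ), ENNReal.ofReal (q k x)) atTop
              ≤ Filter.liminf (fun _ : ℕ => ENNReal.ofReal M) atTop :=
                Filter.liminf_le_liminf hev2
            _ = ENNReal.ofReal M := Filter.liminf_const _
  have hvmeas : AEStronglyMeasurable (fun x => -(v x))
      (volume.restrict (Set.Ioi (0:ℝ))) := by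
    refine aestronglyMeasurable_of_tendsto_ae atTop
      (fun k => (hq_int k).aestronglyMeasurable) ?_
    rw [ae_restrict_iff' measurableSet_Ioi]
    exact Eventually.of_forall fun x hx => hq_tendsto x hx
  have hvnn : ∀ x ∈ Set.Ioi (0:ℝ), 0 ≤ -(v x) := by
    intro x hx
    have h2 := (corey x (le_of_lt hx)).2.1
    have h3 : 0 ≤ Real.exp (-μ * t) * (B t x * n t x * φ t 0) := by
      have g1 := hB t x (le_of_lt hx)
      have g2 := hn0 t x (le_of_lt hx)
      have g3 := (hφpos t 0 le_rfl).le
      positivity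
    linarith
  have hvint : IntegrableOn (fun x => -(v x)) (Set.Ioi (0:ℝ)) := by
    refine ⟨hvmeas, ?_⟩
    rw [hasFiniteIntegral_iff_ofReal
      ((ae_restrict_iff' measurableSet_Ioi).mpr (Eventually.of_forall hvnn))]
    exact lt_of_le_of_lt fatou ENNReal.ofReal_lt_top
  have hvint' : IntegrableOn v (Set.Ioi (0:ℝ)) :=
    hvint.neg.congr (Filter.Eventually.of_forall fun x => by simp)
  ---------------------------------------------------------------------------
  -- the fundamental theorem of calculus on (0, ∞)
  ---------------------------------------------------------------------------
  have hFTC : (∫ x in Set.Ioi (0:ℝ), deriv (fun z => n t z * φ t z) x)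
      = 0 - n t 0 * φ t 0 := by
    refine integral_Ioi_of_hasDerivAt_of_tendsto
      (f := fun z => n t z * φ t z) ?_ ?_ (hint₂ t) (hlim t)
    · have hc : ContinuousAt (fun z => n t z * φ t z) 0 := by
        have hcurve : Continuous fun z : ℝ => ((t, z) : ℝ × ℝ) := by fun_prop
        exact hNcont.comp hcurve.continuousAt
      exact hc.continuousWithinAt
    · intro x hx
      have hdiff : DifferentiableAt ℝ (fun z => n t z * φ t z) x := by
        have h1 := (hndiff t x (le_of_lt hx)).mul (hφdiff t x (le_of_lt hx))
        exact h1.comp x ((differentiableAt_const t).prodMk differentiableAt_id)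
      exact hdiff.hasDerivAt
  ---------------------------------------------------------------------------
  -- compare the integrals
  ---------------------------------------------------------------------------
  have hE0 : (0:ℝ) < Real.exp (-μ * t) := Real.exp_pos _
  have hmid_int : IntegrableOn (fun x => Real.exp (-μ * t) * (μ * (n t x * φ t x)))
      (Set.Ioi (0:ℝ)) := ((hint₁ t).const_mul μ).const_mul _
  have hder_int : IntegrableOn
      (fun x => Real.exp (-μ * t) * deriv (fun z => n t z * φ t z) x)
      (Set.Ioi (0:ℝ)) := (hint₂ t).const_mul _
  have hbn_int : IntegrableOn
      (fun x => -(Real.exp (-μ * t) * (B t x * n t x * φ t 0))) (Set.Ioi (0:ℝ)) :=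
    (((hint₃ t).mul_const (φ t 0)).const_mul (Real.exp (-μ * t))).neg
  have int_lhs : IntegrableOn
      (fun x => v x + Real.exp (-μ * t) * (μ * (n t x * φ t x))
        - Real.exp (-μ * t) * deriv (fun z => n t z * φ t z) x) (Set.Ioi (0:ℝ)) :=
    (hvint'.add hmid_int).sub hder_int
  have int_rhs : IntegrableOn
      (fun x => -(Real.exp (-μ * t) * (B t x * n t x * φ t 0))
        + Real.exp (-μ * t) * (μ * (n t x * φ t x))
        - Real.exp (-μ * t) * deriv (fun z => n t z * φ t z) x) (Set.Ioi (0:ℝ)) :=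
    (hbn_int.add hmid_int).sub hder_int
  have s1 : Real.exp (-μ * t) * (∫ x in Set.Ioi (0:ℝ), deriv (fun s => n s x * φ s x) t)
      = ∫ x in Set.Ioi (0:ℝ), Real.exp (-μ * t) * deriv (fun s => n s x * φ s x) t :=
    (integral_const_mul _ _).symm
  have s2 : (∫ x in Set.Ioi (0:ℝ), Real.exp (-μ * t) * deriv (fun s => n s x * φ s x) t)
      = ∫ x in Set.Ioi (0:ℝ), (v x + Real.exp (-μ * t) * (μ * (n t x * φ t x))
          - Real.exp (-μ * t) * deriv (fun z => n t z * φ t z) x) :=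
    setIntegral_congr_fun measurableSet_Ioi (fun x hx => (corey x (le_of_lt hx)).2.2)
  have s3 : (∫ x in Set.Ioi (0:ℝ), (v x + Real.exp (-μ * t) * (μ * (n t x * φ t x))
        - Real.exp (-μ * t) * deriv (fun z => n t z * φ t z) x))
      ≤ ∫ x in Set.Ioi (0:ℝ), (-(Real.exp (-μ * t) * (B t x * n t x * φ t 0))
        + Real.exp (-μ * t) * (μ * (n t x * φ t x))
        - Real.exp (-μ * t) * deriv (fun z => n t z * φ t z) x) := by
    refine setIntegral_mono_on int_lhs int_rhs measurableSet_Ioi fun x hx => ?_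
    have h2 := (corey x (le_of_lt hx)).2.1
    linarith
  have s4 : (∫ x in Set.Ioi (0:ℝ), (-(Real.exp (-μ * t) * (B t x * n t x * φ t 0))
        + Real.exp (-μ * t) * (μ * (n t x * φ t x))
        - Real.exp (-μ * t) * deriv (fun z => n t z * φ t z) x))
      = Real.exp (-μ * t) * (μ * ∫ x in Set.Ioi (0:ℝ), n t x * φ t x) := by
    have v1 : (∫ x in Set.Ioi (0:ℝ), (-(Real.exp (-μ * t) * (B t x * n t x * φ t 0))
          + Real.exp (-μ * t) * (μ * (n t x * φ t x))
          - Real.exp (-μ * t) * deriv (fun z => n t z * φ t z) x))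
        = (∫ x in Set.Ioi (0:ℝ), (-(Real.exp (-μ * t) * (B t x * n t x * φ t 0))
            + Real.exp (-μ * t) * (μ * (n t x * φ t x))))
          - ∫ x in Set.Ioi (0:ℝ), Real.exp (-μ * t) * deriv (fun z => n t z * φ t z) x :=
      integral_sub (hbn_int.add hmid_int) hder_int
    have v2 : (∫ x in Set.Ioi (0:ℝ), (-(Real.exp (-μ * t) * (B t x * n t x * φ t 0))
          + Real.exp (-μ * t) * (μ * (n t x * φ t x))))
        = (∫ x in Set.Ioi (0:ℝ), -(Real.exp (-μ * t) * (B t x * n t x * φ t 0)))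
          + ∫ x in Set.Ioi (0:ℝ), Real.exp (-μ * t) * (μ * (n t x * φ t x)) :=
      integral_add hbn_int hmid_int
    have v3 : (∫ x in Set.Ioi (0:ℝ), -(Real.exp (-μ * t) * (B t x * n t x * φ t 0)))
        = -∫ x in Set.Ioi (0:ℝ), Real.exp (-μ * t) * (B t x * n t x * φ t 0) :=
      integral_neg _
    rw [v1, v2, v3]
    have u1 : (∫ x in Set.Ioi (0:ℝ), Real.exp (-μ * t) * (B t x * n t x * φ t 0))
        = Real.exp (-μ * t) * ((n t 0) * φ t 0) := by
      rw [integral_const_mul]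
      congr 1
      rw [integral_mul_const, ← hbc t]
    have u2 : (∫ x in Set.Ioi (0:ℝ), Real.exp (-μ * t) * (μ * (n t x * φ t x)))
        = Real.exp (-μ * t) * (μ * ∫ x in Set.Ioi (0:ℝ), n t x * φ t x) := by
      rw [integral_const_mul, integral_const_mul]
    have u3 : (∫ x in Set.Ioi (0:ℝ), Real.exp (-μ * t) * deriv (fun z => n t z * φ t z) x)
        = Real.exp (-μ * t) * (0 - n t 0 * φ t 0) := by
      rw [integral_const_mul, hFTC]
    rw [u1, u2, u3]
    ring
  have hIle : (∫ x in Set.Ioi (0:ℝ), deriv (fun s => n s x * φ s x) t)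
      ≤ μ * ∫ x in Set.Ioi (0:ℝ), n t x * φ t x := by
    have hchain : Real.exp (-μ * t)
        * (∫ x in Set.Ioi (0:ℝ), deriv (fun s => n s x * φ s x) t)
        ≤ Real.exp (-μ * t) * (μ * ∫ x in Set.Ioi (0:ℝ), n t x * φ t x) := by
      rw [s1, s2, ← s4]
      exact s3
    exact le_of_mul_le_mul_left hchain hE0
  ---------------------------------------------------------------------------
  -- conclusion
  ---------------------------------------------------------------------------
  rw [HG.deriv]
  have h1 := mul_le_mul_of_nonneg_left hIle hE0.le
  nlinarith [h1]
end
end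

section
/- Let T > 0, let B, d : ℝ × [0,∞) → ℝ be nonnegative and T-periodic in t, let μ ∈ ℝ and let φ be a positive T-periodic subeigenfunction for (B, d, μ). Let n : ℝ × [0,∞) → ℝ be nonnegative, differentiable in both variables, satisfying ∂_t n + ∂_x n + d n = 0 and n(t,0) = ∫₀^∞ B(t,x) n(t,x) dx. Assume for each t that x ↦ n(t,x)φ(t,x), x ↦ ∂_x(nφ)(t,x), x ↦ B(t,x)n(t,x) and x ↦ d(t,x)n(t,x)φ(t,x) are integrable on (0,∞), that n(t,x)φ(t,x) → 0 as x → ∞, and that F(t) = ∫₀^∞ n(t,x) φ(t,x) dx is differentiable with F′(t) = ∫₀^∞ ∂_t (n φ)(t,x) dx. Then every solution grows slower than e^{μt} in the weighted space: for all t ≥ 0, ∫₀^∞ n(t,x) φ(t,x) dx ≤ e^{μ t} ∫₀^∞ n(0,x) φ(0,x) dx. -/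
open MeasureTheory Real

noncomputable section

private def Pt (n φ : ℝ → ℝ → ℝ) (t x : ℝ) : ℝ := deriv (fun s => n s x * φ s x) t
private def Px (n φ : ℝ → ℝ → ℝ) (t x : ℝ) : ℝ := deriv (fun y => n t y * φ t y) x
private def Dg (n φ : ℝ → ℝ → ℝ) (t x : ℝ) : ℝ := Pt n φ t x + Px n φ t x
private def DD (n φ : ℝ → ℝ → ℝ) : ℝ × ℝ → ℝ :=
  fun p => if 0 ≤ p.2 then Dg n φ p.1 p.2 else 0
private def Psic (n φ : ℝ → ℝ → ℝ) : ℝ × ℝ → ℝ :=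
  fun p => n p.1 (max p.2 0) * φ p.1 (max p.2 0)

private lemma derivs_aux {f : ℝ → ℝ → ℝ} {t x : ℝ}
    (hf : DifferentiableAt ℝ (fun p : ℝ × ℝ => f p.1 p.2) (t, x)) :
    HasDerivAt (fun s => f s x) (fderiv ℝ (fun p : ℝ × ℝ => f p.1 p.2) (t, x) (1, 0)) t ∧
    HasDerivAt (fun y => f t y) (fderiv ℝ (fun p : ℝ × ℝ => f p.1 p.2) (t, x) (0, 1)) x ∧
    HasDerivAt (fun u => f u (u + (x - t)))
      (fderiv ℝ (fun p : ℝ × ℝ => f p.1 p.2) (t, x) (1, 1)) t := by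
  have hF := hf.hasFDerivAt
  refine ⟨?_, ?_, ?_⟩
  · have c1 : HasDerivAt (fun s : ℝ => (s, x)) ((1 : ℝ), (0 : ℝ)) t :=
      (hasDerivAt_id t).prodMk (hasDerivAt_const t x)
    exact hF.comp_hasDerivAt t c1
  · have c2 : HasDerivAt (fun y : ℝ => (t, y)) ((0 : ℝ), (1 : ℝ)) x :=
      (hasDerivAt_const x t).prodMk (hasDerivAt_id x)
    exact hF.comp_hasDerivAt x c2
  · have c3 : HasDerivAt (fun u : ℝ => (u, u + (x - t))) ((1 : ℝ), (1 : ℝ)) t :=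
      (hasDerivAt_id t).prodMk ((hasDerivAt_id t).add_const _)
    have hpt : (t, t + (x - t)) = (t, x) := by norm_num
    have hF' : HasFDerivAt (fun p : ℝ × ℝ => f p.1 p.2)
        (fderiv ℝ (fun p : ℝ × ℝ => f p.1 p.2) (t, x)) ((fun u : ℝ => (u, u + (x - t))) t) := by
      simpa [hpt] using hF
    exact hF'.comp_hasDerivAt t c3

/-- All the basic derivative facts for the product `n·φ` at a point `(t,x)`. -/
private lemma prod_derivs {n φ : ℝ → ℝ → ℝ} {t x : ℝ}
    (hn : DifferentiableAt ℝ (fun p : ℝ × ℝ => n p.1 p.2) (t, x))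
    (hφ : DifferentiableAt ℝ (fun p : ℝ × ℝ => φ p.1 p.2) (t, x)) :
    HasDerivAt (fun s => n s x * φ s x) (Pt n φ t x) t ∧
    HasDerivAt (fun y => n t y * φ t y) (Px n φ t x) x ∧
    HasDerivAt (fun u => n u (u + (x - t)) * φ u (u + (x - t))) (Dg n φ t x) t ∧
    Pt n φ t x = deriv (fun s => n s x) t * φ t x + n t x * deriv (fun s => φ s x) t ∧
    Px n φ t x = deriv (fun y => n t y) x * φ t x + n t x * deriv (fun y => φ t y) x := by
  obtain ⟨hn1, hn2, hn3⟩ := derivs_aux hn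
  obtain ⟨hp1, hp2, hp3⟩ := derivs_aux hφ
  have e3 : fderiv ℝ (fun p : ℝ × ℝ => n p.1 p.2) (t, x) (1, 1)
      = fderiv ℝ (fun p : ℝ × ℝ => n p.1 p.2) (t, x) (1, 0)
        + fderiv ℝ (fun p : ℝ × ℝ => n p.1 p.2) (t, x) (0, 1) := by
    rw [← map_add]; norm_num
  have f3 : fderiv ℝ (fun p : ℝ × ℝ => φ p.1 p.2) (t, x) (1, 1)
      = fderiv ℝ (fun p : ℝ × ℝ => φ p.1 p.2) (t, x) (1, 0)
        + fderiv ℝ (fun p : ℝ × ℝ => φ p.1 p.2) (t, x) (0, 1) := by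
    rw [← map_add]; norm_num
  have Ht := hn1.mul hp1
  have Hx := hn2.mul hp2
  have Hc := hn3.mul hp3
  have hPt : Pt n φ t x = _ := Ht.deriv
  have hPx : Px n φ t x = _ := Hx.deriv
  refine ⟨hPt ▸ Ht, hPx ▸ Hx, ?_, ?_, ?_⟩
  · have : Dg n φ t x = fderiv ℝ (fun p : ℝ × ℝ => n p.1 p.2) (t, x) (1, 1) * φ t x
        + n t x * fderiv ℝ (fun p : ℝ × ℝ => φ p.1 p.2) (t, x) (1, 1) := by
      rw [Dg, hPt, hPx, e3, f3]; ring
    rw [this]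
    have hx0 : x + (t - t) = x := by ring
    have Hc' : HasDerivAt (fun u => n u (u + (x - t)) * φ u (u + (x - t))) _ t := Hc
    convert Hc' using 2 <;> simp
  · rw [hPt, hn1.deriv, hp1.deriv]
  · rw [hPx, hn2.deriv, hp2.deriv]
/-- The pointwise differential inequality along characteristics. -/
private lemma Dg_bound {T : ℝ} {B d : ℝ → ℝ → ℝ} {μ : ℝ} {φ n : ℝ → ℝ → ℝ}
    (hφ : IsSubeig T B d μ φ)
    (hn0 : ∀ t x, 0 ≤ x → 0 ≤ n t x)
    (hndiff : ∀ t x, 0 ≤ x → DifferentiableAt ℝ (fun p : ℝ × ℝ => n p.1 p.2) (t, x))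
    (hpde : ∀ t x, 0 ≤ x →
      deriv (fun s => n s x) t + deriv (fun y => n t y) x + d t x * n t x = 0)
    {t x : ℝ} (hx : 0 ≤ x) :
    Dg n φ t x ≤ μ * (n t x * φ t x) - B t x * n t x * φ t 0 := by
  obtain ⟨hφpos, hφdiff, hφper, hφsub⟩ := hφ
  obtain ⟨_, _, _, hPt, hPx⟩ := prod_derivs (hndiff t x hx) (hφdiff t x hx)
  have hsub := hφsub t x hx
  have hpde' := hpde t x hx
  have hnn := hn0 t x hx
  have hmul : n t x * (deriv (fun s => φ s x) t + deriv (fun y => φ t y) x)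
      ≤ n t x * ((d t x + μ) * φ t x - B t x * φ t 0) := by
    apply mul_le_mul_of_nonneg_left _ hnn
    linarith
  have : Dg n φ t x = (deriv (fun s => n s x) t + deriv (fun y => n t y) x) * φ t x
      + n t x * (deriv (fun s => φ s x) t + deriv (fun y => φ t y) x) := by
    rw [Dg, hPt, hPx]; ring
  rw [this]
  have hd : (deriv (fun s => n s x) t + deriv (fun y => n t y) x) = - (d t x * n t x) := by
    linarith
  rw [hd]
  nlinarith [hmul]

section Meas
variable {n φ : ℝ → ℝ → ℝ}
    (hndiff : ∀ t x, 0 ≤ x → DifferentiableAt ℝ (fun p : ℝ × ℝ => n p.1 p.2) (t, x))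
    (hφdiff : ∀ t x, 0 ≤ x → DifferentiableAt ℝ (fun p : ℝ × ℝ => φ p.1 p.2) (t, x))
include hndiff hφdiff

private lemma Psic_continuous : Continuous (Psic n φ) := by
  rw [continuous_iff_continuousAt]
  intro p
  have hdiff : DifferentiableAt ℝ (fun p : ℝ × ℝ => n p.1 p.2 * φ p.1 p.2)
      (p.1, max p.2 0) :=
    (hndiff p.1 (max p.2 0) (le_max_right _ _)).mul (hφdiff p.1 (max p.2 0) (le_max_right _ _))
  have hmap : ContinuousAt (fun q : ℝ × ℝ => (q.1, max q.2 0)) p :=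
    (continuous_fst.prodMk (continuous_snd.max continuous_const)).continuousAt
  exact ContinuousAt.comp (g := fun q : ℝ × ℝ => n q.1 q.2 * φ q.1 q.2)
    (f := fun q : ℝ × ℝ => (q.1, max q.2 0)) hdiff.continuousAt hmap

private lemma DD_measurable : Measurable (DD n φ) := by
  have hΨc : Continuous (Psic n φ) := Psic_continuous hndiff hφdiff
  set q : ℕ → ℝ × ℝ → ℝ := fun k =>
    Set.indicator {p : ℝ × ℝ | 0 ≤ p.2} (fun p => ((k : ℝ) + 1) *
      (Psic n φ (p.1 + ((k : ℝ) + 1)⁻¹, p.2 + ((k : ℝ) + 1)⁻¹) - Psic n φ p)) with hq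
  have hmeas : ∀ k, Measurable (q k) := by
    intro k
    apply Measurable.indicator
    · apply Measurable.mul measurable_const
      apply Measurable.sub _ hΨc.measurable
      exact hΨc.measurable.comp
        ((measurable_fst.add_const _).prodMk (measurable_snd.add_const _))
    · exact measurableSet_le measurable_const measurable_snd
  apply measurable_of_tendsto_metrizable hmeas
  rw [tendsto_pi_nhds]
  intro p
  by_cases hp : (0 : ℝ) ≤ p.2
  · -- convergence of slopes to the derivative along the characteristic
    obtain ⟨_, _, hchar, _, _⟩ := prod_derivs (hndiff p.1 p.2 hp) (hφdiff p.1 p.2 hp)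
    set L : ℝ → ℝ := fun u => n u (u + (p.2 - p.1)) * φ u (u + (p.2 - p.1)) with hL
    have hDD : DD n φ p = Dg n φ p.1 p.2 := by simp [DD, hp]
    rw [hDD]
    have hS : Filter.Tendsto (fun k : ℕ => p.1 + ((k : ℝ) + 1)⁻¹) Filter.atTop
        (nhdsWithin p.1 {p.1}ᶜ) := by
      rw [tendsto_nhdsWithin_iff]
      constructor
      · have h0 : Filter.Tendsto (fun k : ℕ => ((k : ℝ) + 1)⁻¹) Filter.atTop (nhds 0) := by
          apply Filter.Tendsto.comp tendsto_inv_atTop_zero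
          exact Filter.tendsto_atTop_add_const_right _ _ tendsto_natCast_atTop_atTop
        simpa using (tendsto_const_nhds.add h0)
      · filter_upwards with k
        have : (0 : ℝ) < ((k : ℝ) + 1)⁻¹ := by positivity
        simp only [Set.mem_compl_iff, Set.mem_singleton_iff]
        intro h
        nlinarith [this]
    have hslope := (hasDerivAt_iff_tendsto_slope.mp hchar).comp hS
    apply hslope.congr
    intro k
    have hδ : (0 : ℝ) < ((k : ℝ) + 1)⁻¹ := by positivity
    have e1 : max (p.2 + ((k : ℝ) + 1)⁻¹) 0 = p.2 + ((k : ℝ) + 1)⁻¹ :=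
      max_eq_left (by positivity)
    have e2 : max p.2 0 = p.2 := max_eq_left hp
    have hqk : q k p = ((k : ℝ) + 1) *
        (Psic n φ (p.1 + ((k : ℝ) + 1)⁻¹, p.2 + ((k : ℝ) + 1)⁻¹) - Psic n φ p) :=
      Set.indicator_of_mem (show p ∈ {p : ℝ × ℝ | 0 ≤ p.2} from hp) _
    rw [hqk]
    have hLv : L (p.1 + ((k : ℝ) + 1)⁻¹)
        = Psic n φ (p.1 + ((k : ℝ) + 1)⁻¹, p.2 + ((k : ℝ) + 1)⁻¹) := by
      simp only [L, Psic, e1]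
      ring_nf
    have hLp : L p.1 = Psic n φ p := by simp only [L, Psic, e2]; ring_nf
    show slope L p.1 (p.1 + ((k : ℝ) + 1)⁻¹) = _
    rw [slope_def_field, hLv, hLp]
    have e3 : p.1 + ((k : ℝ) + 1)⁻¹ - p.1 = ((k : ℝ) + 1)⁻¹ := by ring
    rw [e3, div_inv_eq_mul]
    ring
  · have hDD : DD n φ p = 0 := by simp [DD, hp]
    rw [hDD]
    apply Filter.Tendsto.congr (f₁ := fun _ => (0:ℝ))
    · intro k
      exact (Set.indicator_of_notMem (show p ∉ {p : ℝ × ℝ | 0 ≤ p.2} from hp) _).symm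
    · exact tendsto_const_nhds
end Meas

section Good
variable {T : ℝ} {B d : ℝ → ℝ → ℝ} {μ : ℝ} {φ n : ℝ → ℝ → ℝ}

/-- `Dg ≤ |μ| · nφ` on `x ≥ 0`. -/
private lemma Dg_le_abs (hφ : IsSubeig T B d μ φ)
    (hB : ∀ t x, 0 ≤ x → 0 ≤ B t x)
    (hn0 : ∀ t x, 0 ≤ x → 0 ≤ n t x)
    (hndiff : ∀ t x, 0 ≤ x → DifferentiableAt ℝ (fun p : ℝ × ℝ => n p.1 p.2) (t, x))
    (hpde : ∀ t x, 0 ≤ x →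
      deriv (fun s => n s x) t + deriv (fun y => n t y) x + d t x * n t x = 0)
    {t x : ℝ} (hx : 0 ≤ x) :
    Dg n φ t x ≤ |μ| * (n t x * φ t x) := by
  have h1 := Dg_bound (t := t) (x := x) hφ hn0 hndiff hpde hx
  have h2 : 0 ≤ B t x * n t x * φ t 0 :=
    mul_nonneg (mul_nonneg (hB t x hx) (hn0 t x hx)) (hφ.1 t 0 le_rfl).le
  have h3 : 0 ≤ n t x * φ t x := mul_nonneg (hn0 t x hx) (hφ.1 t x hx).le
  have h4 : μ * (n t x * φ t x) ≤ |μ| * (n t x * φ t x) :=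
    mul_le_mul_of_nonneg_right (le_abs_self μ) h3
  linarith

/-- At a "good" time `t`, the derivative of the weighted mass is at most `μ F t`. -/
private lemma good_time_bound (hφ : IsSubeig T B d μ φ)
    (hB : ∀ t x, 0 ≤ x → 0 ≤ B t x)
    (hn0 : ∀ t x, 0 ≤ x → 0 ≤ n t x)
    (hndiff : ∀ t x, 0 ≤ x → DifferentiableAt ℝ (fun p : ℝ × ℝ => n p.1 p.2) (t, x))
    (hpde : ∀ t x, 0 ≤ x →
      deriv (fun s => n s x) t + deriv (fun y => n t y) x + d t x * n t x = 0)
    (hbc : ∀ t, n t 0 = ∫ x in Set.Ioi (0 : ℝ), B t x * n t x)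
    (hint₁ : ∀ t, IntegrableOn (fun x => n t x * φ t x) (Set.Ioi (0 : ℝ)))
    (hint₂ : ∀ t, IntegrableOn
      (fun x => deriv (fun y => n t y * φ t y) x) (Set.Ioi (0 : ℝ)))
    (hint₃ : ∀ t, IntegrableOn (fun x => B t x * n t x) (Set.Ioi (0 : ℝ)))
    (hlim : ∀ t, Filter.Tendsto (fun x => n t x * φ t x) Filter.atTop (nhds 0))
    {t : ℝ} (hgood : (∫⁻ x in Set.Ioi (0:ℝ), ENNReal.ofReal (-(DD n φ (t, x)))) < ⊤) :
    (∫ x in Set.Ioi (0:ℝ), Pt n φ t x) ≤ μ * ∫ x in Set.Ioi (0:ℝ), n t x * φ t x := by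
  have hφdiff := hφ.2.1
  have hDDm : Measurable (fun x => DD n φ (t, x)) :=
    (DD_measurable hndiff hφdiff).comp (measurable_const.prodMk measurable_id)
  -- integrability of x ↦ DD (t, x) on (0, ∞)
  have habs : IntegrableOn (fun x => DD n φ (t, x)) (Set.Ioi (0:ℝ)) := by
    refine ⟨hDDm.aestronglyMeasurable, ?_⟩
    show (∫⁻ x, (‖DD n φ (t, x)‖₊ : ENNReal) ∂(volume.restrict (Set.Ioi (0:ℝ)))) < ⊤
    have hb : ∀ᵐ x ∂(volume.restrict (Set.Ioi (0:ℝ))),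
        (‖DD n φ (t, x)‖₊ : ENNReal)
          ≤ ENNReal.ofReal (|μ| * (n t x * φ t x)) + ENNReal.ofReal (-(DD n φ (t, x))) := by
      rw [ae_restrict_iff' measurableSet_Ioi]
      filter_upwards with x hx
      have hx0 : (0:ℝ) ≤ x := le_of_lt hx
      have hDg : DD n φ (t, x) = Dg n φ t x := if_pos hx0
      have h1 : Dg n φ t x ≤ |μ| * (n t x * φ t x) :=
        Dg_le_abs (t := t) (x := x) hφ hB hn0 hndiff hpde hx0
      have h2 : (0:ℝ) ≤ |μ| * (n t x * φ t x) :=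
        mul_nonneg (abs_nonneg μ) (mul_nonneg (hn0 t x hx0) ((hφ.1 t x hx0)).le)
      rw [hDg]
      have habs' : |Dg n φ t x| ≤ |μ| * (n t x * φ t x) + max (-(Dg n φ t x)) 0 := by
        rcases le_total 0 (Dg n φ t x) with h | h
        · rw [abs_of_nonneg h]
          have : max (-(Dg n φ t x)) 0 = 0 := max_eq_right (by linarith)
          linarith
        · rw [abs_of_nonpos h]
          have : max (-(Dg n φ t x)) 0 = -(Dg n φ t x) := max_eq_left (by linarith)
          linarith
      calc (‖Dg n φ t x‖₊ : ENNReal) = ENNReal.ofReal |Dg n φ t x| :=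
            Real.enorm_eq_ofReal_abs _
        _ ≤ ENNReal.ofReal (|μ| * (n t x * φ t x) + max (-(Dg n φ t x)) 0) :=
            ENNReal.ofReal_le_ofReal habs'
        _ ≤ ENNReal.ofReal (|μ| * (n t x * φ t x)) + ENNReal.ofReal (max (-(Dg n φ t x)) 0) :=
            ENNReal.ofReal_add_le
        _ = ENNReal.ofReal (|μ| * (n t x * φ t x)) + ENNReal.ofReal (-(Dg n φ t x)) := by
            rcases le_total (-(Dg n φ t x)) 0 with h | h
            · simp [max_eq_right h, ENNReal.ofReal_of_nonpos h]
            · rw [max_eq_left h]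
    calc (∫⁻ x, (‖DD n φ (t, x)‖₊ : ENNReal) ∂(volume.restrict (Set.Ioi (0:ℝ))))
        ≤ ∫⁻ x, (ENNReal.ofReal (|μ| * (n t x * φ t x))
            + ENNReal.ofReal (-(DD n φ (t, x)))) ∂(volume.restrict (Set.Ioi (0:ℝ))) :=
          lintegral_mono_ae hb
      _ = (∫⁻ x in Set.Ioi (0:ℝ), ENNReal.ofReal (|μ| * (n t x * φ t x)))
            + ∫⁻ x in Set.Ioi (0:ℝ), ENNReal.ofReal (-(DD n φ (t, x))) := by
          apply lintegral_add_right
          exact (hDDm.neg).ennreal_ofReal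
      _ < ⊤ := by
          apply ENNReal.add_lt_top.2
          refine ⟨?_, hgood⟩
          have h5 : Integrable (fun x => |μ| * (n t x * φ t x))
              (volume.restrict (Set.Ioi (0:ℝ))) := (hint₁ t).const_mul _
          calc (∫⁻ x in Set.Ioi (0:ℝ), ENNReal.ofReal (|μ| * (n t x * φ t x)))
              ≤ ∫⁻ x in Set.Ioi (0:ℝ), (‖|μ| * (n t x * φ t x)‖₊ : ENNReal) :=
                lintegral_ofReal_le_lintegral_enorm _
            _ < ⊤ := h5.2
  -- integrability of Pt
  have hPtInt : IntegrableOn (fun x => Pt n φ t x) (Set.Ioi (0:ℝ)) := by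
    apply IntegrableOn.congr_fun (habs.sub (hint₂ t)) _ measurableSet_Ioi
    intro x hx
    have hx0 : (0:ℝ) ≤ x := le_of_lt hx
    obtain ⟨_, _, _, _, _⟩ := prod_derivs (hndiff t x hx0) (hφ.2.1 t x hx0)
    have hDg : DD n φ (t, x) = Dg n φ t x := if_pos hx0
    show DD n φ (t, x) - deriv (fun y => n t y * φ t y) x = Pt n φ t x
    rw [hDg, Dg]
    show Pt n φ t x + Px n φ t x - Px n φ t x = Pt n φ t x
    ring
  -- FTC on the half line
  have hFTC : (∫ x in Set.Ioi (0:ℝ), Px n φ t x) = 0 - n t 0 * φ t 0 := by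
    apply integral_Ioi_of_hasDerivAt_of_tendsto (f := fun y => n t y * φ t y)
    · have hdiff : DifferentiableAt ℝ (fun p : ℝ × ℝ => n p.1 p.2 * φ p.1 p.2) (t, 0) :=
        (hndiff t 0 le_rfl).mul (hφ.2.1 t 0 le_rfl)
      have : ContinuousAt (fun y => n t y * φ t y) 0 := by
        exact ContinuousAt.comp (g := fun p : ℝ × ℝ => n p.1 p.2 * φ p.1 p.2)
          (f := fun y : ℝ => (t, y)) hdiff.continuousAt
          (continuous_const.prodMk continuous_id).continuousAt
      exact this.continuousWithinAt
    · intro x hx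
      exact (prod_derivs (hndiff t x (le_of_lt hx)) (hφ.2.1 t x (le_of_lt hx))).2.1
    · exact hint₂ t
    · exact hlim t
  -- monotonicity step
  have hRHSint : IntegrableOn
      (fun x => μ * (n t x * φ t x) - B t x * n t x * φ t 0) (Set.Ioi (0:ℝ)) := by
    exact Integrable.sub ((hint₁ t).const_mul μ) ((hint₃ t).mul_const (φ t 0))
  have hmono : (∫ x in Set.Ioi (0:ℝ), DD n φ (t, x))
      ≤ ∫ x in Set.Ioi (0:ℝ), (μ * (n t x * φ t x) - B t x * n t x * φ t 0) := by
    apply setIntegral_mono_on habs hRHSint measurableSet_Ioi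
    intro x hx
    have hx0 : (0:ℝ) ≤ x := le_of_lt hx
    have := Dg_bound (t := t) (x := x) hφ hn0 hndiff hpde hx0
    simpa [DD, hx0] using this
  have hval : (∫ x in Set.Ioi (0:ℝ), (μ * (n t x * φ t x) - B t x * n t x * φ t 0))
      = μ * (∫ x in Set.Ioi (0:ℝ), n t x * φ t x) - n t 0 * φ t 0 := by
    rw [integral_sub ((hint₁ t).const_mul μ) ((hint₃ t).mul_const (φ t 0))]
    rw [integral_const_mul]
    congr 1
    rw [integral_mul_const, ← hbc t]
  -- put everything together
  have hsplit : (∫ x in Set.Ioi (0:ℝ), Pt n φ t x)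
      = (∫ x in Set.Ioi (0:ℝ), DD n φ (t, x)) - ∫ x in Set.Ioi (0:ℝ), Px n φ t x := by
    have e : (∫ x in Set.Ioi (0:ℝ), Px n φ t x)
        = ∫ x in Set.Ioi (0:ℝ), deriv (fun y => n t y * φ t y) x := rfl
    rw [e, ← integral_sub habs (hint₂ t)]
    apply setIntegral_congr_fun measurableSet_Ioi
    intro x hx
    have hx0 : (0:ℝ) ≤ x := le_of_lt hx
    show Pt n φ t x = DD n φ (t, x) - deriv (fun y => n t y * φ t y) x
    have hDg : DD n φ (t, x) = Dg n φ t x := if_pos hx0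
    rw [hDg, Dg]
    show Pt n φ t x = Pt n φ t x + Px n φ t x - Px n φ t x
    ring
  rw [hsplit, hFTC]
  linarith [hmono, hval]
end Good

private lemma ofReal_iSup_min (r : ℝ) :
    (⨆ M : ℕ, ENNReal.ofReal (min r (M : ℝ))) = ENNReal.ofReal r := by
  apply le_antisymm
  · exact iSup_le fun M => ENNReal.ofReal_le_ofReal (min_le_left _ _)
  · refine le_trans (le_of_eq ?_) (le_iSup (fun M : ℕ => ENNReal.ofReal (min r (M:ℝ))) ⌈r⌉₊)
    rw [min_eq_left (Nat.le_ceil r)]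

section PerChar
variable {T : ℝ} {B d : ℝ → ℝ → ℝ} {μ : ℝ} {φ n : ℝ → ℝ → ℝ}

private lemma perchar (hφ : IsSubeig T B d μ φ)
    (hB : ∀ t x, 0 ≤ x → 0 ≤ B t x)
    (hn0 : ∀ t x, 0 ≤ x → 0 ≤ n t x)
    (hndiff : ∀ t x, 0 ≤ x → DifferentiableAt ℝ (fun p : ℝ × ℝ => n p.1 p.2) (t, x))
    (hpde : ∀ t x, 0 ≤ x →
      deriv (fun s => n s x) t + deriv (fun y => n t y) x + d t x * n t x = 0)
    {t₀ : ℝ} (ht₀ : 0 < t₀) (c : ℝ) :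
    (∫⁻ u in Set.Icc (max 0 (-c)) t₀, ENNReal.ofReal (-(DD n φ (u, u + c))))
      ≤ ENNReal.ofReal ((|μ| * t₀ * Real.exp (|μ| * t₀) + 1) * Psic n φ (max 0 (-c), max 0 (-c) + c)) := by
  have hφdiff := hφ.2.1
  set a : ℝ := max 0 (-c) with ha_def
  rcases le_or_gt a t₀ with ha | ha
  swap
  · rw [Set.Icc_eq_empty (not_le.mpr ha)]
    simp
  have ha0 : 0 ≤ a := le_max_left _ _
  have hac : 0 ≤ a + c := by
    have : -c ≤ a := le_max_right _ _
    linarith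
  -- the function along the characteristic
  set ℓ : ℝ → ℝ := fun u => Psic n φ (u, u + c) with hℓ_def
  have hℓcont : Continuous ℓ :=
    (Psic_continuous hndiff hφdiff).comp (continuous_id.prodMk (continuous_add_right c))
  have hℓ0 : ∀ u, 0 ≤ ℓ u := fun u =>
    mul_nonneg (hn0 _ _ (le_max_right _ _)) (hφ.1 _ _ (le_max_right _ _)).le
  have hℓa : ℓ a = n a (a + c) * φ a (a + c) := by
    simp only [ℓ, Psic, max_eq_left hac]
  -- derivative of ℓ off the boundary
  have hℓd : ∀ u, a < u → HasDerivAt ℓ (DD n φ (u, u + c)) u := by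
    intro u hu
    have hx : 0 < u + c := by
      have : -c ≤ a := le_max_right _ _
      linarith
    obtain ⟨_, _, hchar, _, _⟩ := prod_derivs (hndiff u (u + c) hx.le) (hφdiff u (u + c) hx.le)
    have hfun : (fun v => n v (v + (u + c - u)) * φ v (v + (u + c - u)))
        = fun v => n v (v + c) * φ v (v + c) := by
      have : u + c - u = c := by ring
      rw [this]
    rw [hfun] at hchar
    have hDD : DD n φ (u, u + c) = Dg n φ u (u + c) := if_pos hx.le
    rw [hDD]
    apply hchar.congr_of_eventuallyEq
    have hev : ∀ᶠ v in nhds u, 0 < v + c := by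
      have htend : Filter.Tendsto (fun v : ℝ => v + c) (nhds u) (nhds (u + c)) :=
        (continuous_add_right c).continuousAt
      exact htend.eventually (eventually_gt_nhds hx)
    filter_upwards [hev] with v hv
    simp only [ℓ, Psic, max_eq_left hv.le]
  -- the growth bound along the characteristic
  have hDle : ∀ u, a < u → DD n φ (u, u + c) ≤ |μ| * ℓ u := by
    intro u hu
    have hx : 0 < u + c := by
      have : -c ≤ a := le_max_right _ _
      linarith
    have h1 : DD n φ (u, u + c) = Dg n φ u (u + c) := if_pos hx.le
    have h2 := Dg_le_abs (t := u) (x := u + c) hφ hB hn0 hndiff hpde hx.le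
    have h3 : ℓ u = n u (u + c) * φ u (u + c) := by
      simp only [ℓ, Psic, max_eq_left hx.le]
    rw [h1, h3]; exact h2
  -- exp(-|μ|u) ℓ u is antitone on [a, t₀]
  have hanti : AntitoneOn (fun u => Real.exp (-|μ| * u) * ℓ u) (Set.Icc a t₀) := by
    apply antitoneOn_of_deriv_nonpos (convex_Icc a t₀)
    · exact ((Real.continuous_exp.comp (continuous_const.mul continuous_id)).mul hℓcont).continuousOn
    · intro u hu
      rw [interior_Icc] at hu
      exact ((((hasDerivAt_id' (x:=u)).const_mul (-|μ|)).exp.mul (hℓd u hu.1)).differentiableAt).differentiableWithinAt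
    · intro u hu
      rw [interior_Icc] at hu
      have hder : HasDerivAt (fun u => Real.exp (-|μ| * u) * ℓ u) _ u := (((hasDerivAt_id' (x:=u)).const_mul (-|μ|)).exp.mul (hℓd u hu.1))
      rw [hder.deriv]
      have he : (0:ℝ) < Real.exp (-|μ| * u) := Real.exp_pos _
      have hb := hDle u hu.1
      have h0 := hℓ0 u
      nlinarith [mul_le_mul_of_nonneg_left hb he.le]
  -- pointwise bound ℓ u ≤ K on [a, t₀]
  set K : ℝ := Real.exp (|μ| * t₀) * ℓ a with hK_def
  have hK0 : 0 ≤ K := mul_nonneg (Real.exp_pos _).le (hℓ0 a)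
  have hℓle : ∀ u ∈ Set.Icc a t₀, ℓ u ≤ K := by
    intro u hu
    have h1 : Real.exp (-|μ| * u) * ℓ u ≤ Real.exp (-|μ| * a) * ℓ a :=
      hanti (Set.left_mem_Icc.2 ha) hu hu.1
    have hee : Real.exp (|μ| * u) * Real.exp (-|μ| * u) = 1 := by
      rw [← Real.exp_add]
      have h9 : |μ| * u + -|μ| * u = 0 := by ring
      rw [h9, Real.exp_zero]
    have h2 : ℓ u = Real.exp (|μ| * u) * (Real.exp (-|μ| * u) * ℓ u) := by
      rw [← mul_assoc, hee, one_mul]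
    rw [h2]
    calc Real.exp (|μ| * u) * (Real.exp (-|μ| * u) * ℓ u)
        ≤ Real.exp (|μ| * u) * (Real.exp (-|μ| * a) * ℓ a) :=
          mul_le_mul_of_nonneg_left h1 (Real.exp_pos _).le
      _ = Real.exp (|μ| * u + -|μ| * a) * ℓ a := by rw [← mul_assoc, ← Real.exp_add]
      _ ≤ Real.exp (|μ| * t₀) * ℓ a := by
          apply mul_le_mul_of_nonneg_right _ (hℓ0 a)
          apply Real.exp_le_exp.2
          have h3 : u - a ≤ t₀ := by
            have := hu.2
            linarith
          nlinarith [abs_nonneg μ, hu.1, hu.2, ha0]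
  -- the comparison function h u = cap * u - ℓ u
  set cap : ℝ := |μ| * K with hcap_def
  have hcap0 : 0 ≤ cap := mul_nonneg (abs_nonneg μ) hK0
  set h : ℝ → ℝ := fun u => cap * u - ℓ u with hh_def
  have hhd : ∀ u ∈ Set.Ioo a t₀, HasDerivAt h (cap - DD n φ (u, u + c)) u := by
    intro u hu
    have hh : HasDerivAt (fun y => cap * y - ℓ y) _ u := ((hasDerivAt_id' (x := u)).const_mul cap).sub (hℓd u hu.1)
    rw [mul_one] at hh; exact hh
  have hq0 : ∀ u ∈ Set.Ioo a t₀, 0 ≤ cap - DD n φ (u, u + c) := by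
    intro u hu
    have h1 := hDle u hu.1
    have h2 : |μ| * ℓ u ≤ |μ| * K :=
      mul_le_mul_of_nonneg_left (hℓle u (Set.Ioo_subset_Icc_self hu)) (abs_nonneg μ)
    rw [hcap_def]; linarith
  have hqm : Measurable (fun u => cap - DD n φ (u, u + c)) :=
    measurable_const.sub ((DD_measurable hndiff hφdiff).comp
      (measurable_id.prodMk (measurable_id.add_const c)))
  have haeIoo : ∀ᵐ u ∂(volume.restrict (Set.Icc a t₀)), u ∈ Set.Ioo a t₀ := by
    rw [ae_restrict_iff' measurableSet_Icc]
    have hnull : volume ({a, t₀} : Set ℝ) = 0 := (Set.Finite.insert a (Set.finite_singleton t₀)).measure_zero _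
    rw [ae_iff]
    apply measure_mono_null _ hnull
    intro u hu
    simp only [Set.mem_setOf_eq] at hu
    push_neg at hu
    obtain ⟨⟨h1, h2⟩, h3⟩ := hu
    simp only [Set.mem_insert_iff, Set.mem_singleton_iff]
    by_contra hne
    push_neg at hne
    exact h3 ⟨lt_of_le_of_ne h1 (Ne.symm hne.1), lt_of_le_of_ne h2 hne.2⟩
  have hφMint : ∀ M : ℕ, IntegrableOn
      (fun u => min (cap - DD n φ (u, u + c)) (M : ℝ)) (Set.Icc a t₀) := by
    intro M
    rw [integrableOn_Icc_iff_integrableOn_Ioo]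
    refine ⟨(hqm.min measurable_const).aestronglyMeasurable.restrict, ?_⟩
    apply HasFiniteIntegral.of_bounded (C := (M : ℝ))
    rw [ae_restrict_iff' measurableSet_Ioo]
    filter_upwards with u hu
    rw [Real.norm_eq_abs, abs_le]
    constructor
    · have hmin : (0:ℝ) ≤ min (cap - DD n φ (u, u + c)) (M:ℝ) :=
        le_min (hq0 u hu) (Nat.cast_nonneg M)
      linarith [Nat.cast_nonneg (α := ℝ) M]
    · exact min_le_right _ _
  have hMbound : ∀ M : ℕ,
      (∫ u in Set.Icc a t₀, min (cap - DD n φ (u, u + c)) (M : ℝ)) ≤ cap * t₀ + ℓ a := by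
    intro M
    have hineq : (∫ u in a..t₀, min (cap - DD n φ (u, u + c)) (M : ℝ)) ≤ h t₀ - h a := by
      apply intervalIntegral.integral_le_sub_of_hasDeriv_right_of_le ha
      · exact ((continuous_const.mul continuous_id).sub hℓcont).continuousOn
      · intro u hu
        exact (hhd u hu).hasDerivWithinAt
      · exact hφMint M
      · intro u hu
        exact min_le_left _ _
    have heq : (∫ u in Set.Icc a t₀, min (cap - DD n φ (u, u + c)) (M : ℝ))
        = ∫ u in a..t₀, min (cap - DD n φ (u, u + c)) (M : ℝ) := by
      rw [intervalIntegral.integral_of_le ha, integral_Icc_eq_integral_Ioc]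
    rw [heq]
    have hha : h t₀ - h a = cap * t₀ - cap * a - ℓ t₀ + ℓ a := by rw [hh_def]; ring
    have hl0 := hℓ0 t₀
    have hcapa : 0 ≤ cap * a := mul_nonneg hcap0 ha0
    linarith
  calc (∫⁻ u in Set.Icc a t₀, ENNReal.ofReal (-(DD n φ (u, u + c))))
      ≤ ∫⁻ u in Set.Icc a t₀, ENNReal.ofReal (cap - DD n φ (u, u + c)) := by
        apply lintegral_mono
        intro u
        apply ENNReal.ofReal_le_ofReal
        linarith [hcap0]
    _ = ∫⁻ u in Set.Icc a t₀, ⨆ M : ℕ, ENNReal.ofReal (min (cap - DD n φ (u, u + c)) (M : ℝ)) := by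
        apply lintegral_congr
        intro u
        rw [ofReal_iSup_min]
    _ = ⨆ M : ℕ, ∫⁻ u in Set.Icc a t₀, ENNReal.ofReal (min (cap - DD n φ (u, u + c)) (M : ℝ)) := by
        apply lintegral_iSup
        · intro M
          exact (hqm.min measurable_const).ennreal_ofReal
        · intro M N hMN u
          apply ENNReal.ofReal_le_ofReal
          exact min_le_min le_rfl (Nat.cast_le.2 hMN)
    _ ≤ ENNReal.ofReal (cap * t₀ + ℓ a) := by
        apply iSup_le
        intro M
        have h0 : 0 ≤ᵐ[volume.restrict (Set.Icc a t₀)]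
            (fun u => min (cap - DD n φ (u, u + c)) (M : ℝ)) :=
          haeIoo.mono fun u hu => le_min (hq0 u hu) (Nat.cast_nonneg M)
        rw [← ofReal_integral_eq_lintegral_ofReal (hφMint M) h0]
        exact ENNReal.ofReal_le_ofReal (hMbound M)
    _ = ENNReal.ofReal ((|μ| * t₀ * Real.exp (|μ| * t₀) + 1) * Psic n φ (a, a + c)) := by
        congr 1
        have hPa : Psic n φ (a, a + c) = ℓ a := rfl
        rw [hPa, hcap_def, hK_def]
        ring
end PerChar

section Slab
variable {T : ℝ} {B d : ℝ → ℝ → ℝ} {μ : ℝ} {φ n : ℝ → ℝ → ℝ}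

private lemma slab (hφ : IsSubeig T B d μ φ)
    (hB : ∀ t x, 0 ≤ x → 0 ≤ B t x)
    (hn0 : ∀ t x, 0 ≤ x → 0 ≤ n t x)
    (hndiff : ∀ t x, 0 ≤ x → DifferentiableAt ℝ (fun p : ℝ × ℝ => n p.1 p.2) (t, x))
    (hpde : ∀ t x, 0 ≤ x →
      deriv (fun s => n s x) t + deriv (fun y => n t y) x + d t x * n t x = 0)
    (hint₁ : ∀ t, IntegrableOn (fun x => n t x * φ t x) (Set.Ioi (0 : ℝ)))
    {t₀ : ℝ} (ht₀ : 0 < t₀) :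
    ∀ᵐ t, t ∈ Set.Icc (0:ℝ) t₀ →
      (∫⁻ x in Set.Ioi (0:ℝ), ENNReal.ofReal (-(DD n φ (t, x)))) < ⊤ := by
  have hφdiff := hφ.2.1
  have hDDm := DD_measurable hndiff hφdiff
  set Jf : ℝ × ℝ → ENNReal := fun p => ENNReal.ofReal (-(DD n φ p)) with hJf_def
  have hJm : Measurable Jf := hDDm.neg.ennreal_ofReal
  set g' : ℝ → ENNReal := fun t => ∫⁻ x in Set.Ioi (0:ℝ), Jf (t, x) with hg'_def
  have hg'm : Measurable g' := by
    have h1 : ∀ t, g' t = ∫⁻ x, (if x ∈ Set.Ioi (0:ℝ) then Jf (t, x) else 0) := by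
      intro t
      show (∫⁻ x in Set.Ioi (0:ℝ), Jf (t, x)) = _
      rw [← lintegral_indicator measurableSet_Ioi]
      apply lintegral_congr
      intro x
      rw [Set.indicator_apply]
    have h2 : Measurable fun p : ℝ × ℝ => (if p.2 ∈ Set.Ioi (0:ℝ) then Jf p else 0) := by
      apply Measurable.ite _ hJm measurable_const
      exact measurable_snd measurableSet_Ioi
    have h3 : Measurable fun t : ℝ => ∫⁻ x, (if x ∈ Set.Ioi (0:ℝ) then Jf (t, x) else 0) :=
      h2.lintegral_prod_right'
    simp only [funext h1]
    exact h3
  set C₁ : ℝ := |μ| * t₀ * Real.exp (|μ| * t₀) + 1 with hC₁_def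
  have hC₁0 : 0 ≤ C₁ := by positivity
  set W : ℝ → ENNReal := fun c =>
    if -t₀ ≤ c then ENNReal.ofReal (C₁ * Psic n φ (max 0 (-c), max 0 (-c) + c)) else 0
    with hW_def
  have hind_ne : ∀ t : ℝ, (Set.Icc (0:ℝ) t₀).indicator (fun _ => (1:ENNReal)) t ≠ ⊤ := by
    intro t
    by_cases ht : t ∈ Set.Icc (0:ℝ) t₀ <;> simp [Set.indicator_apply, ht]
  have key : (∫⁻ t, (Set.Icc (0:ℝ) t₀).indicator g' t) < ⊤ := by
    have step1 : ∀ t, g' t ≤ ∫⁻ c, Jf (t, c + t) := by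
      intro t
      calc g' t ≤ ∫⁻ x, Jf (t, x) := setLIntegral_le_lintegral _ _
        _ = ∫⁻ c, Jf (t, c + t) := (lintegral_add_right_eq_self (fun x => Jf (t, x)) t).symm
    have step2 : (∫⁻ t, (Set.Icc (0:ℝ) t₀).indicator g' t)
        ≤ ∫⁻ t, (Set.Icc (0:ℝ) t₀).indicator (fun _ => (1:ENNReal)) t * ∫⁻ c, Jf (t, c + t) := by
      apply lintegral_mono
      intro t
      by_cases ht : t ∈ Set.Icc (0:ℝ) t₀
      · simpa [Set.indicator_apply, ht] using step1 t
      · simp [Set.indicator_apply, ht]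
    have step3 : (∫⁻ t, (Set.Icc (0:ℝ) t₀).indicator (fun _ => (1:ENNReal)) t * ∫⁻ c, Jf (t, c + t))
        = ∫⁻ c, ∫⁻ t, (Set.Icc (0:ℝ) t₀).indicator (fun _ => (1:ENNReal)) t * Jf (t, c + t) := by
      rw [← lintegral_lintegral_swap]
      · apply lintegral_congr
        intro t
        exact (lintegral_const_mul' _ _ (hind_ne t)).symm
      · apply Measurable.aemeasurable
        apply Measurable.mul
        · exact ((measurable_indicator_const_iff 1).mpr measurableSet_Icc).comp measurable_fst
        · exact hJm.comp ((measurable_fst).prodMk (measurable_snd.add measurable_fst))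
    have step4 : ∀ c : ℝ,
        (∫⁻ t, (Set.Icc (0:ℝ) t₀).indicator (fun _ => (1:ENNReal)) t * Jf (t, c + t)) ≤ W c := by
      intro c
      by_cases hc : -t₀ ≤ c
      · have h1 : (∫⁻ t, (Set.Icc (0:ℝ) t₀).indicator (fun _ => (1:ENNReal)) t * Jf (t, c + t))
            = ∫⁻ t in Set.Icc (0:ℝ) t₀, Jf (t, c + t) := by
          rw [← lintegral_indicator measurableSet_Icc]
          apply lintegral_congr
          intro t
          by_cases ht : t ∈ Set.Icc (0:ℝ) t₀ <;> simp [Set.indicator_apply, ht]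
        rw [h1]
        simp only [hW_def]
        rw [if_pos hc]
        have h2 : (∫⁻ t in Set.Icc (0:ℝ) t₀, Jf (t, c + t))
            = ∫⁻ t in Set.Icc (0:ℝ) t₀,
                (Set.Icc (max 0 (-c)) t₀).indicator (fun t => Jf (t, c + t)) t := by
          apply setLIntegral_congr_fun_ae measurableSet_Icc
          filter_upwards with t ht
          by_cases hta : max 0 (-c) ≤ t
          · rw [Set.indicator_of_mem (Set.mem_Icc.mpr ⟨hta, ht.2⟩)]
          · push_neg at hta
            rw [Set.indicator_of_notMem (fun hmem => absurd hmem.1 (not_le.mpr hta))]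
            have htc : c + t < 0 := by
              rcases le_total 0 (-c) with h5 | h5
              · have h6 : max 0 (-c) = -c := max_eq_right h5
                rw [h6] at hta
                linarith
              · have h6 : max 0 (-c) = 0 := max_eq_left h5
                rw [h6] at hta
                linarith [ht.1]
            have h4 : DD n φ (t, c + t) = 0 := if_neg (not_le.mpr htc)
            rw [hJf_def]
            simp [h4]
        rw [h2]
        calc (∫⁻ t in Set.Icc (0:ℝ) t₀,
                (Set.Icc (max 0 (-c)) t₀).indicator (fun t => Jf (t, c + t)) t)
            ≤ ∫⁻ t, (Set.Icc (max 0 (-c)) t₀).indicator (fun t => Jf (t, c + t)) t :=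
              setLIntegral_le_lintegral _ _
          _ = ∫⁻ t in Set.Icc (max 0 (-c)) t₀, Jf (t, c + t) :=
              lintegral_indicator measurableSet_Icc _
          _ = ∫⁻ t in Set.Icc (max 0 (-c)) t₀, ENNReal.ofReal (-(DD n φ (t, t + c))) := by
              apply lintegral_congr
              intro t
              show ENNReal.ofReal (-(DD n φ (t, c + t))) = _
              rw [add_comm c t]
          _ ≤ ENNReal.ofReal (C₁ * Psic n φ (max 0 (-c), max 0 (-c) + c)) :=
              perchar hφ hB hn0 hndiff hpde ht₀ c
      · have h1 : ∀ t : ℝ,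
            (Set.Icc (0:ℝ) t₀).indicator (fun _ => (1:ENNReal)) t * Jf (t, c + t) = 0 := by
          intro t
          by_cases ht : t ∈ Set.Icc (0:ℝ) t₀
          · have htc : c + t < 0 := by
              push_neg at hc
              have h5 := ht.2
              linarith
            have hdd : DD n φ (t, c + t) = 0 := if_neg (not_le.mpr htc)
            rw [hJf_def]
            simp [hdd]
          · rw [Set.indicator_of_notMem ht, zero_mul]
        rw [lintegral_congr h1]
        simp
    calc (∫⁻ t, (Set.Icc (0:ℝ) t₀).indicator g' t)
        ≤ ∫⁻ c, ∫⁻ t, (Set.Icc (0:ℝ) t₀).indicator (fun _ => (1:ENNReal)) t * Jf (t, c + t) :=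
          le_trans step2 (le_of_eq step3)
      _ ≤ ∫⁻ c, W c := lintegral_mono step4
      _ < ⊤ := by
          have hW1 : (∫⁻ c, W c) = ∫⁻ c in Set.Ici (-t₀),
              ENNReal.ofReal (C₁ * Psic n φ (max 0 (-c), max 0 (-c) + c)) := by
            rw [← lintegral_indicator measurableSet_Ici]
            apply lintegral_congr
            intro c
            simp only [hW_def, Set.indicator_apply, Set.mem_Ici]
          rw [hW1]
          have hsplit : Set.Ici (-t₀) = Set.Ico (-t₀) 0 ∪ Set.Ici (0:ℝ) := by
            rw [Set.Ico_union_Ici_eq_Ici]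
            linarith
          have hdisj : Disjoint (Set.Ico (-t₀) (0:ℝ)) (Set.Ici (0:ℝ)) :=
            Set.disjoint_left.mpr fun c hcmem hcmem' => absurd hcmem' (not_le.mpr hcmem.2)
          rw [hsplit, lintegral_union measurableSet_Ici hdisj]
          apply ENNReal.add_lt_top.2
          constructor
          · -- piece on [-t₀, 0)
            have hcongr : (∫⁻ c in Set.Ico (-t₀) (0:ℝ),
                ENNReal.ofReal (C₁ * Psic n φ (max 0 (-c), max 0 (-c) + c)))
                = ∫⁻ c in Set.Ico (-t₀) (0:ℝ), ENNReal.ofReal (C₁ * (n (-c) 0 * φ (-c) 0)) := by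
              apply setLIntegral_congr_fun_ae measurableSet_Ico
              filter_upwards with c hc
              have h1 : max 0 (-c) = -c := max_eq_right (by linarith [hc.2])
              have h3 : (max 0 (-c), max 0 (-c) + c) = (-c, (0:ℝ)) := by
                rw [h1]; norm_num
              rw [h3]
              simp [Psic]
            rw [hcongr]
            have hcont2 : Continuous (fun c : ℝ => Psic n φ (-c, 0)) :=
              (Psic_continuous hndiff hφdiff).comp (continuous_neg.prodMk continuous_const)
            have he : (fun c : ℝ => Psic n φ (-c, 0)) = fun c => n (-c) 0 * φ (-c) 0 := by
              funext c
              simp [Psic]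
            have hcont : Continuous (fun c : ℝ => C₁ * (n (-c) 0 * φ (-c) 0)) := by
              rw [he] at hcont2
              exact continuous_const.mul hcont2
            have hIntc : IntegrableOn (fun c : ℝ => C₁ * (n (-c) 0 * φ (-c) 0))
                (Set.Ico (-t₀) 0) :=
              (hcont.integrableOn_Icc).mono_set Set.Ico_subset_Icc_self
            calc (∫⁻ c in Set.Ico (-t₀) (0:ℝ), ENNReal.ofReal (C₁ * (n (-c) 0 * φ (-c) 0)))
                ≤ ∫⁻ c in Set.Ico (-t₀) (0:ℝ), (‖C₁ * (n (-c) 0 * φ (-c) 0)‖₊ : ENNReal) :=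
                  lintegral_ofReal_le_lintegral_enorm _
              _ < ⊤ := hIntc.2
          · -- piece on [0, ∞)
            have hcongr : (∫⁻ c in Set.Ici (0:ℝ),
                ENNReal.ofReal (C₁ * Psic n φ (max 0 (-c), max 0 (-c) + c)))
                = ∫⁻ c in Set.Ici (0:ℝ), ENNReal.ofReal (C₁ * (n 0 c * φ 0 c)) := by
              apply setLIntegral_congr_fun_ae measurableSet_Ici
              filter_upwards with c hc
              have hc0 : (0:ℝ) ≤ c := hc
              have h1 : max 0 (-c) = 0 := max_eq_left (by linarith)
              have h3 : (max 0 (-c), max 0 (-c) + c) = ((0:ℝ), c) := by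
                rw [h1]; norm_num
              rw [h3]
              simp [Psic, max_eq_left hc0]
            rw [hcongr]
            have heq2 : (∫⁻ c in Set.Ici (0:ℝ), ENNReal.ofReal (C₁ * (n 0 c * φ 0 c)))
                = ∫⁻ c in Set.Ioi (0:ℝ), ENNReal.ofReal (C₁ * (n 0 c * φ 0 c)) :=
              setLIntegral_congr (Filter.EventuallyEq.symm Ioi_ae_eq_Ici)
            rw [heq2]
            have hIntc : IntegrableOn (fun c => C₁ * (n 0 c * φ 0 c)) (Set.Ioi (0:ℝ)) :=
              (hint₁ 0).const_mul C₁
            calc (∫⁻ c in Set.Ioi (0:ℝ), ENNReal.ofReal (C₁ * (n 0 c * φ 0 c)))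
                ≤ ∫⁻ c in Set.Ioi (0:ℝ), (‖C₁ * (n 0 c * φ 0 c)‖₊ : ENNReal) :=
                  lintegral_ofReal_le_lintegral_enorm _
              _ < ⊤ := hIntc.2
  have hind : Measurable ((Set.Icc (0:ℝ) t₀).indicator g') := hg'm.indicator measurableSet_Icc
  have hae := ae_lt_top hind key.ne
  filter_upwards [hae] with t ht hmem
  rw [Set.indicator_of_mem hmem] at ht
  exact ht
end Slab

private lemma slice_measurable {n φ : ℝ → ℝ → ℝ}
    (hndiff : ∀ t x, 0 ≤ x → DifferentiableAt ℝ (fun p : ℝ × ℝ => n p.1 p.2) (t, x))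
    (hφdiff : ∀ t x, 0 ≤ x → DifferentiableAt ℝ (fun p : ℝ × ℝ => φ p.1 p.2) (t, x)) :
    Measurable (fun t : ℝ => ∫⁻ x in Set.Ioi (0:ℝ), ENNReal.ofReal (-(DD n φ (t, x)))) := by
  have hJm : Measurable (fun p : ℝ × ℝ => ENNReal.ofReal (-(DD n φ p))) :=
    (DD_measurable hndiff hφdiff).neg.ennreal_ofReal
  have h1 : ∀ t : ℝ, (∫⁻ x in Set.Ioi (0:ℝ), ENNReal.ofReal (-(DD n φ (t, x))))
      = ∫⁻ x, (if x ∈ Set.Ioi (0:ℝ) then ENNReal.ofReal (-(DD n φ (t, x))) else 0) := by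
    intro t
    rw [← lintegral_indicator measurableSet_Ioi]
    apply lintegral_congr
    intro x
    rw [Set.indicator_apply]
  have h2 : Measurable fun p : ℝ × ℝ =>
      (if p.2 ∈ Set.Ioi (0:ℝ) then ENNReal.ofReal (-(DD n φ p)) else 0) := by
    apply Measurable.ite _ hJm measurable_const
    exact measurable_snd measurableSet_Ioi
  have h3 : Measurable fun t : ℝ =>
      ∫⁻ x, (if x ∈ Set.Ioi (0:ℝ) then ENNReal.ofReal (-(DD n φ (t, x))) else 0) :=
    h2.lintegral_prod_right'
  simp only [funext h1]
  exact h3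

/-- If `φ` is a positive `T`-periodic subeigenfunction for `(B, d, μ)` and `n`
is a nonnegative solution of the renewal equation
`∂ₜn + ∂ₓn + d n = 0`, `n(t,0) = ∫₀^∞ B(t,x) n(t,x) dx`, then (under the natural
integrability assumptions) every solution grows slower than `e^{μt}` in the
weighted space: `∫₀^∞ n(t,x) φ(t,x) dx ≤ e^{μt} ∫₀^∞ n(0,x) φ(0,x) dx` for `t ≥ 0`. -/
theorem weighted_mass_le_exp_growth
    (T : ℝ) (hT : 0 < T) (B d : ℝ → ℝ → ℝ)
    (hB : ∀ t x, 0 ≤ x → 0 ≤ B t x) (hd : ∀ t x, 0 ≤ x → 0 ≤ d t x)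
    (hBp : ∀ t x, 0 ≤ x → B (t + T) x = B t x)
    (hdp : ∀ t x, 0 ≤ x → d (t + T) x = d t x)
    (μ : ℝ) (φ : ℝ → ℝ → ℝ) (hφ : IsSubeig T B d μ φ)
    (n : ℝ → ℝ → ℝ)
    (hn0 : ∀ t x, 0 ≤ x → 0 ≤ n t x)
    (hndiff : ∀ t x, 0 ≤ x → DifferentiableAt ℝ (fun p : ℝ × ℝ => n p.1 p.2) (t, x))
    (hpde : ∀ t x, 0 ≤ x →
      deriv (fun s => n s x) t + deriv (fun y => n t y) x + d t x * n t x = 0)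
    (hbc : ∀ t, n t 0 = ∫ x in Set.Ioi (0 : ℝ), B t x * n t x)
    (hint₁ : ∀ t, IntegrableOn (fun x => n t x * φ t x) (Set.Ioi (0 : ℝ)))
    (hint₂ : ∀ t, IntegrableOn
      (fun x => deriv (fun y => n t y * φ t y) x) (Set.Ioi (0 : ℝ)))
    (hint₃ : ∀ t, IntegrableOn (fun x => B t x * n t x) (Set.Ioi (0 : ℝ)))
    (hint₄ : ∀ t, IntegrableOn (fun x => d t x * n t x * φ t x) (Set.Ioi (0 : ℝ)))
    (hlim : ∀ t, Filter.Tendsto (fun x => n t x * φ t x) Filter.atTop (nhds 0))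
    (hF : ∀ t, HasDerivAt (fun s => ∫ x in Set.Ioi (0 : ℝ), n s x * φ s x)
      (∫ x in Set.Ioi (0 : ℝ), deriv (fun s => n s x * φ s x) t) t) :
    ∀ t, 0 ≤ t →
      (∫ x in Set.Ioi (0 : ℝ), n t x * φ t x) ≤
        Real.exp (μ * t) * ∫ x in Set.Ioi (0 : ℝ), n 0 x * φ 0 x := by
  intro t₀ ht₀
  rcases ht₀.eq_or_lt with heq | ht₀'
  · subst heq
    simp
  set F : ℝ → ℝ := fun s => ∫ x in Set.Ioi (0:ℝ), n s x * φ s x with hF_def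
  have hFnn : ∀ s, 0 ≤ F s := fun s => setIntegral_nonneg measurableSet_Ioi
    (fun x hx => mul_nonneg (hn0 s x (le_of_lt hx)) (hφ.1 s x (le_of_lt hx)).le)
  have hFd : ∀ s, HasDerivAt F (∫ x in Set.Ioi (0:ℝ), Pt n φ s x) s := hF
  set G : ℝ → ℝ := fun s => Real.exp (-μ * s) * F s with hG_def
  have hGd : ∀ s, HasDerivAt G
      (Real.exp (-μ * s) * (-μ) * F s
        + Real.exp (-μ * s) * (∫ x in Set.Ioi (0:ℝ), Pt n φ s x)) s := by
    intro s
    have he : HasDerivAt (fun u : ℝ => Real.exp (-μ * u)) (Real.exp (-μ * s) * (-μ)) s := by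
      simpa [mul_comm] using ((hasDerivAt_id' (x := s)).const_mul (-μ)).exp
    exact he.mul (hFd s)
  -- the bad set
  set A : Set ℝ := {t | ¬ (∫⁻ x in Set.Ioi (0:ℝ), ENNReal.ofReal (-(DD n φ (t, x)))) < ⊤}
      ∩ Set.Icc 0 t₀ with hA_def
  have hAmeas : MeasurableSet A := by
    apply MeasurableSet.inter _ measurableSet_Icc
    have h1 : {t : ℝ | ¬ (∫⁻ x in Set.Ioi (0:ℝ), ENNReal.ofReal (-(DD n φ (t, x)))) < ⊤}
        = (fun t : ℝ => ∫⁻ x in Set.Ioi (0:ℝ), ENNReal.ofReal (-(DD n φ (t, x)))) ⁻¹' {⊤} := by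
      ext t
      simp [lt_top_iff_ne_top]
    rw [h1]
    exact slice_measurable hndiff hφ.2.1 (measurableSet_singleton ⊤)
  have hAnull : volume A = 0 := by
    have hs := slab hφ hB hn0 hndiff hpde hint₁ ht₀'
    rw [Filter.eventually_iff, mem_ae_iff] at hs
    apply measure_mono_null _ hs
    intro t ht
    simp only [Set.mem_compl_iff, Set.mem_setOf_eq]
    intro hcon
    exact ht.1 (hcon ht.2)
  set φind : ℝ → ℝ := A.indicator (fun s => |μ| * Real.exp (-μ * s) * F s) with hφind_def
  have hφind0 : φind =ᵐ[volume] 0 := by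
    have h1 : ∀ᵐ s, s ∉ A := by
      rw [Filter.eventually_iff, mem_ae_iff]
      have h2 : {s : ℝ | s ∉ A}ᶜ = A := by ext s; simp
      rw [h2]
      exact hAnull
    filter_upwards [h1] with s hs
    simp [hφind_def, Set.indicator_of_notMem hs]
  -- pointwise derivative bound
  have hbound : ∀ s ∈ Set.Ioo (0:ℝ) t₀,
      (Real.exp (-μ * s) * (-μ) * F s
        + Real.exp (-μ * s) * (∫ x in Set.Ioi (0:ℝ), Pt n φ s x)) ≤ φind s := by
    intro s hs
    by_cases hsA : s ∈ A
    · have hnint : ¬ IntegrableOn (fun x => Pt n φ s x) (Set.Ioi (0:ℝ)) := by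
        intro hcont
        apply hsA.1
        have hDDint : IntegrableOn (fun x => DD n φ (s, x)) (Set.Ioi (0:ℝ)) := by
          apply IntegrableOn.congr_fun (hcont.add (hint₂ s)) _ measurableSet_Ioi
          intro x hx
          show Pt n φ s x + deriv (fun y => n s y * φ s y) x = DD n φ (s, x)
          have h2 : DD n φ (s, x) = Dg n φ s x := if_pos (le_of_lt hx)
          rw [h2, Dg]
          rfl
        calc (∫⁻ x in Set.Ioi (0:ℝ), ENNReal.ofReal (-(DD n φ (s, x))))
            ≤ ∫⁻ x in Set.Ioi (0:ℝ), (‖DD n φ (s, x)‖₊ : ENNReal) := by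
              apply lintegral_mono
              intro x
              calc ENNReal.ofReal (-(DD n φ (s, x)))
                  ≤ ENNReal.ofReal |DD n φ (s, x)| :=
                    ENNReal.ofReal_le_ofReal (neg_le_abs _)
                _ = (‖DD n φ (s, x)‖₊ : ENNReal) := (Real.enorm_eq_ofReal_abs _).symm
          _ < ⊤ := hDDint.2
      have hzero : (∫ x in Set.Ioi (0:ℝ), Pt n φ s x) = 0 := integral_undef hnint
      rw [hzero, mul_zero, add_zero, hφind_def, Set.indicator_of_mem hsA]
      have h1 : 0 ≤ Real.exp (-μ * s) * F s := mul_nonneg (Real.exp_pos _).le (hFnn s)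
      nlinarith [neg_le_abs μ, mul_le_mul_of_nonneg_right (neg_le_abs μ) h1]
    · have hsIcc : s ∈ Set.Icc (0:ℝ) t₀ := ⟨hs.1.le, hs.2.le⟩
      have hgood : (∫⁻ x in Set.Ioi (0:ℝ), ENNReal.ofReal (-(DD n φ (s, x)))) < ⊤ := by
        by_contra hbad
        exact hsA ⟨hbad, hsIcc⟩
      have hGT := good_time_bound hφ hB hn0 hndiff hpde hbc hint₁ hint₂ hint₃ hlim hgood
      rw [hφind_def, Set.indicator_of_notMem hsA]
      have h1 : (0:ℝ) < Real.exp (-μ * s) := Real.exp_pos _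
      nlinarith [mul_le_mul_of_nonneg_left hGT h1.le]
  -- the FTC comparison
  have hmain : G t₀ - G 0 ≤ ∫ y in (0:ℝ)..t₀, φind y := by
    apply intervalIntegral.sub_le_integral_of_hasDeriv_right_of_le ht₀
    · intro s _
      exact (hGd s).continuousAt.continuousWithinAt
    · intro s hs
      exact (hGd s).hasDerivWithinAt
    · exact (integrable_zero _ _ _).congr (ae_restrict_of_ae hφind0.symm)
    · exact hbound
  have hzero2 : (∫ y in (0:ℝ)..t₀, φind y) = 0 := by
    rw [intervalIntegral.integral_of_le ht₀]
    rw [integral_congr_ae (ae_restrict_of_ae hφind0)]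
    simp
  rw [hzero2] at hmain
  have hG0 : G 0 = F 0 := by
    rw [hG_def]
    simp
  have h2 : Real.exp (-μ * t₀) * F t₀ ≤ F 0 := by
    have : G t₀ ≤ G 0 := by linarith
    rw [hG0] at this
    exact this
  have h4 : Real.exp (μ * t₀) * Real.exp (-μ * t₀) = 1 := by
    rw [← Real.exp_add]
    have h5 : μ * t₀ + -μ * t₀ = 0 := by ring
    rw [h5, Real.exp_zero]
  calc F t₀ = (Real.exp (μ * t₀) * Real.exp (-μ * t₀)) * F t₀ := by rw [h4, one_mul]
    _ = Real.exp (μ * t₀) * (Real.exp (-μ * t₀) * F t₀) := by ring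
    _ ≤ Real.exp (μ * t₀) * F 0 := mul_le_mul_of_nonneg_left h2 (Real.exp_pos _).le
end
end

section
/- Let T > 0, let B, d : ℝ × [0,∞) → ℝ be nonnegative and T-periodic in t, and let λ ∈ ℝ. Let φ : ℝ × [0,∞) → ℝ be everywhere positive, differentiable in both variables, T-periodic in t, satisfying the dual eigenvalue equation with equality: −∂_t φ(t,x) − ∂_x φ(t,x) + (d(t,x) + λ) φ(t,x) = B(t,x) φ(t,0) for all t ∈ ℝ, x ≥ 0. Let n : ℝ × [0,∞) → ℝ be nonnegative, differentiable in both variables, satisfying ∂_t n + ∂_x n + d n = 0 and n(t,0) = ∫₀^∞ B(t,x) n(t,x) dx. Assume for each t that x ↦ n(t,x)φ(t,x), x ↦ ∂_x(nφ)(t,x), x ↦ B(t,x)n(t,x) and x ↦ d(t,x)n(t,x)φ(t,x) are integrable on (0,∞), that n(t,x)φ(t,x) → 0 as x → ∞, and that F(t) = ∫₀^∞ n(t,x) φ(t,x) dx is differentiable with F′(t) = ∫₀^∞ ∂_t (n φ)(t,x) dx. Then solutions grow exactly like e^{λt} in the weighted space: for all t, ∫₀^∞ n(t,x) φ(t,x)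 dx = e^{λ t} ∫₀^∞ n(0,x) φ(0,x) dx. -/
open MeasureTheory Real

noncomputable section

/-- If `φ` is a positive `T`-periodic dual Floquet eigenfunction, i.e. it
satisfies with equality `-∂ₜφ - ∂ₓφ + (d + λ) φ = B(t,x) φ(t,0)`, and `n` is a
nonnegative solution of the renewal equation `∂ₜn + ∂ₓn + d n = 0`,
`n(t,0) = ∫₀^∞ B(t,x) n(t,x) dx`, then (under the natural integrability
assumptions) the solution grows exactly like `e^{λt}` in the weighted space:
`∫₀^∞ n(t,x) φ(t,x) dx = e^{λt} ∫₀^∞ n(0,x) φ(0,x) dx` for all `t`. -/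
theorem weighted_mass_eq_exp_growth
    (T : ℝ) (hT : 0 < T) (B d : ℝ → ℝ → ℝ) (lam : ℝ)
    (hB : ∀ t x, 0 ≤ x → 0 ≤ B t x) (hd : ∀ t x, 0 ≤ x → 0 ≤ d t x)
    (hBp : ∀ t x, 0 ≤ x → B (t + T) x = B t x)
    (hdp : ∀ t x, 0 ≤ x → d (t + T) x = d t x)
    (φ : ℝ → ℝ → ℝ)
    (hφpos : ∀ t x, 0 ≤ x → 0 < φ t x)
    (hφdiff : ∀ t x, 0 ≤ x → DifferentiableAt ℝ (fun p : ℝ × ℝ => φ p.1 p.2) (t, x))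
    (hφper : ∀ t x, 0 ≤ x → φ (t + T) x = φ t x)
    (hφeq : ∀ t x, 0 ≤ x →
      -(deriv (fun s => φ s x) t) - deriv (fun y => φ t y) x
        + (d t x + lam) * φ t x = B t x * φ t 0)
    (n : ℝ → ℝ → ℝ)
    (hn0 : ∀ t x, 0 ≤ x → 0 ≤ n t x)
    (hndiff : ∀ t x, 0 ≤ x → DifferentiableAt ℝ (fun p : ℝ × ℝ => n p.1 p.2) (t, x))
    (hpde : ∀ t x, 0 ≤ x →
      deriv (fun s => n s x) t + deriv (fun y => n t y) x + d t x * n t x = 0)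
    (hbc : ∀ t, n t 0 = ∫ x in Set.Ioi (0 : ℝ), B t x * n t x)
    (hint₁ : ∀ t, IntegrableOn (fun x => n t x * φ t x) (Set.Ioi (0 : ℝ)))
    (hint₂ : ∀ t, IntegrableOn
      (fun x => deriv (fun y => n t y * φ t y) x) (Set.Ioi (0 : ℝ)))
    (hint₃ : ∀ t, IntegrableOn (fun x => B t x * n t x) (Set.Ioi (0 : ℝ)))
    (hint₄ : ∀ t, IntegrableOn (fun x => d t x * n t x * φ t x) (Set.Ioi (0 : ℝ)))
    (hlim : ∀ t, Filter.Tendsto (fun x => n t x * φ t x) Filter.atTop (nhds 0))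
    (hF : ∀ t, HasDerivAt (fun s => ∫ x in Set.Ioi (0 : ℝ), n s x * φ s x)
      (∫ x in Set.Ioi (0 : ℝ), deriv (fun s => n s x * φ s x) t) t) :
    ∀ t, (∫ x in Set.Ioi (0 : ℝ), n t x * φ t x) =
      Real.exp (lam * t) * ∫ x in Set.Ioi (0 : ℝ), n 0 x * φ 0 x := by
  set F : ℝ → ℝ := fun s => ∫ x in Set.Ioi (0 : ℝ), n s x * φ s x with hFdef
  -- differentiability of sections
  have hnx : ∀ t x, 0 ≤ x → DifferentiableAt ℝ (fun y => n t y) x := by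
    intro t x hx
    exact (hndiff t x hx).comp x ((differentiableAt_const t).prodMk differentiableAt_id)
  have hnt : ∀ t x, 0 ≤ x → DifferentiableAt ℝ (fun s => n s x) t := by
    intro t x hx
    exact (hndiff t x hx).comp (f := fun s : ℝ => (s, x)) t ((differentiableAt_fun_id (x := t)).prodMk (differentiableAt_const x))
  have hφx : ∀ t x, 0 ≤ x → DifferentiableAt ℝ (fun y => φ t y) x := by
    intro t x hx
    exact (hφdiff t x hx).comp x ((differentiableAt_const t).prodMk differentiableAt_id)
  have hφt : ∀ t x, 0 ≤ x → DifferentiableAt ℝ (fun s => φ s x) t := by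
    intro t x hx
    exact (hφdiff t x hx).comp (f := fun s : ℝ => (s, x)) t ((differentiableAt_fun_id (x := t)).prodMk (differentiableAt_const x))
  -- FTC on Ioi 0
  have hFTC : ∀ t, (∫ x in Set.Ioi (0 : ℝ), deriv (fun y => n t y * φ t y) x)
      = -(n t 0 * φ t 0) := by
    intro t
    have hcont : ContinuousWithinAt (fun y => n t y * φ t y) (Set.Ici 0) 0 :=
      (((hnx t 0 le_rfl).mul (hφx t 0 le_rfl)).continuousAt).continuousWithinAt
    have hderiv : ∀ x ∈ Set.Ioi (0 : ℝ),
        HasDerivAt (fun y => n t y * φ t y) (deriv (fun y => n t y * φ t y) x) x := by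
      intro x hx
      exact ((hnx t x hx.out.le).mul (hφx t x hx.out.le)).hasDerivAt
    have := integral_Ioi_of_hasDerivAt_of_tendsto hcont hderiv (hint₂ t) (hlim t)
    simpa using this
  -- the key derivative identity
  have key : ∀ t, HasDerivAt F (lam * F t) t := by
    intro t
    have hptwise : ∀ x ∈ Set.Ioi (0 : ℝ),
        deriv (fun s => n s x * φ s x) t
          = lam * (n t x * φ t x) - deriv (fun y => n t y * φ t y) x
            - φ t 0 * (B t x * n t x) := by
      intro x hx
      have hx0 : (0:ℝ) ≤ x := hx.out.le
      have h1 : deriv (fun s => n s x * φ s x) t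
          = deriv (fun s => n s x) t * φ t x + n t x * deriv (fun s => φ s x) t :=
        deriv_mul (hnt t x hx0) (hφt t x hx0)
      have h2 : deriv (fun y => n t y * φ t y) x
          = deriv (fun y => n t y) x * φ t x + n t x * deriv (fun y => φ t y) x :=
        deriv_mul (hnx t x hx0) (hφx t x hx0)
      have e1 := hpde t x hx0
      have e2 := hφeq t x hx0
      rw [h1, h2]
      linear_combination φ t x * e1 - n t x * e2
    have hInt : (∫ x in Set.Ioi (0 : ℝ), deriv (fun s => n s x * φ s x) t)
        = lam * F t := by
      rw [setIntegral_congr_fun measurableSet_Ioi hptwise]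
      have hiA : IntegrableOn (fun x => lam * (n t x * φ t x)) (Set.Ioi (0:ℝ)) :=
        (hint₁ t).const_mul lam
      have hiAB : IntegrableOn (fun x => lam * (n t x * φ t x)
          - deriv (fun y => n t y * φ t y) x) (Set.Ioi (0:ℝ)) := hiA.sub (hint₂ t)
      have hi2 : IntegrableOn (fun x => φ t 0 * (B t x * n t x)) (Set.Ioi (0:ℝ)) :=
        (hint₃ t).const_mul (φ t 0)
      rw [integral_sub hiAB hi2, integral_sub hiA (hint₂ t),
        integral_const_mul, integral_const_mul, hFTC t, ← hbc t]
      simp only [hFdef]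
      ring
    have := hF t
    rw [hInt] at this
    exact this
  -- solve the ODE
  intro t
  have hG : ∀ s, HasDerivAt (fun u => Real.exp (-lam * u) * F u) 0 s := by
    intro s
    have h1 : HasDerivAt (fun u => Real.exp (-lam * u))
        (Real.exp (-lam * s) * (-lam)) s := by
      simpa using ((hasDerivAt_id s).const_mul (-lam)).exp
    have h2 := h1.mul (key s)
    refine h2.congr_deriv ?_
    ring
  have hGdiff : Differentiable ℝ (fun u => Real.exp (-lam * u) * F u) :=
    fun s => (hG s).differentiableAt
  have hGderiv : ∀ s, deriv (fun u => Real.exp (-lam * u) * F u) s = 0 :=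
    fun s => (hG s).deriv
  have hconst := is_const_of_deriv_eq_zero hGdiff hGderiv t 0
  simp only [mul_zero, neg_mul, Real.exp_zero, one_mul, neg_zero] at hconst
  have : Real.exp (lam * t) * (Real.exp (-(lam * t)) * F t)
      = Real.exp (lam * t) * F 0 := by rw [hconst]
  rwa [← mul_assoc, ← Real.exp_add, add_neg_cancel, Real.exp_zero, one_mul] at this
end
end

section
/- Let T > 0, let B, d : ℝ × [0,∞) → ℝ be nonnegative and T-periodic in t, and let λ ∈ ℝ. Suppose N : ℝ × [0,∞) → ℝ is a T-periodic (in t) Floquet eigenfunction for the eigenvalue λ: N is nonnegative, differentiable in both variables, T-periodic in t, and satisfies ∂_t N(t,x) + ∂_x N(t,x) + (d(t,x) + λ) N(t,x) = 0 with N(t,0) = ∫₀^∞ B(t,x) N(t,x) dx. Let μ ∈ ℝ admit a positive T-periodic subeigenfunction φ for (B, d, μ). Assume, with n(t,x) = e^{λ t} N(t,x), for each t that x ↦ n(t,x)φ(t,x), x ↦ ∂_x(nφ)(t,x), x ↦ B(t,x)n(t,x) and x ↦ d(t,x)n(t,x)φ(t,x) are integrable on (0,∞), that n(t,x)φ(t,x)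 → 0 as x → ∞, that F(t) = ∫₀^∞ n(t,x) φ(t,x) dx is differentiable with F′(t) = ∫₀^∞ ∂_t (n φ)(t,x) dx, and that ∫₀^∞ N(0,x) φ(0,x) dx > 0. Then λ ≤ μ; in particular, when Floquet eigenelements exist, the Floquet eigenvalue is at most the infimum of the μ admitting positive subeigenfunctions. -/
open MeasureTheory Real

noncomputable section

set_option maxHeartbeats 4000000 in
/-- If `N` is a nonnegative `T`-periodic (primal) Floquet eigenfunction for the
eigenvalue `λ`, so that `n(t,x) = e^{λt} N(t,x)` solves the renewal equation,
and `μ` admits a positive `T`-periodic subeigenfunction `φ`, then (under the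
natural integrability assumptions, and provided `∫₀^∞ N(0,x) φ(0,x) dx > 0`)
one has `λ ≤ μ`. -/
theorem floquet_eigenvalue_le_subeigenvalue
    (T : ℝ) (hT : 0 < T) (B d : ℝ → ℝ → ℝ)
    (hB : ∀ t x, 0 ≤ x → 0 ≤ B t x) (hd : ∀ t x, 0 ≤ x → 0 ≤ d t x)
    (hBp : ∀ t x, 0 ≤ x → B (t + T) x = B t x)
    (hdp : ∀ t x, 0 ≤ x → d (t + T) x = d t x)
    (lam : ℝ) (N : ℝ → ℝ → ℝ)
    (hN0 : ∀ t x, 0 ≤ x → 0 ≤ N t x)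
    (hNdiff : ∀ t x, 0 ≤ x → DifferentiableAt ℝ (fun p : ℝ × ℝ => N p.1 p.2) (t, x))
    (hNper : ∀ t x, 0 ≤ x → N (t + T) x = N t x)
    (hNpde : ∀ t x, 0 ≤ x →
      deriv (fun s => N s x) t + deriv (fun y => N t y) x
        + (d t x + lam) * N t x = 0)
    (hNbc : ∀ t, N t 0 = ∫ x in Set.Ioi (0 : ℝ), B t x * N t x)
    (μ : ℝ) (φ : ℝ → ℝ → ℝ) (hφ : IsSubeig T B d μ φ)
    (n : ℝ → ℝ → ℝ) (hn : n = fun t x => Real.exp (lam * t) * N t x)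
    (hint₁ : ∀ t, IntegrableOn (fun x => n t x * φ t x) (Set.Ioi (0 : ℝ)))
    (hint₂ : ∀ t, IntegrableOn
      (fun x => deriv (fun y => n t y * φ t y) x) (Set.Ioi (0 : ℝ)))
    (hint₃ : ∀ t, IntegrableOn (fun x => B t x * n t x) (Set.Ioi (0 : ℝ)))
    (hint₄ : ∀ t, IntegrableOn (fun x => d t x * n t x * φ t x) (Set.Ioi (0 : ℝ)))
    (hlim : ∀ t, Filter.Tendsto (fun x => n t x * φ t x) Filter.atTop (nhds 0))
    (hF : ∀ t, HasDerivAt (fun s => ∫ x in Set.Ioi (0 : ℝ), n s x * φ s x)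
      (∫ x in Set.Ioi (0 : ℝ), deriv (fun s => n s x * φ s x) t) t)
    (hpos : 0 < ∫ x in Set.Ioi (0 : ℝ), N 0 x * φ 0 x) :
    lam ≤ μ := by
  obtain ⟨hφpos, hφdiff, hφper, hφineq⟩ := hφ
  set F : ℝ → ℝ := fun s => ∫ x in Set.Ioi (0 : ℝ), n s x * φ s x with hFdef
  have hnval : ∀ t x, n t x = Real.exp (lam * t) * N t x := by
    intro t x; rw [hn]
  -- partial differentiability
  have hNt : ∀ t x, 0 ≤ x → DifferentiableAt ℝ (fun s => N s x) t := by
    intro t x hx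
    have h1 : DifferentiableAt ℝ (fun s : ℝ => ((s, x) : ℝ × ℝ)) t :=
      differentiableAt_id.prodMk (differentiableAt_const x)
    have h2 := (hNdiff t x hx).comp t h1
    exact h2
  have hNx : ∀ t x, 0 ≤ x → DifferentiableAt ℝ (fun y => N t y) x := by
    intro t x hx
    have h1 : DifferentiableAt ℝ (fun y : ℝ => ((t, y) : ℝ × ℝ)) x :=
      (differentiableAt_const t).prodMk differentiableAt_id
    have h2 := (hNdiff t x hx).comp x h1
    exact h2
  have hpt : ∀ t x, 0 ≤ x → DifferentiableAt ℝ (fun s => φ s x) t := by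
    intro t x hx
    have h1 : DifferentiableAt ℝ (fun s : ℝ => ((s, x) : ℝ × ℝ)) t :=
      differentiableAt_id.prodMk (differentiableAt_const x)
    have h2 := (hφdiff t x hx).comp t h1
    exact h2
  have hpx : ∀ t x, 0 ≤ x → DifferentiableAt ℝ (fun y => φ t y) x := by
    intro t x hx
    have h1 : DifferentiableAt ℝ (fun y : ℝ => ((t, y) : ℝ × ℝ)) x :=
      (differentiableAt_const t).prodMk differentiableAt_id
    have h2 := (hφdiff t x hx).comp x h1
    exact h2
  have hexp : ∀ t : ℝ, HasDerivAt (fun s : ℝ => Real.exp (lam * s))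
      (Real.exp (lam * t) * lam) t := by
    intro t
    have h1 : HasDerivAt (fun s : ℝ => lam * s) lam t := by
      simpa using (hasDerivAt_id t).const_mul lam
    exact h1.exp
  -- derivative of n·φ in the t direction
  have hPt : ∀ t x, 0 ≤ x → HasDerivAt (fun s => n s x * φ s x)
      ((Real.exp (lam * t) * lam * N t x
          + Real.exp (lam * t) * deriv (fun s => N s x) t) * φ t x
        + Real.exp (lam * t) * N t x * deriv (fun s => φ s x) t) t := by
    intro t x hx
    have h1 := ((hexp t).mul (hNt t x hx).hasDerivAt).mul (hpt t x hx).hasDerivAt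
    have h2 : (fun s => n s x * φ s x) = fun s => Real.exp (lam * s) * N s x * φ s x := by
      funext s; rw [hnval]
    rw [h2]
    exact h1
  -- derivative of n·φ in the x direction
  have hPx : ∀ t x, 0 ≤ x → HasDerivAt (fun y => n t y * φ t y)
      (Real.exp (lam * t) * deriv (fun y => N t y) x * φ t x
        + Real.exp (lam * t) * N t x * deriv (fun y => φ t y) x) x := by
    intro t x hx
    have h1 := ((hNx t x hx).hasDerivAt.const_mul (Real.exp (lam * t))).mul
      (hpx t x hx).hasDerivAt
    have h2 : (fun y => n t y * φ t y) = fun y => Real.exp (lam * t) * N t y * φ t y := by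
      funext y; rw [hnval]
    rw [h2]
    exact h1
  -- the key pointwise inequality
  have key : ∀ t x, 0 ≤ x → deriv (fun s => n s x * φ s x) t ≤
      -(deriv (fun y => n t y * φ t y) x) + μ * (n t x * φ t x)
        - B t x * n t x * φ t 0 := by
    intro t x hx
    have hEN : (0:ℝ) ≤ Real.exp (lam * t) * N t x :=
      mul_nonneg (Real.exp_pos _).le (hN0 t x hx)
    have hmul := mul_le_mul_of_nonneg_left (hφineq t x hx) hEN
    have hpde2 : Real.exp (lam * t) * φ t x *
        (deriv (fun s => N s x) t + deriv (fun y => N t y) x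
          + (d t x + lam) * N t x) = 0 := by
      rw [hNpde t x hx]; ring
    rw [(hPt t x hx).deriv, (hPx t x hx).deriv, hnval t x]
    nlinarith [hmul, hpde2]
  -- the boundary integral
  have hbd : ∀ t, ∫ x in Set.Ioi (0:ℝ), deriv (fun y => n t y * φ t y) x
      = - (n t 0 * φ t 0) := by
    intro t
    have hcont : ContinuousWithinAt (fun y => n t y * φ t y) (Set.Ici 0) 0 := by
      have h2 : (fun y => n t y * φ t y) = fun y => Real.exp (lam * t) * N t y * φ t y := by
        funext y; rw [hnval]
      rw [h2]
      exact ((continuousAt_const.mul (hNx t 0 le_rfl).continuousAt).mul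
        (hpx t 0 le_rfl).continuousAt).continuousWithinAt
    have hderiv : ∀ x ∈ Set.Ioi (0:ℝ), HasDerivAt (fun y => n t y * φ t y)
        (deriv (fun y => n t y * φ t y) x) x := by
      intro x hx
      exact ((hPx t x (Set.mem_Ioi.mp hx).le).differentiableAt).hasDerivAt
    have h3 := integral_Ioi_of_hasDerivAt_of_tendsto hcont hderiv (hint₂ t) (hlim t)
    simpa using h3
  -- the renewal/boundary identity for n
  have hBn : ∀ t, ∫ x in Set.Ioi (0:ℝ), B t x * n t x = n t 0 := by
    intro t
    have h2 : ∀ x : ℝ, B t x * n t x = Real.exp (lam * t) * (B t x * N t x) := by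
      intro x; rw [hnval]; ring
    simp only [h2]
    rw [MeasureTheory.integral_const_mul, ← hNbc t, hnval t 0]
  -- the joint function and its clamped version
  set Pu : ℝ × ℝ → ℝ := fun p => n p.1 p.2 * φ p.1 p.2 with hPudef
  have hPdiff : ∀ (τ x : ℝ), 0 ≤ x → DifferentiableAt ℝ Pu (τ, x) := by
    intro τ x hx
    have h1 : DifferentiableAt ℝ (fun p : ℝ × ℝ => Real.exp (lam * p.1)) (τ, x) :=
      (differentiableAt_fst.const_mul lam).exp
    have h2 : DifferentiableAt ℝ (fun p : ℝ × ℝ => n p.1 p.2) (τ, x) := by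
      have h3 : (fun p : ℝ × ℝ => n p.1 p.2)
          = fun p : ℝ × ℝ => Real.exp (lam * p.1) * N p.1 p.2 := by
        funext p; rw [hnval]
      rw [h3]
      exact h1.mul (hNdiff τ x hx)
    exact h2.mul (hφdiff τ x hx)
  set Pc : ℝ × ℝ → ℝ := fun p => Pu (p.1, max p.2 0) with hPcdef
  have hPccont : Continuous Pc := by
    have hPuOn : ContinuousOn Pu {p : ℝ × ℝ | 0 ≤ p.2} := fun p hp =>
      (hPdiff p.1 p.2 hp).continuousAt.continuousWithinAt
    have hclamp : Continuous fun p : ℝ × ℝ => ((p.1, max p.2 0) : ℝ × ℝ) :=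
      continuous_fst.prodMk (continuous_snd.max continuous_const)
    exact hPuOn.comp_continuous hclamp (fun p => by simp only [Set.mem_setOf_eq]; exact le_max_right _ _)
  -- the (jointly measurable) defect function
  set σm : ℝ × ℝ → ℝ := fun p => μ * Pc p - deriv (fun s => Pc (s, p.2)) p.1
      - deriv (fun y => Pc (p.1, y)) p.2 with hσmdef
  have hmeasσ : Measurable σm := by
    have hmx : Measurable fun p : ℝ × ℝ => deriv (fun y => Pc (p.1, y)) p.2 := by
      have := measurable_deriv_with_param (𝕜 := ℝ) (f := fun (a : ℝ) (y : ℝ) => Pc (a, y))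
        (by exact hPccont)
      exact this
    have hmt : Measurable fun p : ℝ × ℝ => deriv (fun s => Pc (s, p.2)) p.1 := by
      have h1 := measurable_deriv_with_param (𝕜 := ℝ) (f := fun (b : ℝ) (s : ℝ) => Pc (s, b))
        (by exact hPccont.comp continuous_swap)
      exact h1.comp measurable_swap
    exact ((measurable_const.mul hPccont.measurable).sub hmt).sub hmx
  set ρm : ℝ × ℝ → ENNReal := fun p => ENNReal.ofReal (σm p) with hρmdef
  have hmeasρ : Measurable ρm := ENNReal.measurable_ofReal.comp hmeasσ
  -- the honest defect function
  set ρr : ℝ → ℝ → ℝ := fun τ x => μ * (n τ x * φ τ x)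
      - deriv (fun s => n s x * φ s x) τ - deriv (fun y => n τ y * φ τ y) x with hρrdef
  have hPcP : ∀ τ x, 0 ≤ x → Pc (τ, x) = n τ x * φ τ x := by
    intro τ x hx
    simp only [hPcdef, hPudef, max_eq_left hx]
  have hσρ : ∀ τ x, 0 < x → σm (τ, x) = ρr τ x := by
    intro τ x hx
    have e1 : (fun s => Pc (s, x)) = fun s => n s x * φ s x := by
      funext s; exact hPcP s x hx.le
    have e2 : deriv (fun y => Pc (τ, y)) x = deriv (fun y => n τ y * φ τ y) x := by
      apply Filter.EventuallyEq.deriv_eq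
      filter_upwards [isOpen_Ioi.mem_nhds (Set.mem_Ioi.mpr hx)] with y hy
      exact hPcP τ y (le_of_lt hy)
    simp only [hσmdef, hρrdef, e1, e2, hPcP τ x hx.le]
  have hρrB : ∀ τ x, 0 ≤ x → B τ x * n τ x * φ τ 0 ≤ ρr τ x := by
    intro τ x hx
    have := key τ x hx
    simp only [hρrdef]
    linarith
  have hρr0 : ∀ τ x, 0 ≤ x → 0 ≤ ρr τ x := by
    intro τ x hx
    refine le_trans ?_ (hρrB τ x hx)
    have hn0 : 0 ≤ n τ x := by
      rw [hnval]; exact mul_nonneg (Real.exp_pos _).le (hN0 τ x hx)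
    exact mul_nonneg (mul_nonneg (hB τ x hx) hn0) (hφpos τ 0 le_rfl).le
  have hρmr : ∀ τ x, 0 < x → ρm (τ, x) = ENNReal.ofReal (ρr τ x) := by
    intro τ x hx
    simp only [hρmdef, hσρ τ x hx]
  -- partial derivatives as components of the Fréchet derivative
  have hDsum : ∀ (τ x : ℝ), 0 ≤ x → fderiv ℝ Pu (τ, x) ((1, 1) : ℝ × ℝ)
      = deriv (fun s => n s x * φ s x) τ + deriv (fun y => n τ y * φ τ y) x := by
    intro τ x hx
    have hf : HasFDerivAt Pu (fderiv ℝ Pu (τ, x)) (τ, x) := (hPdiff τ x hx).hasFDerivAt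
    have hval1 : HasDerivAt (fun s => n s x * φ s x) (fderiv ℝ Pu (τ, x) ((1, 0) : ℝ × ℝ)) τ := by
      have hline : HasDerivAt (fun s : ℝ => ((s, x) : ℝ × ℝ)) ((1, 0) : ℝ × ℝ) τ :=
        (hasDerivAt_id τ).prodMk (hasDerivAt_const τ x)
      have hl : HasFDerivAt Pu (fderiv ℝ Pu (τ, x)) ((fun s : ℝ => ((s, x) : ℝ × ℝ)) τ) := hf
      exact HasFDerivAt.comp_hasDerivAt τ hl hline
    have hval2 : HasDerivAt (fun y => n τ y * φ τ y) (fderiv ℝ Pu (τ, x) ((0, 1) : ℝ × ℝ)) x := by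
      have hline : HasDerivAt (fun y : ℝ => ((τ, y) : ℝ × ℝ)) ((0, 1) : ℝ × ℝ) x :=
        (hasDerivAt_const x τ).prodMk (hasDerivAt_id x)
      have hl : HasFDerivAt Pu (fderiv ℝ Pu (τ, x)) ((fun y : ℝ => ((τ, y) : ℝ × ℝ)) x) := hf
      exact HasFDerivAt.comp_hasDerivAt x hl hline
    rw [hval1.deriv, hval2.deriv,
      show ((1, 1) : ℝ × ℝ) = ((1, 0) : ℝ × ℝ) + ((0, 1) : ℝ × ℝ) by norm_num,
      map_add]
  -- shifted diagonal derivative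
  have hdiagS : ∀ (τ x : ℝ), 0 ≤ x → ∀ s : ℝ, 0 ≤ s →
      HasDerivAt (fun u => n (τ + u) (x + u) * φ (τ + u) (x + u))
        (deriv (fun σ => n σ (x + s) * φ σ (x + s)) (τ + s)
          + deriv (fun y => n (τ + s) y * φ (τ + s) y) (x + s)) s := by
    intro τ x hx s hs
    have hf : HasFDerivAt Pu (fderiv ℝ Pu (τ + s, x + s)) (τ + s, x + s) :=
      (hPdiff (τ + s) (x + s) (by linarith)).hasFDerivAt
    have hγ : HasDerivAt (fun u : ℝ => ((τ + u, x + u) : ℝ × ℝ)) ((1, 1) : ℝ × ℝ) s := by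
      have h1 : HasDerivAt (fun u : ℝ => τ + u) 1 s := by
        simpa using (hasDerivAt_id s).const_add τ
      have h2 : HasDerivAt (fun u : ℝ => x + u) 1 s := by
        simpa using (hasDerivAt_id s).const_add x
      exact h1.prodMk h2
    have hl : HasFDerivAt Pu (fderiv ℝ Pu (τ + s, x + s))
        ((fun u : ℝ => ((τ + u, x + u) : ℝ × ℝ)) s) := hf
    have hcomp := HasFDerivAt.comp_hasDerivAt s hl hγ
    rw [hDsum (τ + s) (x + s) (by linarith)] at hcomp
    exact hcomp
  -- derivative of the exponentially weighted diagonal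
  have hRderiv : ∀ (τ x : ℝ), 0 ≤ x → ∀ s : ℝ, 0 ≤ s →
      HasDerivAt (fun u => Real.exp (-μ * u) * (n (τ + u) (x + u) * φ (τ + u) (x + u)))
        (-(Real.exp (-μ * s) * ρr (τ + s) (x + s))) s := by
    intro τ x hx s hs
    have hE : HasDerivAt (fun u : ℝ => Real.exp (-μ * u)) (Real.exp (-μ * s) * (-μ)) s := by
      have h1 : HasDerivAt (fun u : ℝ => -μ * u) (-μ) s := by
        simpa using (hasDerivAt_id s).const_mul (-μ)
      exact h1.exp
    have hcomb := hE.mul (hdiagS τ x hx s hs)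
    refine hcomb.congr_deriv ?_
    simp only [hρrdef]
    ring
  -- positivity of the product
  have hnφ0 : ∀ τ x, 0 ≤ x → 0 ≤ n τ x * φ τ x := by
    intro τ x hx
    have hn0 : 0 ≤ n τ x := by
      rw [hnval]; exact mul_nonneg (Real.exp_pos _).le (hN0 τ x hx)
    exact mul_nonneg hn0 (hφpos τ x hx).le
  set c₁ : ℝ := min 1 (Real.exp (-μ * T)) with hc₁def
  have hc₁pos : 0 < c₁ := lt_min one_pos (Real.exp_pos _)
  -- the key dissipation bound along diagonals
  have hdag : ∀ (τ x : ℝ), 0 ≤ x →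
      (∫⁻ s in Set.Ioo (0:ℝ) T, ENNReal.ofReal (ρr (τ + s) (x + s)))
        ≤ ENNReal.ofReal ((n τ x * φ τ x) / c₁) := by
    intro τ x hx
    set R : ℝ → ℝ := fun u => Real.exp (-μ * u) * (n (τ + u) (x + u) * φ (τ + u) (x + u))
      with hRdef
    have hRcont : ContinuousOn R (Set.Icc 0 T) := fun s hs =>
      ((hRderiv τ x hx s hs.1).continuousAt).continuousWithinAt
    have hmeasdiag : Measurable (fun s : ℝ => σm (τ + s, x + s)) :=
      hmeasσ.comp ((measurable_const.add measurable_id).prodMk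
        (measurable_const.add measurable_id))
    have haeIcc : ∀ᵐ s ∂(volume.restrict (Set.Icc (0:ℝ) T)),
        σm (τ + s, x + s) = ρr (τ + s) (x + s) := by
      have h0 : ∀ᵐ s ∂volume, s ≠ -x := by
        rw [ae_iff]
        have he : {s : ℝ | ¬s ≠ -x} = {-x} := by ext s; simp
        rw [he]
        exact measure_singleton _
      filter_upwards [ae_restrict_mem measurableSet_Icc, ae_restrict_of_ae h0] with s hs hsx
      have hxs : 0 < x + s := by
        rcases lt_or_eq_of_le (by linarith [hs.1] : (0:ℝ) ≤ x + s) with h | h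
        · exact h
        · exact absurd (by linarith : s = -x) hsx
      exact hσρ (τ + s) (x + s) hxs
    have haeIoo : ∀ᵐ s ∂(volume.restrict (Set.Ioo (0:ℝ) T)),
        σm (τ + s, x + s) = ρr (τ + s) (x + s) := by
      filter_upwards [ae_restrict_mem measurableSet_Ioo] with s hs
      exact hσρ (τ + s) (x + s) (by linarith [hs.1])
    have hvolIcc : volume (Set.Icc (0:ℝ) T) < ⊤ := by
      rw [Real.volume_Icc]; exact ENNReal.ofReal_lt_top
    have hvolIoo : volume (Set.Ioo (0:ℝ) T) < ⊤ := by
      rw [Real.volume_Ioo]; exact ENNReal.ofReal_lt_top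
    -- integrability of the truncations on Ioo
    have hχaesm : ∀ M : ℕ, AEStronglyMeasurable (fun s => min (ρr (τ + s) (x + s)) (M:ℝ))
        (volume.restrict (Set.Ioo (0:ℝ) T)) := by
      intro M
      have hm : Measurable fun s : ℝ => min (σm (τ + s, x + s)) (M:ℝ) :=
        hmeasdiag.min measurable_const
      refine hm.aestronglyMeasurable.congr ?_
      filter_upwards [haeIoo] with s hs
      simp only [hs]
    have hχintIoo : ∀ M : ℕ, IntegrableOn (fun s => min (ρr (τ + s) (x + s)) (M:ℝ))
        (Set.Ioo (0:ℝ) T) := by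
      intro M
      refine ⟨hχaesm M, HasFiniteIntegral.restrict_of_bounded (C := (M:ℝ)) hvolIoo ?_⟩
      filter_upwards [ae_restrict_mem measurableSet_Ioo] with s hs
      have h1 : 0 ≤ ρr (τ + s) (x + s) := hρr0 _ _ (by linarith [hs.1])
      rw [Real.norm_eq_abs, abs_of_nonneg (le_min h1 M.cast_nonneg)]
      exact min_le_right _ _
    -- the truncated integral inequality, via the FTC inequality
    have hmain : ∀ M : ℕ, (∫ s in Set.Ioo (0:ℝ) T, min (ρr (τ + s) (x + s)) (M:ℝ))
        ≤ (n τ x * φ τ x) / c₁ := by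
      intro M
      set ψ : ℝ → ℝ := fun s => min (Real.exp (-μ * s) * ρr (τ + s) (x + s)) (M:ℝ) with hψdef
      have haesmψ : AEStronglyMeasurable ψ (volume.restrict (Set.Icc (0:ℝ) T)) := by
        have hexpm : Measurable fun s : ℝ => Real.exp (-μ * s) :=
          Real.measurable_exp.comp (measurable_id.const_mul (-μ))
        have hm : Measurable fun s : ℝ => min (Real.exp (-μ * s) * σm (τ + s, x + s)) (M:ℝ) :=
          (hexpm.mul hmeasdiag).min measurable_const
        refine hm.aestronglyMeasurable.congr ?_
        filter_upwards [haeIcc] with s hs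
        simp only [hψdef, hs]
      have hψbd : ∀ᵐ s ∂(volume.restrict (Set.Icc (0:ℝ) T)), ‖ψ s‖ ≤ (M:ℝ) := by
        filter_upwards [ae_restrict_mem measurableSet_Icc] with s hs
        have h1 : 0 ≤ ρr (τ + s) (x + s) := hρr0 _ _ (by linarith [hs.1])
        have h2 : 0 ≤ ψ s := le_min (mul_nonneg (Real.exp_pos _).le h1) M.cast_nonneg
        rw [Real.norm_eq_abs, abs_of_nonneg h2]
        exact min_le_right _ _
      have hψint : IntegrableOn ψ (Set.Icc (0:ℝ) T) :=
        ⟨haesmψ, HasFiniteIntegral.restrict_of_bounded _ hvolIcc hψbd⟩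
      have hkey0 := intervalIntegral.sub_le_integral_of_hasDeriv_right_of_le hT.le hRcont
        (fun s hs => (hRderiv τ x hx s hs.1.le).hasDerivWithinAt)
        hψint.neg
        (fun s hs => by
          simp only [Pi.neg_apply, hψdef]
          exact neg_le_neg (min_le_left _ _))
      simp only [Pi.neg_apply] at hkey0
      rw [intervalIntegral.integral_neg] at hkey0
      have hRT : 0 ≤ R T := by
        have h3 := hnφ0 (τ + T) (x + T) (by linarith)
        exact mul_nonneg (Real.exp_pos _).le h3
      have hR0 : R 0 = n τ x * φ τ x := by
        simp only [hRdef]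
        norm_num
      have hψle : (∫ y in (0:ℝ)..T, ψ y) ≤ n τ x * φ τ x := by
        rw [hR0] at hkey0
        linarith
      -- lower bound by the plain truncation
      have hχicc : IntegrableOn (fun s => min (ρr (τ + s) (x + s)) (M:ℝ))
          (Set.Icc (0:ℝ) T) := by
        refine ⟨?_, HasFiniteIntegral.restrict_of_bounded (C := (M:ℝ)) hvolIcc ?_⟩
        · have hm : Measurable fun s : ℝ => min (σm (τ + s, x + s)) (M:ℝ) :=
            hmeasdiag.min measurable_const
          refine hm.aestronglyMeasurable.congr ?_
          filter_upwards [haeIcc] with s hs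
          simp only [hs]
        · filter_upwards [ae_restrict_mem measurableSet_Icc] with s hs
          have h1 : 0 ≤ ρr (τ + s) (x + s) := hρr0 _ _ (by linarith [hs.1])
          rw [Real.norm_eq_abs, abs_of_nonneg (le_min h1 M.cast_nonneg)]
          exact min_le_right _ _
      have hlow : ∀ s ∈ Set.Icc (0:ℝ) T,
          c₁ * min (ρr (τ + s) (x + s)) (M:ℝ) ≤ ψ s := by
        intro s hs
        have hρ0' : 0 ≤ ρr (τ + s) (x + s) := hρr0 _ _ (by linarith [hs.1])
        have hE : c₁ ≤ Real.exp (-μ * s) := by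
          rcases le_total 0 μ with hμ | hμ
          · refine le_trans (min_le_right _ _) (Real.exp_le_exp.mpr ?_)
            nlinarith [hs.2, hs.1]
          · refine le_trans (min_le_left _ _) ?_
            rw [show (1:ℝ) = Real.exp 0 by rw [Real.exp_zero]]
            exact Real.exp_le_exp.mpr (by nlinarith [hs.1])
        have hc₁le : c₁ ≤ 1 := min_le_left _ _
        simp only [hψdef]
        rcases le_total (ρr (τ + s) (x + s)) (M:ℝ) with h | h
        · rw [min_eq_left h]
          refine le_min ?_ ?_
          · nlinarith
          · nlinarith [(by positivity : (0:ℝ) ≤ (M:ℝ))]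
        · rw [min_eq_right h]
          refine le_min ?_ ?_
          · nlinarith
          · nlinarith [(by positivity : (0:ℝ) ≤ (M:ℝ))]
      have hii : IntervalIntegrable (fun s => c₁ * min (ρr (τ + s) (x + s)) (M:ℝ))
          volume 0 T := by
        rw [intervalIntegrable_iff_integrableOn_Ioc_of_le hT.le]
        exact (hχicc.mono_set Set.Ioc_subset_Icc_self).const_mul c₁
      have hiiψ : IntervalIntegrable ψ volume 0 T := by
        rw [intervalIntegrable_iff_integrableOn_Ioc_of_le hT.le]
        exact hψint.mono_set Set.Ioc_subset_Icc_self
      have hmono := intervalIntegral.integral_mono_on hT.le hii hiiψ hlow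
      rw [intervalIntegral.integral_const_mul] at hmono
      have hfin : (∫ y in (0:ℝ)..T, min (ρr (τ + y) (x + y)) (M:ℝ)) ≤ (n τ x * φ τ x) / c₁ := by
        rw [le_div_iff₀ hc₁pos, mul_comm]
        linarith
      calc (∫ s in Set.Ioo (0:ℝ) T, min (ρr (τ + s) (x + s)) (M:ℝ))
          = ∫ s in Set.Ioc (0:ℝ) T, min (ρr (τ + s) (x + s)) (M:ℝ) :=
            (MeasureTheory.integral_Ioc_eq_integral_Ioo).symm
        _ = ∫ y in (0:ℝ)..T, min (ρr (τ + y) (x + y)) (M:ℝ) :=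
            (intervalIntegral.integral_of_le hT.le).symm
        _ ≤ (n τ x * φ τ x) / c₁ := hfin
    -- pass to the lintegral and let M → ∞
    have h1 : ∀ M : ℕ, (∫⁻ s in Set.Ioo (0:ℝ) T,
        ENNReal.ofReal (min (ρr (τ + s) (x + s)) (M:ℝ)))
          ≤ ENNReal.ofReal ((n τ x * φ τ x) / c₁) := by
      intro M
      rw [← MeasureTheory.ofReal_integral_eq_lintegral_ofReal (hχintIoo M) ?_]
      · exact ENNReal.ofReal_le_ofReal (hmain M)
      · filter_upwards [ae_restrict_mem measurableSet_Ioo] with s hs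
        exact le_min (hρr0 _ _ (by linarith [hs.1])) M.cast_nonneg
    have h2 : (∫⁻ s in Set.Ioo (0:ℝ) T, ENNReal.ofReal (ρr (τ + s) (x + s)))
        = ⨆ M : ℕ, ∫⁻ s in Set.Ioo (0:ℝ) T,
            ENNReal.ofReal (min (ρr (τ + s) (x + s)) (M:ℝ)) := by
      rw [← MeasureTheory.lintegral_iSup']
      · apply lintegral_congr_ae
        filter_upwards [ae_restrict_mem measurableSet_Ioo] with s hs
        apply le_antisymm
        · obtain ⟨M, hM⟩ := exists_nat_ge (ρr (τ + s) (x + s))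
          refine le_trans (le_of_eq ?_) (le_iSup (fun M : ℕ => ENNReal.ofReal
            (min (ρr (τ + s) (x + s)) (M:ℝ))) M)
          rw [min_eq_left hM]
        · exact iSup_le fun M => ENNReal.ofReal_le_ofReal (min_le_left _ _)
      · intro M
        have hm : Measurable fun s : ℝ => ENNReal.ofReal (min (σm (τ + s, x + s)) (M:ℝ)) :=
          ENNReal.measurable_ofReal.comp (hmeasdiag.min measurable_const)
        refine hm.aemeasurable.congr ?_
        filter_upwards [haeIoo] with s hs
        simp only [hs]
      · filter_upwards [] with s
        intro i j hij
        exact ENNReal.ofReal_le_ofReal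
          (min_le_min le_rfl (by exact_mod_cast Nat.cast_le.mpr hij))
    rw [h2]
    exact iSup_le h1
  -- slicewise defect lintegral
  set Ξ : ℝ → ENNReal := fun s => ∫⁻ y in Set.Ioi (0:ℝ), ρm (s, y) with hΞdef
  have hmeasΞ : Measurable Ξ := by
    have h := Measurable.lintegral_prod_right'
      (ν := volume.restrict (Set.Ioi (0:ℝ))) (f := ρm) hmeasρ
    exact h
  set Tl : ℝ → ENNReal := fun s => ∫⁻ u in Set.Ioi (0:ℝ), ρm (s, u + s) with hTldef
  have hmeasTl : Measurable Tl := by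
    have hm : Measurable fun p : ℝ × ℝ => ρm (p.1, p.2 + p.1) :=
      hmeasρ.comp (measurable_fst.prodMk (measurable_snd.add measurable_fst))
    exact Measurable.lintegral_prod_right' (ν := volume.restrict (Set.Ioi (0:ℝ))) hm
  have hTl_eq : ∀ s : ℝ, Tl s = ∫⁻ y in Set.Ioi s, ρm (s, y) := by
    intro s
    have mp : MeasurePreserving (fun u : ℝ => u + s) volume volume :=
      measurePreserving_add_right volume s
    have emb : MeasurableEmbedding (fun u : ℝ => u + s) :=
      (MeasurableEquiv.addRight s).measurableEmbedding
    have h := mp.setLIntegral_comp_emb emb (fun y => ρm (s, y)) (Set.Ioi 0)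
    simp only [hTldef]
    rw [h, Set.image_add_const_Ioi, zero_add]
  set W : ℝ × ℝ → ENNReal := fun p => if p.2 ≤ p.1 then ρm p else 0 with hWdef
  have hmeasW : Measurable W :=
    Measurable.ite (measurableSet_le measurable_snd measurable_fst) hmeasρ measurable_const
  set Hd : ℝ → ENNReal := fun s => ∫⁻ y in Set.Ioi (0:ℝ), W (s, y) with hHddef
  have hmeasHd : Measurable Hd :=
    Measurable.lintegral_prod_right' (ν := volume.restrict (Set.Ioi (0:ℝ))) (f := W) hmeasW
  have hHd_eq : ∀ s : ℝ, Hd s = ∫⁻ y in Set.Ioc (0:ℝ) s, ρm (s, y) := by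
    intro s
    have hW : (fun y => W (s, y)) = (Set.Iic s).indicator (fun y => ρm (s, y)) := by
      funext y
      simp only [hWdef, Set.indicator, Set.mem_Iic]
    simp only [hHddef]
    rw [show (fun y => W (s, y)) = (Set.Iic s).indicator (fun y => ρm (s, y)) from hW]
    rw [MeasureTheory.lintegral_indicator measurableSet_Iic,
      Measure.restrict_restrict measurableSet_Iic, Set.Iic_inter_Ioi]
  have hΞ_split : ∀ s, 0 < s → Ξ s = Hd s + Tl s := by
    intro s hs
    rw [hHd_eq s, hTl_eq s]
    rw [← MeasureTheory.lintegral_union measurableSet_Ioi (Set.Ioc_disjoint_Ioi le_rfl)]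
    simp only [hΞdef]
    rw [Set.Ioc_union_Ioi_eq_Ioi hs.le]
  -- the tail is finite
  have htail : (∫⁻ s in Set.Ioo (0:ℝ) T, Tl s) ≠ ⊤ := by
    have hm2 : AEMeasurable (Function.uncurry fun s u => ρm (s, u + s))
        ((volume.restrict (Set.Ioo (0:ℝ) T)).prod (volume.restrict (Set.Ioi (0:ℝ)))) := by
      apply Measurable.aemeasurable
      exact hmeasρ.comp (measurable_fst.prodMk (measurable_snd.add measurable_fst))
    have hswap : (∫⁻ s in Set.Ioo (0:ℝ) T, Tl s)
        = ∫⁻ u in Set.Ioi (0:ℝ), ∫⁻ s in Set.Ioo (0:ℝ) T, ρm (s, u + s) :=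
      MeasureTheory.lintegral_lintegral_swap hm2
    rw [hswap]
    have hb : (∫⁻ u in Set.Ioi (0:ℝ), ∫⁻ s in Set.Ioo (0:ℝ) T, ρm (s, u + s))
        ≤ ∫⁻ u in Set.Ioi (0:ℝ), ENNReal.ofReal ((n 0 u * φ 0 u) / c₁) := by
      apply lintegral_mono_ae
      filter_upwards [ae_restrict_mem measurableSet_Ioi] with u hu
      have h1 : ∀ s ∈ Set.Ioo (0:ℝ) T, ρm (s, u + s) = ENNReal.ofReal (ρr (0 + s) (u + s)) := by
        intro s hs
        rw [hρmr s (u + s) (by nlinarith [hs.1, Set.mem_Ioi.mp hu]), zero_add]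
      rw [MeasureTheory.setLIntegral_congr_fun measurableSet_Ioo h1]
      exact hdag 0 u (Set.mem_Ioi.mp hu).le
    refine ne_top_of_le_ne_top ?_ hb
    rw [← MeasureTheory.ofReal_integral_eq_lintegral_ofReal ((hint₁ 0).div_const c₁) ?_]
    · exact ENNReal.ofReal_ne_top
    · filter_upwards [ae_restrict_mem measurableSet_Ioi] with u hu
      exact div_nonneg (hnφ0 0 u (Set.mem_Ioi.mp hu).le) hc₁pos.le
  -- the head is finite
  have hqcont : Continuous fun b : ℝ => n b 0 * φ b 0 := by
    rw [continuous_iff_continuousAt]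
    intro b
    exact (hPt b 0 le_rfl).continuousAt
  have hhead : (∫⁻ s in Set.Ioo (0:ℝ) T, Hd s) ≠ ⊤ := by
    have hm2 : AEMeasurable (Function.uncurry fun s y => W (s, y))
        ((volume.restrict (Set.Ioo (0:ℝ) T)).prod (volume.restrict (Set.Ioi (0:ℝ)))) := by
      apply Measurable.aemeasurable
      exact hmeasW
    have hswap : (∫⁻ s in Set.Ioo (0:ℝ) T, Hd s)
        = ∫⁻ y in Set.Ioi (0:ℝ), ∫⁻ s in Set.Ioo (0:ℝ) T, W (s, y) :=
      MeasureTheory.lintegral_lintegral_swap hm2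
    rw [hswap]
    set J : ℝ → ENNReal := fun y => ∫⁻ b in Set.Ico (0:ℝ) T, ρm (b + y, y) with hJdef
    have hstep : (∫⁻ y in Set.Ioi (0:ℝ), ∫⁻ s in Set.Ioo (0:ℝ) T, W (s, y))
        ≤ ∫⁻ y in Set.Ioi (0:ℝ), (Set.Ioo (0:ℝ) T).indicator J y := by
      apply lintegral_mono_ae
      filter_upwards [ae_restrict_mem measurableSet_Ioi] with y hy
      rcases lt_or_ge y T with hyT | hyT
      · have hmem : y ∈ Set.Ioo (0:ℝ) T := ⟨Set.mem_Ioi.mp hy, hyT⟩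
        rw [Set.indicator_of_mem hmem]
        have h1 : ∀ s, W (s, y) ≤ (Set.Ici y).indicator (fun s => ρm (s, y)) s := by
          intro s
          simp only [hWdef, Set.indicator, Set.mem_Ici]
          split_ifs with h1
          · exact le_rfl
          · exact le_rfl
        calc (∫⁻ s in Set.Ioo (0:ℝ) T, W (s, y))
            ≤ ∫⁻ s in Set.Ioo (0:ℝ) T, (Set.Ici y).indicator (fun s => ρm (s, y)) s :=
              lintegral_mono fun s => h1 s
          _ = ∫⁻ s in Set.Ici y ∩ Set.Ioo (0:ℝ) T, ρm (s, y) := by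
              rw [MeasureTheory.lintegral_indicator measurableSet_Ici,
                Measure.restrict_restrict measurableSet_Ici]
          _ ≤ ∫⁻ s in Set.Ico y T, ρm (s, y) := by
              apply lintegral_mono_set
              rintro s ⟨h2, h3⟩
              exact ⟨h2, h3.2⟩
          _ = ∫⁻ b in Set.Ico (0:ℝ) (T - y), ρm (b + y, y) := by
              have mp : MeasurePreserving (fun u : ℝ => u + y) volume volume :=
                measurePreserving_add_right volume y
              have emb : MeasurableEmbedding (fun u : ℝ => u + y) :=
                (MeasurableEquiv.addRight y).measurableEmbedding
              have h := mp.setLIntegral_comp_emb emb (fun s => ρm (s, y)) (Set.Ico 0 (T - y))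
              rw [h, Set.image_add_const_Ico]
              norm_num
          _ ≤ J y := by
              apply lintegral_mono_set
              intro b hb
              exact ⟨hb.1, by linarith [hb.2, Set.mem_Ioi.mp hy]⟩
      · rw [Set.indicator_of_notMem (by simp [Set.mem_Ioo]; intro h; linarith)]
        have h0 : ∀ s ∈ Set.Ioo (0:ℝ) T, W (s, y) = 0 := by
          intro s hs
          simp only [hWdef]
          rw [if_neg (by linarith [hs.2])]
        rw [MeasureTheory.setLIntegral_congr_fun measurableSet_Ioo h0]
        simp
    refine ne_top_of_le_ne_top ?_ hstep
    rw [MeasureTheory.lintegral_indicator measurableSet_Ioo,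
      Measure.restrict_restrict measurableSet_Ioo]
    have hsub : Set.Ioo (0:ℝ) T ∩ Set.Ioi 0 = Set.Ioo (0:ℝ) T := by
      ext z; simp only [Set.mem_inter_iff, Set.mem_Ioo, Set.mem_Ioi]; tauto
    rw [hsub]
    have hm3 : AEMeasurable (Function.uncurry fun y b => ρm (b + y, y))
        ((volume.restrict (Set.Ioo (0:ℝ) T)).prod (volume.restrict (Set.Ico (0:ℝ) T))) := by
      apply Measurable.aemeasurable
      exact hmeasρ.comp ((measurable_snd.add measurable_fst).prodMk measurable_fst)
    have hswap2 : (∫⁻ y in Set.Ioo (0:ℝ) T, J y)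
        = ∫⁻ b in Set.Ico (0:ℝ) T, ∫⁻ y in Set.Ioo (0:ℝ) T, ρm (b + y, y) :=
      MeasureTheory.lintegral_lintegral_swap hm3
    rw [hswap2]
    have hb2 : (∫⁻ b in Set.Ico (0:ℝ) T, ∫⁻ y in Set.Ioo (0:ℝ) T, ρm (b + y, y))
        ≤ ∫⁻ b in Set.Ico (0:ℝ) T, ENNReal.ofReal ((n b 0 * φ b 0) / c₁) := by
      apply lintegral_mono_ae
      filter_upwards [ae_restrict_mem measurableSet_Ico] with b hb
      have h1 : ∀ y ∈ Set.Ioo (0:ℝ) T, ρm (b + y, y) = ENNReal.ofReal (ρr (b + y) (0 + y)) := by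
        intro y hy
        rw [hρmr (b + y) y hy.1, zero_add]
      rw [MeasureTheory.setLIntegral_congr_fun measurableSet_Ioo h1]
      exact hdag b 0 le_rfl
    refine ne_top_of_le_ne_top ?_ hb2
    have hqint : IntegrableOn (fun b => (n b 0 * φ b 0) / c₁) (Set.Ico (0:ℝ) T) :=
      ((hqcont.div_const c₁).integrableOn_Icc).mono_set Set.Ico_subset_Icc_self
    rw [← MeasureTheory.ofReal_integral_eq_lintegral_ofReal hqint ?_]
    · exact ENNReal.ofReal_ne_top
    · filter_upwards [ae_restrict_mem measurableSet_Ico] with b hb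
      exact div_nonneg (hnφ0 b 0 le_rfl) hc₁pos.le
  -- the defect is a.e. finite on a period
  have hΞfin : ∀ᵐ s ∂(volume.restrict (Set.Ioo (0:ℝ) T)), Ξ s < ⊤ := by
    apply ae_lt_top hmeasΞ
    have hsplit2 : (∫⁻ s in Set.Ioo (0:ℝ) T, Ξ s)
        = ∫⁻ s in Set.Ioo (0:ℝ) T, (Hd s + Tl s) := by
      apply MeasureTheory.setLIntegral_congr_fun measurableSet_Ioo
      exact fun s hs => hΞ_split s hs.1
    rw [hsplit2, MeasureTheory.lintegral_add_left hmeasHd]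
    exact ENNReal.add_ne_top.mpr ⟨hhead, htail⟩
  -- F is nonnegative
  have hFpos : ∀ t, 0 ≤ F t := by
    intro t
    apply setIntegral_nonneg measurableSet_Ioi
    intro x hx
    have hx' := (Set.mem_Ioi.mp hx).le
    have hn0 : 0 ≤ n t x := by
      rw [hnval]; exact mul_nonneg (Real.exp_pos _).le (hN0 t x hx')
    exact mul_nonneg hn0 (hφpos t x hx').le
  -- the almost-everywhere differential inequality
  set q : ℝ → ℝ := fun s => n s 0 * φ s 0 with hqdef
  set Lf : ℝ → ℝ := fun s => μ * F s + q s - (Ξ s).toReal with hLfdef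
  have hae_main : ∀ᵐ s ∂(volume.restrict (Set.Ioo (0:ℝ) T)),
      deriv F s = Lf s ∧ deriv F s ≤ μ * F s := by
    filter_upwards [hΞfin, ae_restrict_mem measurableSet_Ioo] with s hΞs hs
    have hsecm : AEStronglyMeasurable (fun y => ρr s y) (volume.restrict (Set.Ioi (0:ℝ))) := by
      have hm : Measurable fun y => σm (s, y) :=
        hmeasσ.comp (measurable_const.prodMk measurable_id)
      refine hm.aestronglyMeasurable.congr ?_
      filter_upwards [ae_restrict_mem measurableSet_Ioi] with y hy
      exact hσρ s y (Set.mem_Ioi.mp hy)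
    have hfin2 : (∫⁻ y in Set.Ioi (0:ℝ), ENNReal.ofReal (ρr s y)) < ⊤ := by
      refine lt_of_eq_of_lt ?_ hΞs
      apply lintegral_congr_ae
      filter_upwards [ae_restrict_mem measurableSet_Ioi] with y hy
      rw [← hρmr s y (Set.mem_Ioi.mp hy)]
    have hρsint : IntegrableOn (fun y => ρr s y) (Set.Ioi (0:ℝ)) := by
      refine ⟨hsecm, ?_⟩
      rw [hasFiniteIntegral_iff_ofReal ?_]
      · exact hfin2
      · filter_upwards [ae_restrict_mem measurableSet_Ioi] with y hy
        exact hρr0 s y (Set.mem_Ioi.mp hy).le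
    have hgid : (fun y => deriv (fun σ => n σ y * φ σ y) s)
        = fun y => μ * (n s y * φ s y)
          - deriv (fun z => n s z * φ s z) y - ρr s y := by
      funext y
      simp only [hρrdef]
      ring
    have hi1 : IntegrableOn (fun y => μ * (n s y * φ s y)) (Set.Ioi (0:ℝ)) :=
      (hint₁ s).const_mul μ
    have hi2 : IntegrableOn (fun y => deriv (fun z => n s z * φ s z) y) (Set.Ioi (0:ℝ)) :=
      hint₂ s
    have hi12 : IntegrableOn (fun y => μ * (n s y * φ s y)
        - deriv (fun z => n s z * φ s z) y) (Set.Ioi (0:ℝ)) := hi1.sub hi2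
    have hval : deriv F s = μ * F s + q s - ∫ y in Set.Ioi (0:ℝ), ρr s y := by
      rw [(hF s).deriv, hgid]
      rw [integral_sub hi12 hρsint, integral_sub hi1 hi2,
        MeasureTheory.integral_const_mul, hbd s]
      simp only [hFdef, hqdef]
      ring
    have hXi : (∫ y in Set.Ioi (0:ℝ), ρr s y) = (Ξ s).toReal := by
      rw [MeasureTheory.integral_eq_lintegral_of_nonneg_ae ?_ hsecm]
      · congr 1
        apply lintegral_congr_ae
        filter_upwards [ae_restrict_mem measurableSet_Ioi] with y hy
        rw [← hρmr s y (Set.mem_Ioi.mp hy)]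
      · filter_upwards [ae_restrict_mem measurableSet_Ioi] with y hy
        exact hρr0 s y (Set.mem_Ioi.mp hy).le
    have hqle : q s ≤ ∫ y in Set.Ioi (0:ℝ), ρr s y := by
      have hmono := setIntegral_mono_on ((hint₃ s).mul_const (φ s 0)) hρsint measurableSet_Ioi
        (fun y hy => hρrB s y (Set.mem_Ioi.mp hy).le)
      rw [MeasureTheory.integral_mul_const, hBn s] at hmono
      simpa [hqdef] using hmono
    refine ⟨?_, ?_⟩
    · rw [hval, hXi]
    · rw [hval]
      linarith
  -- interval integrability of the derivative of `F`
  have hFdiff : Differentiable ℝ F := fun t => (hF t).differentiableAt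
  have hFcont : Continuous F := hFdiff.continuous
  have hXim : Measurable fun s => (Ξ s).toReal := hmeasΞ.ennreal_toReal
  have hXiint : IntegrableOn (fun s => (Ξ s).toReal) (Set.Ioo (0:ℝ) T) := by
    refine ⟨hXim.aestronglyMeasurable, ?_⟩
    rw [hasFiniteIntegral_iff_ofReal (ae_of_all _ fun s => ENNReal.toReal_nonneg)]
    calc (∫⁻ s in Set.Ioo (0:ℝ) T, ENNReal.ofReal (Ξ s).toReal)
        ≤ ∫⁻ s in Set.Ioo (0:ℝ) T, Ξ s := lintegral_mono fun s => ENNReal.ofReal_toReal_le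
      _ < ⊤ := by
          have hsplit2 : (∫⁻ s in Set.Ioo (0:ℝ) T, Ξ s)
              = ∫⁻ s in Set.Ioo (0:ℝ) T, (Hd s + Tl s) := by
            apply MeasureTheory.setLIntegral_congr_fun measurableSet_Ioo
            exact fun s hs => hΞ_split s hs.1
          rw [hsplit2, MeasureTheory.lintegral_add_left hmeasHd]
          exact lt_top_iff_ne_top.mpr (ENNReal.add_ne_top.mpr ⟨hhead, htail⟩)
  have hLfint : IntegrableOn Lf (Set.Ioo (0:ℝ) T) := by
    have h1 : IntegrableOn (fun s => μ * F s + q s) (Set.Ioo (0:ℝ) T) :=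
      ((((continuous_const.mul hFcont)).add hqcont).integrableOn_Icc).mono_set Set.Ioo_subset_Icc_self
    exact h1.sub hXiint
  have hderivFint : IntegrableOn (fun s => deriv F s) (Set.Ioo (0:ℝ) T) := by
    refine hLfint.congr ?_
    filter_upwards [hae_main] with s hsp
    exact hsp.1.symm
  -- Gronwall via the fundamental theorem of calculus
  have hGd : ∀ t, HasDerivAt (fun s => Real.exp (-μ * s) * F s)
      (Real.exp (-μ * t) * (deriv F t - μ * F t)) t := by
    intro t
    have h1 : HasDerivAt (fun s : ℝ => -μ * s) (-μ) t := by
      simpa using (hasDerivAt_id t).const_mul (-μ)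
    have h3 : HasDerivAt F (deriv F t) t := (hFdiff t).hasDerivAt
    have h4 := (h1.exp).mul h3
    refine h4.congr_deriv ?_
    ring
  have hG'int : IntervalIntegrable (fun τ => Real.exp (-μ * τ) * (deriv F τ - μ * F τ))
      volume 0 T := by
    rw [intervalIntegrable_iff_integrableOn_Ioc_of_le hT.le]
    rw [integrableOn_Ioc_iff_integrableOn_Ioo]
    have hfac : IntegrableOn (fun τ => deriv F τ - μ * F τ) (Set.Ioo (0:ℝ) T) :=
      hderivFint.sub ((((continuous_const.mul hFcont)).integrableOn_Icc).mono_set Set.Ioo_subset_Icc_self)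
    refine MeasureTheory.Integrable.bdd_mul (c := Real.exp (|μ| * T)) hfac ?_ ?_
    · exact ((Real.continuous_exp.comp (continuous_const.mul continuous_id)).aestronglyMeasurable)
    · filter_upwards [ae_restrict_mem measurableSet_Ioo] with τ hτ
      rw [Real.norm_eq_abs, abs_of_pos (Real.exp_pos _)]
      apply Real.exp_le_exp.mpr
      have h1 : -μ ≤ |μ| := neg_le_abs μ
      nlinarith [hτ.1, hτ.2, abs_nonneg μ]
  have hFTC := intervalIntegral.integral_eq_sub_of_hasDerivAt
    (f := fun τ => Real.exp (-μ * τ) * F τ)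
    (f' := fun τ => Real.exp (-μ * τ) * (deriv F τ - μ * F τ))
    (fun τ _ => hGd τ) hG'int
  have hneg : (∫ τ in (0:ℝ)..T, Real.exp (-μ * τ) * (deriv F τ - μ * F τ)) ≤ 0 := by
    rw [intervalIntegral.integral_of_le hT.le, MeasureTheory.integral_Ioc_eq_integral_Ioo]
    apply MeasureTheory.integral_nonpos_of_ae
    filter_upwards [hae_main] with s hsp
    have h1 : deriv F s - μ * F s ≤ 0 := by linarith [hsp.2]
    exact mul_nonpos_of_nonneg_of_nonpos (Real.exp_pos _).le h1
  have hGT : Real.exp (-μ * T) * F T ≤ Real.exp (-μ * 0) * F 0 := by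
    have h2 : Real.exp (-μ * T) * F T - Real.exp (-μ * 0) * F 0 ≤ 0 := by
      rw [← hFTC]
      exact hneg
    linarith
  -- periodicity of the eigen-pair
  have hF0 : F 0 = ∫ x in Set.Ioi (0:ℝ), N 0 x * φ 0 x := by
    simp only [hFdef]
    apply setIntegral_congr_fun measurableSet_Ioi
    intro x hx
    simp [hnval]
  have hF0pos : 0 < F 0 := by rw [hF0]; exact hpos
  have hFT : F T = Real.exp (lam * T) * F 0 := by
    have h1 : Set.EqOn (fun x => n T x * φ T x)
        (fun x => Real.exp (lam * T) * (n 0 x * φ 0 x)) (Set.Ioi (0:ℝ)) := by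
      intro x hx
      have hx' := (Set.mem_Ioi.mp hx).le
      have hN := hNper 0 x hx'
      have hp := hφper 0 x hx'
      rw [zero_add] at hN hp
      simp only [hnval T x, hnval 0 x, hN, hp, mul_zero, Real.exp_zero]
      ring
    calc F T = ∫ x in Set.Ioi (0:ℝ), Real.exp (lam * T) * (n 0 x * φ 0 x) := by
          simp only [hFdef]
          exact setIntegral_congr_fun measurableSet_Ioi h1
      _ = Real.exp (lam * T) * F 0 := by
          rw [MeasureTheory.integral_const_mul]
  -- conclude
  rw [hFT] at hGT
  have harg : -μ * T + lam * T = (lam - μ) * T := by ring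
  rw [← mul_assoc, ← Real.exp_add, harg] at hGT
  have h5 : Real.exp ((lam - μ) * T) * F 0 ≤ F 0 := by
    simpa using hGT
  have h6 : Real.exp ((lam - μ) * T) ≤ 1 := by
    nlinarith [hF0pos]
  have h7 : (lam - μ) * T ≤ 0 := Real.exp_le_one_iff.mp h6
  by_contra hc
  push_neg at hc
  nlinarith [mul_pos (by linarith : (0:ℝ) < lam - μ) hT]

end
end
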